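/- arXiv:1602.08694 — 7 statements merged into one kernel-verified Lean document; each statement's English description precedes it below -/
import Mathlib

section
/- For any κ ∈ ℂ, set D = ∂² + z³ + κ in the Weyl algebra ℂ[z][∂], and define P = D² + 2z and Q = D³ + (3/2)(zD + Dz). Then P and Q commute: PQ = QP. -/
lemma dix_key {A : Type*} [Ring A] (z d D : A)
    (hDz : D * z = z * D + 2 * d) (hDd : D * d = d * D - 3 * (z * z)) :
    (D ^ 2 + 2 * z) * (2 * D ^ 3 + 3 * (z * D + D * z)) =
      (2 * D ^ 3 + 3 * (z * D + D * z)) * (D ^ 2 + 2 * z) := by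
  have h1 : ∀ x : A, D * (z * x) = z * (D * x) + 2 * (d * x) := fun x => by
    rw [← mul_assoc, hDz]; noncomm_ring
  have h2 : ∀ x : A, D * (d * x) = d * (D * x) - 3 * (z * (z * x)) := fun x => by
    rw [← mul_assoc, hDd]; noncomm_ring
  have cz2 : ∀ y : A, z * (2 * y) = 2 * (z * y) := fun y => by noncomm_ring
  have cz3 : ∀ y : A, z * (3 * y) = 3 * (z * y) := fun y => by noncomm_ring
  have cd2 : ∀ y : A, d * (2 * y) = 2 * (d * y) := fun y => by noncomm_ring
  have cd3 : ∀ y : A, d * (3 * y) = 3 * (d * y) := fun y => by noncomm_ring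
  have cD2 : ∀ y : A, D * (2 * y) = 2 * (D * y) := fun y => by noncomm_ring
  have cD3 : ∀ y : A, D * (3 * y) = 3 * (D * y) := fun y => by noncomm_ring
  simp only [pow_succ, pow_zero, one_mul, mul_add, add_mul, mul_sub, sub_mul, mul_assoc,
    cz2, cz3, cd2, cd3, cD2, cD3, h1, h2, hDz, hDd]
  noncomm_ring

/-- Dixmier's example: in any ℂ-algebra with elements `z`, `d` satisfying the
Weyl relation `d*z - z*d = 1` (in particular in the Weyl algebra ℂ[z][∂]),
the operators `P = D² + 2z` and `Q = D³ + (3/2)(zD + Dz)` with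
`D = d² + z³ + κ` commute. -/
theorem dixmier_commute (κ : ℂ) (A : Type*) [Ring A] [Algebra ℂ A]
    (z d : A) (h : d * z - z * d = 1) :
    let D : A := d ^ 2 + z ^ 3 + algebraMap ℂ A κ
    let P : A := D ^ 2 + 2 * z
    let Q : A := D ^ 3 + algebraMap ℂ A (3 / 2) * (z * D + D * z)
    P * Q = Q * P := by
  intro D P Q
  have hdz : d * z = z * d + 1 := by rw [← h]; noncomm_ring
  have hdz' : ∀ x : A, d * (z * x) = z * (d * x) + x := fun x => by
    rw [← mul_assoc, hdz]; noncomm_ring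
  have hk : ∀ (r : ℂ) (x : A), algebraMap ℂ A r * x = x * algebraMap ℂ A r :=
    fun r x => Algebra.commutes r x
  have hDz : D * z = z * D + 2 * d := by
    show (d ^ 2 + z ^ 3 + algebraMap ℂ A κ) * z
        = z * (d ^ 2 + z ^ 3 + algebraMap ℂ A κ) + 2 * d
    simp only [add_mul, mul_add, pow_succ, pow_zero, one_mul, mul_assoc, hdz', hdz, hk]
    noncomm_ring
  have hDd : D * d = d * D - 3 * (z * z) := by
    show (d ^ 2 + z ^ 3 + algebraMap ℂ A κ) * d
        = d * (d ^ 2 + z ^ 3 + algebraMap ℂ A κ) - 3 * (z * z)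
    simp only [add_mul, mul_add, pow_succ, pow_zero, one_mul, mul_assoc, hdz', hdz, hk]
    noncomm_ring
  have e2 : algebraMap ℂ A (1 / 2) * 2 = 1 := by
    rw [show (2 : A) = algebraMap ℂ A 2 from (map_ofNat _ 2).symm, ← map_mul]
    norm_num
  have e3 : algebraMap ℂ A (1 / 2) * 3 = algebraMap ℂ A (3 / 2) := by
    rw [show (3 : A) = algebraMap ℂ A 3 from (map_ofNat _ 3).symm, ← map_mul]
    norm_num
  have hQ : Q = algebraMap ℂ A (1 / 2) * (2 * D ^ 3 + 3 * (z * D + D * z)) := by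
    show D ^ 3 + algebraMap ℂ A (3 / 2) * (z * D + D * z) = _
    conv_rhs => rw [mul_add, ← mul_assoc, ← mul_assoc, e2, e3, one_mul]
  rw [hQ, ← mul_assoc, ← hk (1/2) P, mul_assoc, mul_assoc]
  congr 1
  exact dix_key z d D hDz hDd
end

section
/- Let P = aₙ∂ⁿ + aₙ₋₁∂ⁿ⁻¹ + ⋯ + a₀ ∈ ℂ[[z]][∂] with n ≥ 1 and aₙ(0) ≠ 0. Then there exists an automorphism φ of ℂ[[z]][∂] such that φ(P) = ∂ⁿ + bₙ₋₂∂ⁿ⁻² + ⋯ + b₀ for some b₀,…,bₙ₋₂ ∈ ℂ[[z]] (i.e. φ(P) is monic and has vanishing coefficient at ∂ⁿ⁻¹). -/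
set_option synthInstance.maxHeartbeats 1000000
set_option maxHeartbeats 1000000

open PowerSeries

/-- The derivative `∂ = d/dz` as a ℂ-linear endomorphism of ℂ[[z]]. -/
noncomputable def dOp : Module.End ℂ (PowerSeries ℂ) :=
  (PowerSeries.derivative ℂ).toLinearMap

/-- Multiplication by a power series, as a ℂ-linear endomorphism of ℂ[[z]]. -/
noncomputable def mOp (u : PowerSeries ℂ) : Module.End ℂ (PowerSeries ℂ) :=
  LinearMap.mulLeft ℂ u

/-- The algebra 𝔇 = ℂ[[z]][∂] of ordinary differential operators, realized as
the subalgebra of ℂ-linear endomorphisms of ℂ[[z]] generated by `d/dz` and all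
multiplication operators. -/
noncomputable def DiffOps : Subalgebra ℂ (Module.End ℂ (PowerSeries ℂ)) :=
  Algebra.adjoin ℂ (insert dOp (Set.range mOp))

/-- `∂` as an element of 𝔇. -/
noncomputable def Del : DiffOps :=
  ⟨dOp, Algebra.subset_adjoin (Set.mem_insert _ _)⟩

/-- Multiplication by `u ∈ ℂ[[z]]` as an element of 𝔇. -/
noncomputable def Mel (u : PowerSeries ℂ) : DiffOps :=
  ⟨mOp u, Algebra.subset_adjoin (Set.mem_insert_of_mem _ ⟨u, rfl⟩)⟩

lemma mOp_mul (a b : PowerSeries ℂ) : mOp (a * b) = mOp a * mOp b := by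
  ext f; simp [mOp, mul_assoc]

lemma mOp_add (a b : PowerSeries ℂ) : mOp (a + b) = mOp a + mOp b := by
  ext f; simp [mOp, add_mul]

lemma mOp_one : mOp (1 : PowerSeries ℂ) = 1 := by
  ext f; simp [mOp]

lemma mOp_zero : mOp (0 : PowerSeries ℂ) = 0 := by
  ext f; simp [mOp]

lemma Mel_mul (a b : PowerSeries ℂ) : Mel (a * b) = Mel a * Mel b :=
  Subtype.ext (mOp_mul a b)

lemma Mel_add (a b : PowerSeries ℂ) : Mel (a + b) = Mel a + Mel b :=
  Subtype.ext (mOp_add a b)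

lemma Mel_one : Mel (1 : PowerSeries ℂ) = 1 := Subtype.ext mOp_one

lemma Mel_zero : Mel (0 : PowerSeries ℂ) = 0 := Subtype.ext mOp_zero

lemma Del_mul_Mel (a : PowerSeries ℂ) :
    Del * Mel a = Mel a * Del + Mel (derivative ℂ a) := by
  apply Subtype.ext
  show dOp * mOp a = mOp a * dOp + mOp (derivative ℂ a)
  refine LinearMap.ext fun f => ?_
  show derivative ℂ (a * f) = a * derivative ℂ f + derivative ℂ a * f
  rw [Derivation.leibniz]
  simp [smul_eq_mul]; ring

/-- Normal form predicate: `T = ∑_{i<m} Mel (cᵢ) ∂^i`. -/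
def InS (m : ℕ) (T : DiffOps) : Prop :=
  ∃ c : ℕ → PowerSeries ℂ, T = ∑ i ∈ Finset.range m, Mel (c i) * Del ^ i

lemma InS_zero (m : ℕ) : InS m 0 :=
  ⟨fun _ => 0, by simp [Mel_zero]⟩

lemma InS_add {m T T'} (h : InS m T) (h' : InS m T') : InS m (T + T') := by
  obtain ⟨c, rfl⟩ := h; obtain ⟨c', rfl⟩ := h'
  exact ⟨c + c', by simp [Mel_add, add_mul, Finset.sum_add_distrib]⟩

lemma InS_mono {m m' T} (h : InS m T) (hm : m ≤ m') : InS m' T := by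
  obtain ⟨c, rfl⟩ := h
  refine ⟨fun i => if i < m then c i else 0, ?_⟩
  rw [← Finset.sum_subset (Finset.range_subset_range.mpr hm)]
  · apply Finset.sum_congr rfl
    intro i hi; dsimp only; rw [if_pos (Finset.mem_range.mp hi)]
  · intro i _ hi; dsimp only
    rw [if_neg (fun h => hi (Finset.mem_range.mpr h)), Mel_zero, zero_mul]

lemma InS_Mel_mul {m T} (a : PowerSeries ℂ) (h : InS m T) : InS m (Mel a * T) := by
  obtain ⟨c, rfl⟩ := h
  exact ⟨fun i => a * c i, by simp [Finset.mul_sum, Mel_mul, mul_assoc]⟩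

lemma InS_single {m i} (c : PowerSeries ℂ) (hi : i < m) : InS m (Mel c * Del ^ i) := by
  refine ⟨fun j => if j = i then c else 0, ?_⟩
  rw [Finset.sum_eq_single i]
  · dsimp only; rw [if_pos rfl]
  · intro j _ hj; dsimp only; rw [if_neg hj, Mel_zero, zero_mul]
  · intro hmem; exact absurd (Finset.mem_range.mpr hi) hmem

lemma InS_sum {m : ℕ} {s : Finset ℕ} {f : ℕ → DiffOps}
    (h : ∀ i ∈ s, InS m (f i)) : InS m (∑ i ∈ s, f i) :=
  Finset.sum_induction f (InS m) (fun _ _ => InS_add) (InS_zero m) h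

lemma InS_Del_mul {m T} (h : InS m T) : InS (m + 1) (Del * T) := by
  obtain ⟨c, rfl⟩ := h
  rw [Finset.mul_sum]
  refine InS_sum fun i hi => ?_
  have hi' := Finset.mem_range.mp hi
  have : Del * (Mel (c i) * Del ^ i)
      = Mel (c i) * Del ^ (i+1) + Mel (derivative ℂ (c i)) * Del ^ i := by
    rw [← mul_assoc, Del_mul_Mel, add_mul, pow_succ', mul_assoc]
  rw [this]
  exact InS_add (InS_single _ (by omega)) (InS_single _ (by omega))

lemma InS_mul_Del {m T} (h : InS m T) : InS (m + 1) (T * Del) := by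
  obtain ⟨c, rfl⟩ := h
  rw [Finset.sum_mul]
  refine InS_sum fun i hi => ?_
  have hi' := Finset.mem_range.mp hi
  rw [mul_assoc, ← pow_succ]
  exact InS_single _ (by omega)

lemma MelDel_pow (k : PowerSeries ℂ) (i : ℕ) :
    ∃ R, InS i R ∧ (Mel k * Del) ^ i = Mel (k ^ i) * Del ^ i + R := by
  induction i with
  | zero => exact ⟨0, InS_zero 0, by simp [Mel_one]⟩
  | succ i ih =>
    obtain ⟨R, hR, hpow⟩ := ih
    refine ⟨Mel (k * derivative ℂ (k ^ i)) * Del ^ i + Mel k * (Del * R),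
      InS_add (InS_single _ (by omega)) (InS_Mel_mul _ (InS_Del_mul hR)), ?_⟩
    have key : Del * (Mel (k ^ i) * Del ^ i)
        = Mel (k ^ i) * Del ^ (i+1) + Mel (derivative ℂ (k ^ i)) * Del ^ i := by
      rw [← mul_assoc, Del_mul_Mel, add_mul, mul_assoc, ← pow_succ']
    calc (Mel k * Del) ^ (i+1) = Mel k * (Del * (Mel (k ^ i) * Del ^ i)) + Mel k * (Del * R) := by
          simp only [pow_succ', hpow, mul_add, mul_assoc]
      _ = Mel k * (Mel (k ^ i) * Del ^ (i+1)) + Mel k * (Mel (derivative ℂ (k ^ i)) * Del ^ i)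
            + Mel k * (Del * R) := by rw [key, mul_add]
      _ = Mel (k ^ (i+1)) * Del ^ (i+1)
            + (Mel (k * derivative ℂ (k ^ i)) * Del ^ i + Mel k * (Del * R)) := by
          rw [← mul_assoc, ← Mel_mul, ← mul_assoc, ← Mel_mul, ← pow_succ', add_assoc]

lemma DelAdd_pow (v : PowerSeries ℂ) (i : ℕ) :
    ∃ R, InS i R ∧
      (Del + Mel v) ^ (i + 1) = Del ^ (i + 1) + Mel ((i + 1 : ℕ) • v) * Del ^ i + R := by
  induction i with
  | zero => exact ⟨0, InS_zero 0, by simp⟩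
  | succ i ih =>
    obtain ⟨R, hR, hpow⟩ := ih
    set w := (i + 1 : ℕ) • v with hw
    refine ⟨Mel (derivative ℂ w) * Del ^ i + Del * R
        + (Mel (v * w) * Del ^ i + Mel v * R),
      InS_add (InS_add (InS_single _ (by omega)) (InS_Del_mul hR))
        (InS_add (InS_single _ (by omega)) (InS_mono (InS_Mel_mul _ hR) (by omega))), ?_⟩
    have key : Del * (Mel w * Del ^ i)
        = Mel w * Del ^ (i+1) + Mel (derivative ℂ w) * Del ^ i := by
      rw [← mul_assoc, Del_mul_Mel, add_mul, mul_assoc, ← pow_succ']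
    have h2 : ((i + 1 : ℕ) + 1) • v = w + v := succ_nsmul v (i+1)
    calc (Del + Mel v) ^ (i + 2)
        = Del * Del ^ (i+1) + (Del * (Mel w * Del ^ i) + Del * R)
          + (Mel v * Del ^ (i+1) + (Mel v * (Mel w * Del ^ i) + Mel v * R)) := by
          simp only [pow_succ', hpow, mul_add, add_mul]; abel
      _ = Del ^ (i+2) + (Mel w * Del ^ (i+1) + Mel (derivative ℂ w) * Del ^ i + Del * R)
          + (Mel v * Del ^ (i+1) + (Mel (v * w) * Del ^ i + Mel v * R)) := by
          rw [key, ← pow_succ', ← mul_assoc (Mel v), ← Mel_mul, add_assoc]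
      _ = Del ^ (i+2) + Mel ((i + 1 + 1 : ℕ) • v) * Del ^ (i+1)
          + (Mel (derivative ℂ w) * Del ^ i + Del * R + (Mel (v * w) * Del ^ i + Mel v * R)) := by
          rw [h2, Mel_add, add_mul]
          abel

lemma eq_C_of_derivative_eq_zero {f : PowerSeries ℂ} (h : derivative ℂ f = 0) :
    f = C (constantCoeff f) := by
  ext n
  cases n with
  | zero => simp [coeff_zero_eq_constantCoeff]
  | succ n =>
    have hc := congrArg (coeff n) h
    rw [coeff_derivative, map_zero] at hc
    have h2 : (coeff (n+1)) f = 0 := by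
      rcases mul_eq_zero.mp hc with h | h
      · exact h
      · exact absurd h (Nat.cast_add_one_ne_zero n)
    rw [h2, coeff_C, if_neg (Nat.succ_ne_zero n)]

lemma exists_antiderivative (h : PowerSeries ℂ) :
    ∃ g : PowerSeries ℂ, derivative ℂ g = h ∧ constantCoeff g = 0 := by
  refine ⟨mk fun m => if m = 0 then 0 else coeff (m-1) h / m, ?_, by simp⟩
  ext n
  rw [coeff_derivative, coeff_mk, if_neg (Nat.succ_ne_zero n)]
  have hne : ((n:ℂ) + 1) ≠ 0 := Nat.cast_add_one_ne_zero n
  rw [Nat.add_sub_cancel]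
  push_cast
  field_simp

private noncomputable def odeC (w c : PowerSeries ℂ) (y0 : ℂ) : ℕ → ℂ
  | 0 => y0
  | k + 1 =>
    (constantCoeff w * ((k:ℂ)+1))⁻¹ *
      ((∑ j ∈ (Finset.range (k+1)).attach, coeff j.1 c * odeC w c y0 (k - j.1)) -
       ∑ j ∈ (Finset.range k).attach, coeff (j.1+1) w * odeC w c y0 (k - j.1) * ((k - j.1 : ℕ) : ℂ))
  termination_by k => k
  decreasing_by
  · exact Nat.lt_succ_of_le (Nat.sub_le k j.1)
  · exact Nat.lt_succ_of_le (Nat.sub_le k j.1)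

private lemma odeC_succ (w c : PowerSeries ℂ) (y0 : ℂ) (k : ℕ) :
    odeC w c y0 (k+1) =
    (constantCoeff w * ((k:ℂ)+1))⁻¹ *
      ((∑ j ∈ Finset.range (k+1), coeff j c * odeC w c y0 (k - j)) -
       ∑ j ∈ Finset.range k, coeff (j+1) w * odeC w c y0 (k - j) * ((k - j : ℕ) : ℂ)) := by
  rw [odeC]
  congr 1
  rw [← Finset.sum_attach (Finset.range (k+1)) (fun j => coeff j c * odeC w c y0 (k - j)),
     ← Finset.sum_attach (Finset.range k)
        (fun j => coeff (j+1) w * odeC w c y0 (k - j) * ((k - j : ℕ) : ℂ))]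

theorem ode_exists (w c : PowerSeries ℂ) (y0 : ℂ) (hw : constantCoeff w ≠ 0) :
    ∃ y, w * derivative ℂ y = c * y ∧ constantCoeff y = y0 := by
  refine ⟨mk (odeC w c y0), ?_, by simp [odeC]⟩
  ext k
  rw [coeff_mul, coeff_mul, Finset.Nat.sum_antidiagonal_eq_sum_range_succ_mk,
    Finset.Nat.sum_antidiagonal_eq_sum_range_succ_mk]
  simp only [coeff_derivative, coeff_mk]
  rw [Finset.sum_range_succ']
  simp only [Nat.sub_zero, coeff_zero_eq_constantCoeff, Nat.succ_eq_add_one]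
  have hre : ∀ j ∈ Finset.range k,
      coeff (j+1) w * (odeC w c y0 (k - (j+1) + 1) * (((k - (j+1) : ℕ) : ℂ) + 1))
      = coeff (j+1) w * odeC w c y0 (k - j) * ((k - j : ℕ) : ℂ) := by
    intro j hj
    have hj' := Finset.mem_range.mp hj
    have h1 : k - (j+1) + 1 = k - j := by omega
    have h2 : (((k - (j+1) : ℕ) : ℂ) + 1) = ((k - j : ℕ) : ℂ) := by
      rw [← h1]; push_cast [h1]; push_cast; norm_cast
    rw [h1, h2]; ring
  rw [Finset.sum_congr rfl hre]
  have hinv : constantCoeff w * (odeC w c y0 (k+1) * ((k:ℂ)+1)) =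
      (∑ j ∈ Finset.range (k+1), coeff j c * odeC w c y0 (k - j)) -
        ∑ j ∈ Finset.range k, coeff (j+1) w * odeC w c y0 (k - j) * ((k - j : ℕ) : ℂ) := by
    have hk1 : ((k:ℂ) + 1) ≠ 0 := Nat.cast_add_one_ne_zero k
    rw [odeC_succ]
    field_simp
  rw [hinv]
  ring

lemma exists_nth_root (n : ℕ) (hn : 1 ≤ n) (a : PowerSeries ℂ)
    (ha : constantCoeff a ≠ 0) :
    ∃ h : PowerSeries ℂ, h ^ n * a = 1 ∧ constantCoeff h ≠ 0 := by
  obtain ⟨ζ, hζ⟩ := IsAlgClosed.exists_pow_nat_eq ((constantCoeff a)⁻¹) (by omega : 0 < n)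
  have hζne : ζ ≠ 0 := by
    intro h0
    rw [h0, zero_pow (by omega : n ≠ 0)] at hζ
    exact (inv_ne_zero ha) hζ.symm
  have hnne : ((n:ℂ)) ≠ 0 := by exact_mod_cast (by omega : n ≠ 0)
  obtain ⟨h, hode, hc⟩ := ode_exists a (-(C ((n:ℂ)⁻¹) * derivative ℂ a)) ζ ha
  refine ⟨h, ?_, by rw [hc]; exact hζne⟩
  have hq : derivative ℂ (h ^ n * a) = 0 := by
    rw [Derivation.leibniz, Derivation.leibniz_pow]
    simp only [smul_eq_mul, nsmul_eq_mul]
    have hmul : a * derivative ℂ h = -(C ((n:ℂ)⁻¹) * derivative ℂ a) * h := hode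
    have : (n : PowerSeries ℂ) = C (n : ℂ) := by push_cast; rfl
    calc h ^ n * derivative ℂ a + a * ((n : PowerSeries ℂ) * (h ^ (n-1) * derivative ℂ h))
        = h ^ n * derivative ℂ a + (n : PowerSeries ℂ) * h ^ (n-1) * (a * derivative ℂ h) := by
          ring
      _ = h ^ n * derivative ℂ a
          - (C (n:ℂ) * C ((n:ℂ)⁻¹)) * (h ^ (n-1) * h) * derivative ℂ a := by
          rw [hmul, this]; ring
      _ = 0 := by
          rw [← map_mul, mul_inv_cancel₀ hnne, map_one, ← pow_succ,
            show n - 1 + 1 = n from by omega]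
          ring
  have hq0 : constantCoeff (h ^ n * a) = 1 := by
    rw [map_mul, map_pow, hc, hζ, inv_mul_cancel₀ ha]
  rw [eq_C_of_derivative_eq_zero hq, hq0, map_one]

section Comps

variable {g : PowerSeries ℂ}

/-- Composition `a ↦ a ∘ g` for `g` with zero constant term. -/
noncomputable def comps (g a : PowerSeries ℂ) : PowerSeries ℂ :=
  mk fun m => ∑ d ∈ Finset.range (m+1), coeff d a * coeff m (g ^ d)

lemma coeff_pow_zero_of_lt (hg : constantCoeff g = 0) {d m : ℕ} (h : m < d) :
    coeff m (g ^ d) = 0 :=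
  (X_pow_dvd_iff.mp (pow_dvd_pow_of_dvd (X_dvd_iff.mpr hg) d)) m h

lemma coeff_comps (hg : constantCoeff g = 0) (a : PowerSeries ℂ) {m N : ℕ} (hN : m < N) :
    coeff m (comps g a) = ∑ d ∈ Finset.range N, coeff d a * coeff m (g ^ d) := by
  rw [comps, coeff_mk]
  apply Finset.sum_subset (Finset.range_subset_range.mpr hN)
  intro d _ hd
  rw [coeff_pow_zero_of_lt hg (by simp at hd ⊢; omega), mul_zero]

lemma comps_add (a b : PowerSeries ℂ) : comps g (a + b) = comps g a + comps g b := by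
  ext m; simp [comps, add_mul, Finset.sum_add_distrib]

lemma comps_smul (r : ℂ) (a : PowerSeries ℂ) : comps g (r • a) = r • comps g a := by
  ext m; simp [comps, Finset.mul_sum, mul_assoc]

lemma comps_one : comps g (1 : PowerSeries ℂ) = 1 := by
  ext m
  rw [comps, coeff_mk, Finset.sum_eq_single 0]
  · simp
  · intro d _ hd; simp [coeff_one, hd]
  · simp

lemma constantCoeff_comps (hg : constantCoeff g = 0) (a : PowerSeries ℂ) :
    constantCoeff (comps g a) = constantCoeff a := by
  rw [← coeff_zero_eq_constantCoeff, coeff_comps hg a (by omega : (0:ℕ) < 1)]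
  simp

lemma comps_mul (hg : constantCoeff g = 0) (a b : PowerSeries ℂ) :
    comps g (a * b) = comps g a * comps g b := by
  ext m
  have box := (Finset.range (m+1)) ×ˢ (Finset.range (m+1))
  -- RHS
  have hR : coeff m (comps g a * comps g b)
      = ∑ p ∈ (Finset.range (m+1)) ×ˢ (Finset.range (m+1)),
          coeff p.1 a * coeff p.2 b * coeff m (g ^ (p.1 + p.2)) := by
    rw [coeff_mul]
    have : ∀ q ∈ Finset.HasAntidiagonal.antidiagonal m,
        coeff q.1 (comps g a) * coeff q.2 (comps g b)
        = ∑ p ∈ (Finset.range (m+1)) ×ˢ (Finset.range (m+1)),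
            coeff p.1 a * coeff p.2 b * (coeff q.1 (g ^ p.1) * coeff q.2 (g ^ p.2)) := by
      intro q hq
      rw [Finset.HasAntidiagonal.mem_antidiagonal] at hq
      rw [coeff_comps hg a (by omega : q.1 < m+1), coeff_comps hg b (by omega : q.2 < m+1),
        Finset.sum_mul_sum]
      rw [Finset.sum_product]
      apply Finset.sum_congr rfl; intro i _
      apply Finset.sum_congr rfl; intro j _
      ring
    rw [Finset.sum_congr rfl this, Finset.sum_comm]
    apply Finset.sum_congr rfl
    intro p _
    rw [← Finset.mul_sum, ← coeff_mul, ← pow_add]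
  rw [hR]
  -- LHS
  have hdisj : ((Finset.range (m+1) : Finset ℕ) : Set ℕ).PairwiseDisjoint
      (fun d => Finset.HasAntidiagonal.antidiagonal d) := by
    intro x _ y _ hxy
    simp only [Finset.disjoint_left]
    intro p hp hp'
    rw [Finset.HasAntidiagonal.mem_antidiagonal] at hp hp'
    exact hxy (by omega)
  have hL : coeff m (comps g (a * b))
      = ∑ p ∈ (Finset.range (m+1)).biUnion (fun d => Finset.HasAntidiagonal.antidiagonal d),
          coeff p.1 a * coeff p.2 b * coeff m (g ^ (p.1 + p.2)) := by
    rw [comps, coeff_mk, Finset.sum_biUnion hdisj]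
    apply Finset.sum_congr rfl
    intro d _
    rw [coeff_mul, Finset.sum_mul]
    apply Finset.sum_congr rfl
    intro p hp
    rw [Finset.HasAntidiagonal.mem_antidiagonal] at hp
    rw [hp]
  rw [hL]
  apply Finset.sum_subset
  · intro p hp
    simp only [Finset.mem_biUnion, Finset.mem_range, Finset.HasAntidiagonal.mem_antidiagonal] at hp
    obtain ⟨d, hd, hpd⟩ := hp
    simp only [Finset.mem_product, Finset.mem_range]
    omega
  · intro p hp hp'
    simp only [Finset.mem_biUnion, Finset.mem_range, Finset.HasAntidiagonal.mem_antidiagonal] at hp'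
    have : m < p.1 + p.2 := by
      by_contra hc
      exact hp' ⟨p.1 + p.2, by omega, rfl⟩
    rw [coeff_pow_zero_of_lt hg this, mul_zero]

end Comps

section Comps2

variable {g : PowerSeries ℂ}

/-- Composition with `g` as an algebra homomorphism. -/
noncomputable def compsAlgHom (hg : constantCoeff g = 0) :
    PowerSeries ℂ →ₐ[ℂ] PowerSeries ℂ :=
  AlgHom.ofLinearMap
    { toFun := comps g, map_add' := comps_add, map_smul' := comps_smul }
    comps_one (comps_mul hg)

@[simp] lemma compsAlgHom_apply (hg : constantCoeff g = 0) (a : PowerSeries ℂ) :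
    compsAlgHom hg a = comps g a := rfl

lemma comps_derivative (hg : constantCoeff g = 0) (a : PowerSeries ℂ) :
    derivative ℂ (comps g a) = comps g (derivative ℂ a) * derivative ℂ g := by
  ext m
  have key : ∀ e : ℕ, coeff m (g ^ e * derivative ℂ g)
      = ∑ q ∈ Finset.HasAntidiagonal.antidiagonal m, coeff q.1 (g ^ e) * coeff q.2 (derivative ℂ g) :=
    fun e => coeff_mul m _ _
  -- LHS
  have hL : coeff m (derivative ℂ (comps g a))
      = ∑ e ∈ Finset.range (m+1), coeff (e+1) a * ((e:ℂ)+1) * coeff m (g ^ e * derivative ℂ g) := by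
    rw [coeff_derivative, coeff_comps hg a (by omega : m+1 < m+2), Finset.sum_mul,
      Finset.sum_range_succ']
    have h0 : coeff 0 a * coeff (m+1) (g ^ 0) * ((m:ℂ)+1) = 0 := by
      rw [pow_zero, coeff_one, if_neg (Nat.succ_ne_zero m)]; ring
    rw [h0, add_zero]
    apply Finset.sum_congr rfl
    intro e _
    have hder : coeff m (derivative ℂ (g ^ (e+1))) = coeff (m+1) (g ^ (e+1)) * ((m:ℂ)+1) :=
      coeff_derivative _ m
    have hpow : derivative ℂ (g ^ (e+1)) = (e+1) • (g ^ e * derivative ℂ g) := by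
      rw [Derivation.leibniz_pow, Nat.add_sub_cancel, smul_eq_mul]
    have h3 : coeff m (derivative ℂ (g ^ (e+1)))
        = ((e:ℂ)+1) * coeff m (g ^ e * derivative ℂ g) := by
      rw [hpow, map_nsmul, nsmul_eq_mul]
      push_cast
      ring
    rw [mul_assoc, ← hder, h3]
    ring
  rw [hL, coeff_mul]
  have hc : ∀ q ∈ Finset.HasAntidiagonal.antidiagonal m,
      coeff q.1 (comps g (derivative ℂ a)) * coeff q.2 (derivative ℂ g)
      = ∑ e ∈ Finset.range (m+1),
          coeff (e+1) a * ((e:ℂ)+1) * (coeff q.1 (g ^ e) * coeff q.2 (derivative ℂ g)) := by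
    intro q hq
    rw [Finset.HasAntidiagonal.mem_antidiagonal] at hq
    rw [coeff_comps hg _ (by omega : q.1 < m+1), Finset.sum_mul]
    apply Finset.sum_congr rfl
    intro e _
    rw [coeff_derivative]
    ring
  rw [Finset.sum_congr rfl hc, Finset.sum_comm]
  apply Finset.sum_congr rfl
  intro e _
  rw [key e, Finset.mul_sum]

lemma coeff_pow_self (hg : constantCoeff g = 0) (m : ℕ) :
    coeff m (g ^ m) = (coeff 1 g) ^ m := by
  obtain ⟨t, rfl⟩ := X_dvd_iff.mpr hg
  rw [mul_pow]
  have h1 : coeff m (X ^ m * t ^ m) = coeff 0 (t ^ m) := by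
    simpa using coeff_X_pow_mul (t ^ m) m 0
  have h2 : coeff 1 (X * t) = coeff 0 t := coeff_succ_X_mul 0 t
  rw [h1, h2]
  simp [map_pow]

lemma comps_injective (hg : constantCoeff g = 0) (hg1 : coeff 1 g ≠ 0) :
    Function.Injective (compsAlgHom hg) := by
  rw [injective_iff_map_eq_zero]
  intro a ha0
  have ha : comps g a = 0 := ha0
  by_contra hne
  have hex : ∃ m, coeff m a ≠ 0 := by
    by_contra hall
    push_neg at hall
    exact hne (PowerSeries.ext fun n => by rw [hall n, map_zero])
  have hm : coeff (Nat.find hex) a ≠ 0 := Nat.find_spec hex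
  have hmin : ∀ d < Nat.find hex, coeff d a = 0 := fun d hd => by
    by_contra h; exact Nat.find_min hex hd h
  set m := Nat.find hex
  have hco : coeff m (comps g a) = coeff m a * (coeff 1 g) ^ m := by
    rw [comps, coeff_mk, Finset.sum_eq_single m]
    · rw [coeff_pow_self hg]
    · intro d hd hne'
      have : d < m := by simp at hd; omega
      rw [hmin d this, zero_mul]
    · simp
  rw [ha, map_zero] at hco
  exact (mul_ne_zero hm (pow_ne_zero m hg1)) hco.symm

end Comps2

lemma DelAdd_pow' (v : PowerSeries ℂ) (i : ℕ) :
    ∃ R, InS i R ∧ (Del + Mel v) ^ i = Del ^ i + R := by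
  cases i with
  | zero => exact ⟨0, InS_zero 0, by simp⟩
  | succ i =>
    obtain ⟨R, hR, hpow⟩ := DelAdd_pow v i
    exact ⟨Mel ((i + 1 : ℕ) • v) * Del ^ i + R,
      InS_add (InS_single _ (by omega)) (InS_mono hR (by omega)),
      by rw [hpow, add_assoc]⟩

section Surj

variable {g : PowerSeries ℂ}

private noncomputable def preC (g b : PowerSeries ℂ) : ℕ → ℂ
  | m => ((coeff 1 g) ^ m)⁻¹ *
      (coeff m b - ∑ d ∈ (Finset.range m).attach, preC g b d.1 * coeff m (g ^ d.1))
  termination_by m => m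
  decreasing_by exact Finset.mem_range.mp d.2

private lemma preC_eq (g b : PowerSeries ℂ) (m : ℕ) :
    preC g b m = ((coeff 1 g) ^ m)⁻¹ *
      (coeff m b - ∑ d ∈ Finset.range m, preC g b d * coeff m (g ^ d)) := by
  rw [preC]
  congr 1
  rw [← Finset.sum_attach (Finset.range m) (fun d => preC g b d * coeff m (g ^ d))]

lemma comps_surjective (hg : constantCoeff g = 0) (hg1 : coeff 1 g ≠ 0) :
    Function.Surjective (compsAlgHom hg) := by
  intro b
  refine ⟨mk (preC g b), ?_⟩
  show comps g (mk (preC g b)) = b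
  ext m
  rw [comps, coeff_mk, Finset.sum_range_succ, coeff_pow_self hg]
  simp only [coeff_mk]
  rw [preC_eq g b m, mul_comm ((coeff 1 g ^ m)⁻¹) _, mul_assoc,
    inv_mul_cancel₀ (pow_ne_zero m hg1), mul_one]
  ring

/-- Composition with `g` as an algebra automorphism. -/
noncomputable def compsEquiv (hg : constantCoeff g = 0) (hg1 : coeff 1 g ≠ 0) :
    PowerSeries ℂ ≃ₐ[ℂ] PowerSeries ℂ :=
  AlgEquiv.ofBijective (compsAlgHom hg) ⟨comps_injective hg hg1, comps_surjective hg hg1⟩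

lemma compsEquiv_apply (hg : constantCoeff g = 0) (hg1 : coeff 1 g ≠ 0)
    (a : PowerSeries ℂ) : compsEquiv hg hg1 a = comps g a := rfl

end Surj

section Conj

/-- Conjugation of endomorphisms by an algebra automorphism. -/
noncomputable def endConj (e : PowerSeries ℂ ≃ₐ[ℂ] PowerSeries ℂ) :
    Module.End ℂ (PowerSeries ℂ) ≃ₐ[ℂ] Module.End ℂ (PowerSeries ℂ) where
  toFun T := e.toLinearMap ∘ₗ T ∘ₗ e.symm.toLinearMap
  invFun T := e.symm.toLinearMap ∘ₗ T ∘ₗ e.toLinearMap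
  left_inv T := by ext f; simp
  right_inv T := by ext f; simp
  map_add' T S := by ext f; simp
  map_mul' T S := by ext f; simp [Module.End.mul_apply]
  commutes' r := by
    ext f
    simp [Module.algebraMap_end_apply, map_smul]

lemma endConj_apply (e : PowerSeries ℂ ≃ₐ[ℂ] PowerSeries ℂ)
    (T : Module.End ℂ (PowerSeries ℂ)) (f : PowerSeries ℂ) :
    endConj e T f = e (T (e.symm f)) := rfl

lemma endConj_symm_apply (e : PowerSeries ℂ ≃ₐ[ℂ] PowerSeries ℂ)
    (T : Module.End ℂ (PowerSeries ℂ)) (f : PowerSeries ℂ) :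
    (endConj e).symm T f = e.symm (T (e f)) := rfl

lemma endConj_mOp (e : PowerSeries ℂ ≃ₐ[ℂ] PowerSeries ℂ) (a : PowerSeries ℂ) :
    endConj e (mOp a) = mOp (e a) := by
  refine LinearMap.ext fun f => ?_
  show e (a * e.symm f) = e a * f
  rw [map_mul, AlgEquiv.apply_symm_apply]

lemma endConj_symm_eq (e : PowerSeries ℂ ≃ₐ[ℂ] PowerSeries ℂ)
    (T : Module.End ℂ (PowerSeries ℂ)) :
    (endConj e).symm T = endConj e.symm T := by
  refine LinearMap.ext fun f => ?_
  show e.symm (T (e f)) = e.symm (T (e.symm.symm f))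
  rw [AlgEquiv.symm_symm]

lemma endConj_dOp (e : PowerSeries ℂ ≃ₐ[ℂ] PowerSeries ℂ) (K : PowerSeries ℂ)
    (hE : ∀ b, e (derivative ℂ b) = K * derivative ℂ (e b)) :
    endConj e dOp = mOp K * dOp := by
  refine LinearMap.ext fun f => ?_
  show e (derivative ℂ (e.symm f)) = K * derivative ℂ f
  rw [hE, AlgEquiv.apply_symm_apply]

/-- Restriction of an algebra automorphism to an invariant subalgebra. -/
noncomputable def subalgConj {A : Type*} [Semiring A] [Algebra ℂ A]
    (Φ : A ≃ₐ[ℂ] A) (S : Subalgebra ℂ A)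
    (h1 : ∀ x ∈ S, Φ x ∈ S) (h2 : ∀ x ∈ S, Φ.symm x ∈ S) : S ≃ₐ[ℂ] S where
  toFun x := ⟨Φ x, h1 x x.2⟩
  invFun x := ⟨Φ.symm x, h2 x x.2⟩
  left_inv x := Subtype.ext (Φ.symm_apply_apply x)
  right_inv x := Subtype.ext (Φ.apply_symm_apply x)
  map_add' x y := Subtype.ext (by simp)
  map_mul' x y := Subtype.ext (by simp)
  commutes' r := Subtype.ext (by simp)

lemma subalgConj_apply {A : Type*} [Semiring A] [Algebra ℂ A]
    (Φ : A ≃ₐ[ℂ] A) (S : Subalgebra ℂ A) (h1) (h2) (x : S) :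
    (subalgConj Φ S h1 h2 x : A) = Φ x := rfl

/-- Conjugation by a unit multiplication operator, inside 𝔇. -/
noncomputable def innerConj (u uinv : PowerSeries ℂ) (h : u * uinv = 1) :
    DiffOps ≃ₐ[ℂ] DiffOps where
  toFun x := Mel uinv * x * Mel u
  invFun x := Mel u * x * Mel uinv
  left_inv x := by
    have h1 : Mel u * Mel uinv = 1 := by rw [← Mel_mul, h, Mel_one]
    have h2 : Mel uinv * Mel u = 1 := by rw [← Mel_mul, mul_comm uinv u, h, Mel_one]
    calc Mel u * (Mel uinv * x * Mel u) * Mel uinv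
        = (Mel u * Mel uinv) * x * (Mel u * Mel uinv) := by
          simp only [mul_assoc]
      _ = x := by rw [h1, one_mul, mul_one]
  right_inv x := by
    have h1 : Mel u * Mel uinv = 1 := by rw [← Mel_mul, h, Mel_one]
    have h2 : Mel uinv * Mel u = 1 := by rw [← Mel_mul, mul_comm uinv u, h, Mel_one]
    calc Mel uinv * (Mel u * x * Mel uinv) * Mel u
        = (Mel uinv * Mel u) * x * (Mel uinv * Mel u) := by
          simp only [mul_assoc]
      _ = x := by rw [h2, one_mul, mul_one]
  map_add' x y := by
    show Mel uinv * (x + y) * Mel u = Mel uinv * x * Mel u + Mel uinv * y * Mel u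
    rw [mul_add, add_mul]
  map_mul' x y := by
    have h2 : Mel u * Mel uinv = 1 := by rw [← Mel_mul, h, Mel_one]
    show Mel uinv * (x * y) * Mel u = Mel uinv * x * Mel u * (Mel uinv * y * Mel u)
    calc Mel uinv * (x * y) * Mel u
        = Mel uinv * (x * ((Mel u * Mel uinv) * (y * Mel u))) := by
          rw [h2, one_mul]; simp only [mul_assoc]
      _ = Mel uinv * x * Mel u * (Mel uinv * y * Mel u) := by simp only [mul_assoc]
  commutes' r := by
    have h2 : Mel uinv * Mel u = 1 := by rw [← Mel_mul, mul_comm uinv u, h, Mel_one]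
    show Mel uinv * (algebraMap ℂ DiffOps r) * Mel u = algebraMap ℂ DiffOps r
    rw [Algebra.algebraMap_eq_smul_one, mul_smul_comm, smul_mul_assoc, mul_one, h2]

end Conj

/-- Gauge transformation: for every `v` there is an automorphism of 𝔇 fixing all
multiplication operators and sending `∂` to `∂ + v`. -/
lemma exists_gauge (v : PowerSeries ℂ) :
    ∃ φ₂ : DiffOps ≃ₐ[ℂ] DiffOps, (∀ b, φ₂ (Mel b) = Mel b) ∧ φ₂ Del = Del + Mel v := by
  obtain ⟨u, hu, hu0⟩ := ode_exists 1 v 1 (by simp)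
  rw [one_mul] at hu
  have hcc : constantCoeff u = ((1 : ℂˣ) : ℂ) := by rw [hu0]; simp
  have hmulu : u * PowerSeries.invOfUnit u 1 = 1 := PowerSeries.mul_invOfUnit u 1 hcc
  set uinv := PowerSeries.invOfUnit u 1 with huinvdef
  refine ⟨innerConj u uinv hmulu, ?_, ?_⟩
  · intro b
    show Mel uinv * Mel b * Mel u = Mel b
    rw [← Mel_mul, ← Mel_mul]
    congr 1
    calc uinv * b * u = b * (u * uinv) := by ring
      _ = b := by rw [hmulu, mul_one]
  · show Mel uinv * Del * Mel u = Del + Mel v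
    rw [mul_assoc, Del_mul_Mel, hu, mul_add, ← mul_assoc, ← Mel_mul, ← Mel_mul]
    have h1 : uinv * u = 1 := by rw [mul_comm]; exact hmulu
    have h2 : uinv * (v * u) = v := by
      calc uinv * (v * u) = v * (u * uinv) := by ring
        _ = v := by rw [hmulu, mul_one]
    rw [h1, h2, Mel_one, one_mul]

/-- Conjugation by an automorphism of ℂ[[z]] compatible with `∂` induces an
automorphism of 𝔇. -/
lemma exists_conj (E : PowerSeries ℂ ≃ₐ[ℂ] PowerSeries ℂ) (K K2 : PowerSeries ℂ)
    (hE : ∀ b, E (derivative ℂ b) = K * derivative ℂ (E b))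
    (hE2 : ∀ b, E.symm (derivative ℂ b) = K2 * derivative ℂ (E.symm b)) :
    ∃ φ₁ : DiffOps ≃ₐ[ℂ] DiffOps, (∀ b, φ₁ (Mel b) = Mel (E b)) ∧ φ₁ Del = Mel K * Del := by
  set Φ := endConj E with hΦdef
  have hmem1 : ∀ x ∈ DiffOps, Φ x ∈ DiffOps := by
    intro x hx
    refine Algebra.adjoin_induction ?_ ?_ ?_ ?_ hx
    · intro y hy
      rcases Set.mem_insert_iff.mp hy with rfl | ⟨w, rfl⟩
      · rw [hΦdef, endConj_dOp E K hE]
        exact mul_mem (Mel K).2 Del.2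
      · rw [hΦdef, endConj_mOp]
        exact (Mel (E w)).2
    · intro r; rw [hΦdef, AlgEquiv.commutes]; exact Subalgebra.algebraMap_mem _ r
    · intro x y _ _ ihx ihy; rw [map_add]; exact add_mem ihx ihy
    · intro x y _ _ ihx ihy; rw [map_mul]; exact mul_mem ihx ihy
  have hmem2 : ∀ x ∈ DiffOps, Φ.symm x ∈ DiffOps := by
    intro x hx
    refine Algebra.adjoin_induction ?_ ?_ ?_ ?_ hx
    · intro y hy
      rcases Set.mem_insert_iff.mp hy with rfl | ⟨w, rfl⟩
      · rw [hΦdef, endConj_symm_eq, endConj_dOp E.symm K2 hE2]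
        exact mul_mem (Mel K2).2 Del.2
      · rw [hΦdef, endConj_symm_eq, endConj_mOp]
        exact (Mel (E.symm w)).2
    · intro r; rw [AlgEquiv.commutes]; exact Subalgebra.algebraMap_mem _ r
    · intro x y _ _ ihx ihy; rw [map_add]; exact add_mem ihx ihy
    · intro x y _ _ ihx ihy; rw [map_mul]; exact mul_mem ihx ihy
  refine ⟨subalgConj Φ DiffOps hmem1 hmem2, ?_, ?_⟩
  · exact fun b => Subtype.ext (by rw [subalgConj_apply]; exact endConj_mOp E b)
  · refine Subtype.ext ?_
    rw [subalgConj_apply]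
    show Φ dOp = (mOp K) * dOp
    rw [hΦdef, endConj_dOp E K hE]

lemma sum_normal_form (d : ℕ → PowerSeries ℂ) (K : PowerSeries ℂ) (m : ℕ)
    (hlead : d (m+1) * K ^ (m+1) = 1) :
    ∃ c : ℕ → PowerSeries ℂ,
      ∑ i ∈ Finset.range (m+1+1), Mel (d i) * (Mel K * Del) ^ i =
        Del ^ (m+1) + (∑ i ∈ Finset.range m, Mel (c i) * Del ^ i + Mel (c m) * Del ^ m) := by
  obtain ⟨R, hR, hpow⟩ := MelDel_pow K (m+1)
  have htop : Mel (d (m+1)) * (Mel K * Del) ^ (m+1)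
      = Del ^ (m+1) + Mel (d (m+1)) * R := by
    rw [hpow, mul_add, ← mul_assoc, ← Mel_mul, hlead, Mel_one, one_mul]
  have hsum : InS (m+1) (∑ i ∈ Finset.range (m+1), Mel (d i) * (Mel K * Del) ^ i
      + Mel (d (m+1)) * R) := by
    refine InS_add (InS_sum fun i hi => ?_) (InS_Mel_mul _ hR)
    obtain ⟨Ri, hRi, hpi⟩ := MelDel_pow K i
    rw [hpi, mul_add, ← mul_assoc, ← Mel_mul]
    have hi' := Finset.mem_range.mp hi
    exact InS_add (InS_single _ hi') (InS_mono (InS_Mel_mul _ hRi) (by omega))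
  obtain ⟨c, hc⟩ := hsum
  refine ⟨c, ?_⟩
  rw [Finset.sum_range_succ, htop]
  calc (∑ i ∈ Finset.range (m+1), Mel (d i) * (Mel K * Del) ^ i)
        + (Del ^ (m+1) + Mel (d (m+1)) * R)
      = Del ^ (m+1) + ((∑ i ∈ Finset.range (m+1), Mel (d i) * (Mel K * Del) ^ i)
          + Mel (d (m+1)) * R) := by abel
    _ = Del ^ (m+1) + (∑ i ∈ Finset.range m, Mel (c i) * Del ^ i + Mel (c m) * Del ^ m) := by
        rw [hc, Finset.sum_range_succ]

lemma gauge_normal_form (c : ℕ → PowerSeries ℂ) (v : PowerSeries ℂ) (m : ℕ)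
    (hvq : ((m+1 : ℕ) • v) + c m = 0) :
    ∃ b : ℕ → PowerSeries ℂ,
      (Del + Mel v) ^ (m+1) + (∑ i ∈ Finset.range m, Mel (c i) * (Del + Mel v) ^ i
          + Mel (c m) * (Del + Mel v) ^ m) =
        Del ^ (m+1) + ∑ i ∈ Finset.range m, Mel (b i) * Del ^ i := by
  obtain ⟨R1, hR1, hp1⟩ := DelAdd_pow v m
  obtain ⟨R2, hR2, hp2⟩ := DelAdd_pow' v m
  have hsum2 : InS m (∑ i ∈ Finset.range m, Mel (c i) * (Del + Mel v) ^ i) := by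
    refine InS_sum fun i hi => ?_
    obtain ⟨R3, hR3, hp3⟩ := DelAdd_pow' v i
    rw [hp3, mul_add]
    have hi' := Finset.mem_range.mp hi
    exact InS_add (InS_single _ hi') (InS_mono (InS_Mel_mul _ hR3) (by omega))
  have hrem : InS m (R1 + (Mel (c m) * R2
      + ∑ i ∈ Finset.range m, Mel (c i) * (Del + Mel v) ^ i)) :=
    InS_add hR1 (InS_add (InS_Mel_mul _ hR2) hsum2)
  obtain ⟨b, hb⟩ := hrem
  refine ⟨b, ?_⟩
  rw [hp1, hp2]
  have hcancel : Mel ((m+1 : ℕ) • v) * Del ^ m + Mel (c m) * Del ^ m = 0 := by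
    rw [← add_mul, ← Mel_add, hvq, Mel_zero, zero_mul]
  rw [mul_add]
  calc Del ^ (m+1) + Mel ((m+1 : ℕ) • v) * Del ^ m + R1
        + (∑ i ∈ Finset.range m, Mel (c i) * (Del + Mel v) ^ i
          + (Mel (c m) * Del ^ m + Mel (c m) * R2))
      = Del ^ (m+1) + (Mel ((m+1 : ℕ) • v) * Del ^ m + Mel (c m) * Del ^ m)
        + (R1 + (Mel (c m) * R2 + ∑ i ∈ Finset.range m, Mel (c i) * (Del + Mel v) ^ i)) := by
        abel
    _ = Del ^ (m+1) + ∑ i ∈ Finset.range m, Mel (b i) * Del ^ i := by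
        rw [hcancel, add_zero, ← hb]


/-- Normalization: if `P = aₙ∂ⁿ + ⋯ + a₀ ∈ ℂ[[z]][∂]` with `n ≥ 1` and
`aₙ(0) ≠ 0`, then there is an automorphism `φ` of ℂ[[z]][∂] such that
`φ(P) = ∂ⁿ + bₙ₋₂∂ⁿ⁻² + ⋯ + b₀` for suitable `b₀, …, bₙ₋₂ ∈ ℂ[[z]]`. -/
theorem normalization_of_operator (n : ℕ) (hn : 1 ≤ n)
    (a : ℕ → PowerSeries ℂ) (ha : PowerSeries.constantCoeff (a n) ≠ 0) :
    ∃ φ : DiffOps ≃ₐ[ℂ] DiffOps, ∃ b : ℕ → PowerSeries ℂ,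
      φ (∑ i ∈ Finset.range (n + 1), Mel (a i) * Del ^ i) =
        Del ^ n + ∑ i ∈ Finset.range (n - 1), Mel (b i) * Del ^ i := by
  obtain ⟨m, rfl⟩ : ∃ m, n = m + 1 := ⟨n - 1, by omega⟩
  obtain ⟨h, hroot, hh0⟩ := exists_nth_root (m+1) (by omega) (a (m+1)) ha
  obtain ⟨g, hg', hg0⟩ := exists_antiderivative h
  have hg1 : coeff 1 g ≠ 0 := by
    have h1 : coeff 0 (derivative ℂ g) = coeff 1 g * ((0:ℂ)+1) := by
      simpa using coeff_derivative g 0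
    rw [hg', coeff_zero_eq_constantCoeff] at h1
    intro hcon
    rw [hcon, zero_mul] at h1
    exact hh0 h1
  set Ce := compsEquiv hg0 hg1 with hCedef
  set E := Ce.symm with hEdef
  have hCe : ∀ b, Ce b = comps g b := fun b => rfl
  have hder : ∀ x, derivative ℂ (Ce x) = Ce (derivative ℂ x) * h := by
    intro x
    rw [hCe, hCe, comps_derivative hg0, hg']
  have hE : ∀ b, E (derivative ℂ b) = E h * derivative ℂ (E b) := by
    intro b
    have h1 : derivative ℂ b = Ce (derivative ℂ (E b)) * h := by
      conv_lhs => rw [← Ce.apply_symm_apply b]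
      exact hder (E b)
    calc E (derivative ℂ b) = E (Ce (derivative ℂ (E b)) * h) := by rw [← h1]
      _ = derivative ℂ (E b) * E h := by rw [map_mul, hEdef, Ce.symm_apply_apply]
      _ = E h * derivative ℂ (E b) := mul_comm _ _
  have hhinv : h * (h ^ m * a (m+1)) = 1 := by
    rw [← mul_assoc, ← pow_succ']
    exact hroot
  have hECe : ∀ b, Ce (derivative ℂ b) = (h ^ m * a (m+1)) * derivative ℂ (Ce b) := by
    intro b
    have h2 : (h ^ m * a (m+1)) * derivative ℂ (Ce b) = Ce (derivative ℂ b) := by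
      rw [hder b]
      calc (h ^ m * a (m+1)) * (Ce (derivative ℂ b) * h)
          = (h * (h ^ m * a (m+1))) * Ce (derivative ℂ b) := by ring
        _ = Ce (derivative ℂ b) := by rw [hhinv, one_mul]
    exact h2.symm
  have hE2 : ∀ b, E.symm (derivative ℂ b) = (h ^ m * a (m+1)) * derivative ℂ (E.symm b) := by
    intro b
    rw [hEdef, AlgEquiv.symm_symm]
    exact hECe b
  obtain ⟨φ₁, φ₁Mel, φ₁Del⟩ := exists_conj E (E h) (h ^ m * a (m+1)) hE hE2
  have hlead : E (a (m+1)) * (E h) ^ (m+1) = 1 := by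
    rw [← map_pow, ← map_mul, mul_comm, hroot, map_one]
  obtain ⟨c, hc⟩ := sum_normal_form (fun i => E (a i)) (E h) m hlead
  have hQ : φ₁ (∑ i ∈ Finset.range (m+1+1), Mel (a i) * Del ^ i)
      = Del ^ (m+1) + (∑ i ∈ Finset.range m, Mel (c i) * Del ^ i + Mel (c m) * Del ^ m) := by
    rw [map_sum]
    rw [Finset.sum_congr rfl (fun i _ => by rw [map_mul, map_pow, φ₁Mel, φ₁Del] :
      ∀ i ∈ Finset.range (m+1+1), φ₁ (Mel (a i) * Del ^ i) = Mel (E (a i)) * (Mel (E h) * Del) ^ i)]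
    exact hc
  have hne : ((m:ℂ)+1) ≠ 0 := Nat.cast_add_one_ne_zero m
  set v := -(C (((m:ℂ)+1)⁻¹) * c m) with hvdef
  have hvq : ((m+1 : ℕ) • v) + c m = 0 := by
    have e1 : ((m+1 : ℕ) : PowerSeries ℂ) = C ((m:ℂ)+1) := by
      rw [show ((m:ℂ)+1) = ((m+1 : ℕ) : ℂ) from by push_cast; ring]
      exact (map_natCast C (m+1)).symm
    rw [nsmul_eq_mul, e1, hvdef]
    calc C ((m:ℂ)+1) * -(C (((m:ℂ)+1)⁻¹) * c m) + c m
        = -((C ((m:ℂ)+1) * C (((m:ℂ)+1)⁻¹)) * c m) + c m := by ring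
      _ = 0 := by rw [← map_mul, mul_inv_cancel₀ hne, map_one]; ring
  obtain ⟨φ₂, φ₂Mel, φ₂Del⟩ := exists_gauge v
  obtain ⟨b, hb⟩ := gauge_normal_form c v m hvq
  refine ⟨φ₁.trans φ₂, b, ?_⟩
  rw [AlgEquiv.trans_apply, hQ, map_add, map_add, map_pow, map_mul, map_pow, φ₂Del,
    φ₂Mel, map_sum]
  rw [Finset.sum_congr rfl (fun i _ => by rw [map_mul, map_pow, φ₂Mel, φ₂Del] :
    ∀ i ∈ Finset.range m, φ₂ (Mel (c i) * Del ^ i) = Mel (c i) * (Del + Mel v) ^ i)]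
  exact hb
end

section
/- Let R̂ = k[[t², t³]] ⊂ k[[t]], the complete local ring of a cuspidal cubic at its singular point. Every proper nonzero ideal I of R̂ is equal to either I_{n,θ} = ⟨tⁿ(t² + θt³)⟩ for some n ∈ ℕ₀ and θ ∈ k, or J_n = tⁿ·⟨t², t³⟩ for some n ∈ ℕ₀. -/
open PowerSeries

/-- The ring `R̂ = k[[t²,t³]]`, realized as the subalgebra of `k[[t]]`
consisting of power series with vanishing linear term. -/
def Rhat (k : Type*) [Field k] : Subalgebra k (PowerSeries k) where
  carrier := {f | PowerSeries.coeff (R := k) 1 f = 0}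
  add_mem' := fun ha hb => by
    simp only [Set.mem_setOf_eq, map_add] at *
    rw [ha, hb, add_zero]
  mul_mem' := fun ha hb => by
    simp only [Set.mem_setOf_eq] at *
    rw [PowerSeries.coeff_mul, Finset.Nat.antidiagonal_succ]
    simp [ha, hb]
  algebraMap_mem' := fun r => by
    simp [PowerSeries.algebraMap_apply, PowerSeries.coeff_C]

/-- `tᵐ` as an element of `R̂ = k[[t²,t³]]`, for `m ≠ 1`. -/
noncomputable def tpow (k : Type*) [Field k] (m : ℕ) (hm : m ≠ 1) : Rhat k :=
  ⟨PowerSeries.X ^ m, by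
    show PowerSeries.coeff (R := k) 1 (PowerSeries.X ^ m) = 0
    rw [PowerSeries.coeff_X_pow]
    simp [Ne.symm hm]⟩

/-- The generator `tⁿ(t² + θt³) = t^{n+2} + θ·t^{n+3}` of the ideal `I_{n,θ}`. -/
noncomputable def igen (k : Type*) [Field k] (n : ℕ) (θ : k) : Rhat k :=
  tpow k (n + 2) (by omega) + θ • tpow k (n + 3) (by omega)

section Aux

variable {k : Type*} [Field k]

lemma mem_Rhat_iff {x : PowerSeries k} : x ∈ Rhat k ↔ PowerSeries.coeff (R := k) 1 x = 0 :=
  Iff.rfl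

lemma coeff1_val (x : Rhat k) : PowerSeries.coeff (R := k) 1 (x : PowerSeries k) = 0 :=
  x.2

lemma coeff1_inv_eq (f : PowerSeries k) (h0 : PowerSeries.constantCoeff (R := k) f ≠ 0) :
    PowerSeries.coeff (R := k) 1 f⁻¹ =
      -(PowerSeries.coeff (R := k) 1 f) * (PowerSeries.constantCoeff (R := k) f)⁻¹ *
        (PowerSeries.constantCoeff (R := k) f)⁻¹ := by
  have h := congrArg (PowerSeries.coeff (R := k) 1) (PowerSeries.mul_inv_cancel f h0)
  rw [PowerSeries.coeff_one_mul, PowerSeries.constantCoeff_inv] at h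
  simp only [PowerSeries.coeff_one, if_neg one_ne_zero] at h
  field_simp at h
  have hi : (PowerSeries.constantCoeff (R := k) f)⁻¹ * PowerSeries.constantCoeff (R := k) f = 1 :=
    inv_mul_cancel₀ h0
  apply mul_right_cancel₀ (mul_ne_zero h0 h0)
  linear_combination h + (PowerSeries.coeff (R := k) 1 f) *
    ((PowerSeries.constantCoeff (R := k) f)⁻¹ * (PowerSeries.constantCoeff (R := k) f) + 1) * hi

lemma Rhat.isUnit_of_constantCoeff {x : Rhat k}
    (h : PowerSeries.constantCoeff (R := k) (x : PowerSeries k) ≠ 0) : IsUnit x := by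
  have h1x : PowerSeries.coeff (R := k) 1 ((x : PowerSeries k)⁻¹) = 0 := by
    rw [coeff1_inv_eq _ h, coeff1_val]; ring
  exact IsUnit.of_mul_eq_one (a := x) ⟨(x : PowerSeries k)⁻¹, h1x⟩
    (Subtype.ext (PowerSeries.mul_inv_cancel _ h))

end Aux

set_option maxHeartbeats 1000000 in
set_option synthInstance.maxHeartbeats 400000 in
/-- Classification of the proper nonzero ideals of `R̂ = k[[t²,t³]]`: each is
either `I_{n,θ} = ⟨tⁿ(t² + θt³)⟩` for some `n ∈ ℕ`, `θ ∈ k`, or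
`J_n = tⁿ·⟨t²,t³⟩ = ⟨t^{n+2}, t^{n+3}⟩` for some `n ∈ ℕ`. -/
theorem ideals_of_cusp (k : Type*) [Field k] [IsAlgClosed k] [CharZero k]
    (I : Ideal (Rhat k)) (h0 : I ≠ ⊥) (h1 : I ≠ ⊤) :
    (∃ (n : ℕ) (θ : k), I = Ideal.span {igen k n θ}) ∨
    (∃ n : ℕ, I = Ideal.span
      {tpow k (n + 2) (by omega), tpow k (n + 3) (by omega)}) := by
  classical
  -- Every element of I has zero constant coefficient (otherwise it's a unit).
  have hc0 : ∀ x ∈ I, PowerSeries.constantCoeff (R := k) (x : PowerSeries k) = 0 := by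
    intro x hx
    by_contra hne
    exact h1 (I.eq_top_of_isUnit_mem hx (Rhat.isUnit_of_constantCoeff hne))
  -- There is a minimal index m with some element of I having nonzero coeff m.
  have hex : ∃ m : ℕ, ∃ x ∈ I, PowerSeries.coeff (R := k) m (x : PowerSeries k) ≠ 0 := by
    obtain ⟨x, hxI, hx0⟩ := Submodule.exists_mem_ne_zero_of_ne_bot h0
    have hxv : (x : PowerSeries k) ≠ 0 := fun h => hx0 (Subtype.ext h)
    obtain ⟨m, hm⟩ : ∃ m, PowerSeries.coeff (R := k) m (x : PowerSeries k) ≠ 0 := by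
      by_contra hc
      push_neg at hc
      exact hxv (PowerSeries.ext fun m => by simpa using hc m)
    exact ⟨m, x, hxI, hm⟩
  obtain ⟨m, ⟨f, hfI, hfc⟩, hmin⟩ : ∃ m : ℕ,
      (∃ x ∈ I, PowerSeries.coeff (R := k) m (x : PowerSeries k) ≠ 0) ∧
      ∀ j < m, ∀ x ∈ I, PowerSeries.coeff (R := k) j (x : PowerSeries k) = 0 := by
    refine ⟨Nat.find hex, Nat.find_spec hex, ?_⟩
    intro j hj x hx
    by_contra hne
    exact Nat.find_min hex hj ⟨x, hx, hne⟩
  have hlt : ∀ x ∈ I, ∀ j < m, PowerSeries.coeff (R := k) j (x : PowerSeries k) = 0 :=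
    fun x hx j hj => hmin j hj x hx
  have hm2 : 2 ≤ m := by
    by_contra hlt2
    push_neg at hlt2
    interval_cases m
    · exact hfc (by rw [PowerSeries.coeff_zero_eq_constantCoeff]; exact hc0 f hfI)
    · exact hfc (coeff1_val f)
  obtain ⟨n, rfl⟩ : ∃ n, m = n + 2 := ⟨m - 2, by omega⟩
  -- write f = X^(n+2) * v
  obtain ⟨v, hv⟩ : (PowerSeries.X : PowerSeries k) ^ (n + 2) ∣ (f : PowerSeries k) :=
    PowerSeries.X_pow_dvd_iff.mpr (hlt f hfI)
  have hv0 : PowerSeries.constantCoeff (R := k) v ≠ 0 := by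
    have : PowerSeries.coeff (R := k) (n + 2) (f : PowerSeries k) = PowerSeries.coeff (R := k) 0 v := by
      rw [hv]
      simpa using PowerSeries.coeff_X_pow_mul v (n + 2) 0
    rw [← PowerSeries.coeff_zero_eq_constantCoeff, ← this]
    exact hfc
  have hvv : v * v⁻¹ = 1 := PowerSeries.mul_inv_cancel v hv0
  set θ : k := PowerSeries.coeff (R := k) 1 v * (PowerSeries.constantCoeff (R := k) v)⁻¹ with hθ
  set w : PowerSeries k := v⁻¹ * (1 + PowerSeries.C (R := k) θ * PowerSeries.X) with hwdef
  have hw1 : PowerSeries.coeff (R := k) 1 w = 0 := by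
    rw [hwdef, PowerSeries.coeff_one_mul, coeff1_inv_eq v hv0]
    simp only [map_add, map_one, map_mul, PowerSeries.constantCoeff_X, mul_zero,
      PowerSeries.constantCoeff_C, add_zero, PowerSeries.constantCoeff_inv,
      PowerSeries.coeff_C_mul, PowerSeries.coeff_one_X, PowerSeries.coeff_one]
    simp only [hθ]
    field_simp
    simp
  have hw0 : PowerSeries.constantCoeff (R := k) w ≠ 0 := by
    rw [hwdef]
    simp [PowerSeries.constantCoeff_inv, hv0]
  have hfw : (f : PowerSeries k) * w =
      PowerSeries.X ^ (n + 2) + PowerSeries.C (R := k) θ * PowerSeries.X ^ (n + 3) := by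
    rw [hv, hwdef]
    calc PowerSeries.X ^ (n + 2) * v * (v⁻¹ * (1 + PowerSeries.C (R := k) θ * PowerSeries.X))
        = PowerSeries.X ^ (n + 2) * (v * v⁻¹) * (1 + PowerSeries.C (R := k) θ * PowerSeries.X) := by
          ring
      _ = PowerSeries.X ^ (n + 2) + PowerSeries.C (R := k) θ * PowerSeries.X ^ (n + 3) := by
          rw [hvv]; ring
  have higen_coe : ((igen k n θ : Rhat k) : PowerSeries k) =
      PowerSeries.X ^ (n + 2) + PowerSeries.C (R := k) θ * PowerSeries.X ^ (n + 3) := by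
    simp [igen, tpow, PowerSeries.smul_eq_C_mul]
  have hfi : f * (⟨w, hw1⟩ : Rhat k) = igen k n θ := by
    apply Subtype.ext
    rw [MulMemClass.coe_mul]
    rw [higen_coe]
    exact hfw
  by_cases hcase : I ≤ Ideal.span {f}
  · -- I = span {f} = span {igen n θ}
    left
    refine ⟨n, θ, ?_⟩
    have hwu : IsUnit (⟨w, hw1⟩ : Rhat k) := Rhat.isUnit_of_constantCoeff hw0
    obtain ⟨u, hu⟩ := hwu
    have hspan : Ideal.span {f} = Ideal.span {igen k n θ} := by
      apply le_antisymm <;> rw [Ideal.span_singleton_le_span_singleton]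
      · -- igen ∣ f
        refine ⟨(↑u⁻¹ : Rhat k), ?_⟩
        rw [← hfi, ← hu, mul_assoc]
        simp
      · -- f ∣ igen
        exact ⟨⟨w, hw1⟩, hfi.symm⟩
    rw [← hspan]
    exact le_antisymm hcase ((Ideal.span_singleton_le_iff_mem I).mpr hfI)
  · -- I = span {t^(n+2), t^(n+3)}
    right
    refine ⟨n, ?_⟩
    obtain ⟨h, hhI, hh⟩ := SetLike.not_le_iff_exists.mp hcase
    obtain ⟨b, hb⟩ : (PowerSeries.X : PowerSeries k) ^ (n + 2) ∣ (h : PowerSeries k) :=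
      PowerSeries.X_pow_dvd_iff.mpr (hlt h hhI)
    set a : PowerSeries k := v⁻¹ * b with hadef
    have hva : v * a = b := by rw [hadef, ← mul_assoc, hvv, one_mul]
    have ha1 : PowerSeries.coeff (R := k) 1 a ≠ 0 := by
      intro ha0
      apply hh
      rw [Ideal.mem_span_singleton]
      refine ⟨⟨a, ha0⟩, Subtype.ext ?_⟩
      rw [MulMemClass.coe_mul]
      show (h : PowerSeries k) = (f : PowerSeries k) * a
      rw [hb, hv]
      calc PowerSeries.X ^ (n + 2) * b = PowerSeries.X ^ (n + 2) * (v * a) := by rw [hva]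
        _ = PowerSeries.X ^ (n + 2) * v * a := by ring
    -- key: we can solve v*r + b*s = q with r, s in Rhat
    have key : ∀ q : PowerSeries k, ∃ r s : PowerSeries k,
        PowerSeries.coeff (R := k) 1 r = 0 ∧ PowerSeries.coeff (R := k) 1 s = 0 ∧ v * r + b * s = q := by
      intro q
      set p : PowerSeries k := v⁻¹ * q with hpdef
      have hvp : v * p = q := by rw [hpdef, ← mul_assoc, hvv, one_mul]
      set s : PowerSeries k :=
        PowerSeries.C (R := k) (PowerSeries.coeff (R := k) 1 p * (PowerSeries.coeff (R := k) 1 a)⁻¹) with hsdef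
      refine ⟨p - s * a, s, ?_, ?_, ?_⟩
      · rw [map_sub, hsdef, PowerSeries.coeff_C_mul]
        field_simp
        simp
      · rw [hsdef, PowerSeries.coeff_C]
        simp
      · have : v * (p - s * a) + b * s = v * p - s * (v * a) + b * s := by ring
        rw [this, hva, hvp]
        ring
    -- t^(n+2) ∈ I and t^(n+3) ∈ I
    have hmem : ∀ (q : PowerSeries k) (z : Rhat k),
        (z : PowerSeries k) = PowerSeries.X ^ (n + 2) * q → z ∈ I := by
      intro q z hz
      obtain ⟨r, s, hr, hs, hq⟩ := key q
      have : z = f * ⟨r, hr⟩ + h * ⟨s, hs⟩ := by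
        apply Subtype.ext
        rw [AddMemClass.coe_add, MulMemClass.coe_mul, MulMemClass.coe_mul]
        show (z : PowerSeries k) = (f : PowerSeries k) * r + (h : PowerSeries k) * s
        rw [hz, hb, hv]
        linear_combination (PowerSeries.X : PowerSeries k) ^ (n + 2) * hq.symm
      rw [this]
      exact I.add_mem (I.mul_mem_right _ hfI) (I.mul_mem_right _ hhI)
    have ht2 : tpow k (n + 2) (by omega) ∈ I := by
      apply hmem 1
      show (PowerSeries.X : PowerSeries k) ^ (n + 2) = PowerSeries.X ^ (n + 2) * 1
      rw [mul_one]
    have ht3 : tpow k (n + 3) (by omega) ∈ I := by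
      apply hmem PowerSeries.X
      show (PowerSeries.X : PowerSeries k) ^ (n + 3) = PowerSeries.X ^ (n + 2) * PowerSeries.X
      ring
    apply le_antisymm
    · intro x hx
      rw [Ideal.mem_span_pair]
      obtain ⟨g, hg⟩ : (PowerSeries.X : PowerSeries k) ^ (n + 2) ∣ (x : PowerSeries k) :=
        PowerSeries.X_pow_dvd_iff.mpr (hlt x hx)
      refine ⟨⟨g - PowerSeries.C (R := k) (PowerSeries.coeff (R := k) 1 g) * PowerSeries.X, ?_⟩,
        ⟨PowerSeries.C (R := k) (PowerSeries.coeff (R := k) 1 g), ?_⟩, ?_⟩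
      · show PowerSeries.coeff (R := k) 1
            (g - PowerSeries.C (R := k) (PowerSeries.coeff (R := k) 1 g) * PowerSeries.X) = 0
        rw [map_sub, PowerSeries.coeff_C_mul, PowerSeries.coeff_one_X]
        ring
      · show PowerSeries.coeff (R := k) 1 (PowerSeries.C (R := k) (PowerSeries.coeff (R := k) 1 g)) = 0
        rw [PowerSeries.coeff_C]; simp
      · apply Subtype.ext
        rw [AddMemClass.coe_add, MulMemClass.coe_mul, MulMemClass.coe_mul]
        show (g - PowerSeries.C (R := k) (PowerSeries.coeff (R := k) 1 g) * PowerSeries.X) *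
            (PowerSeries.X ^ (n + 2)) +
            PowerSeries.C (R := k) (PowerSeries.coeff (R := k) 1 g) * PowerSeries.X ^ (n + 3) =
            (x : PowerSeries k)
        rw [hg]
        ring
    · rw [Ideal.span_le]
      rintro z hz
      simp only [Set.mem_insert_iff, Set.mem_singleton_iff] at hz
      rcases hz with rfl | rfl
      · exact ht2
      · exact ht3
end

section
/- Let R̂ = k[[u,v]]/(v² − u³) and let M be an indecomposable R̂-module with dim_k M = 3. Then M is isomorphic to exactly one of: (1) M_θ = R̂/(t³ + θt⁴) for some θ ∈ k (realized via R̂ ≅ k[[t²,t³]]); (2) N = R̂/(t⁴, t⁵); (3) the Matlis dual N^♯ of N. -/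
/-- Simultaneous conjugacy of pairs of 3×3 matrices: the module given by the
pair `(U, V)` is isomorphic to the module given by `(U', V')`. -/
def SimConj {k : Type*} [Field k] (U V U' V' : Matrix (Fin 3) (Fin 3) k) : Prop :=
  ∃ S : GL (Fin 3) k,
    U' = (S : Matrix (Fin 3) (Fin 3) k) * U * ((S⁻¹ : GL (Fin 3) k) : Matrix (Fin 3) (Fin 3) k) ∧
    V' = (S : Matrix (Fin 3) (Fin 3) k) * V * ((S⁻¹ : GL (Fin 3) k) : Matrix (Fin 3) (Fin 3) k)


namespace IndecompAux
open Matrix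
variable {k : Type*} [Field k]

lemma pow3_eq_zero {M : Matrix (Fin 3) (Fin 3) k} (h : IsNilpotent M) : M ^ 3 = 0 := by
  have h1 : IsNilpotent (Matrix.toLinAlgEquiv' M) := h.map (Matrix.toLinAlgEquiv' (R := k))
  have h2 : (Matrix.toLinAlgEquiv' M).charpoly = Polynomial.X ^ 3 := by
    simpa [Module.finrank_fin_fun] using h1.charpoly_eq_X_pow_finrank
  have h3 := LinearMap.aeval_self_charpoly (Matrix.toLinAlgEquiv' M)
  rw [h2] at h3
  simp only [map_pow, Polynomial.aeval_X] at h3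
  have h4 : Matrix.toLinAlgEquiv' (M ^ 3) = 0 := by rw [map_pow]; exact h3
  simpa using (map_eq_zero_iff _ (AlgEquiv.injective _)).mp h4

lemma isUnit_of_mulVec_injective {T : Matrix (Fin 3) (Fin 3) k}
    (h : ∀ v, T *ᵥ v = 0 → v = 0) : IsUnit T := by
  rw [Matrix.isUnit_iff_isUnit_det, isUnit_iff_ne_zero]
  intro hdet
  obtain ⟨v, hv, hv0⟩ := Matrix.exists_mulVec_eq_zero_iff.mpr hdet
  exact hv (h v hv0)

/-- matrix with given columns -/
def colsMat (c0 c1 c2 : Fin 3 → k) : Matrix (Fin 3) (Fin 3) k :=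
  Matrix.of fun i j => ![c0, c1, c2] j i

lemma colsMat_mulVec (c0 c1 c2 w : Fin 3 → k) :
    colsMat c0 c1 c2 *ᵥ w = w 0 • c0 + w 1 • c1 + w 2 • c2 := by
  funext i
  simp [colsMat, Matrix.mulVec, dotProduct, Fin.sum_univ_three, mul_comm]

lemma mul_colsMat (M : Matrix (Fin 3) (Fin 3) k) (c0 c1 c2 : Fin 3 → k) :
    M * colsMat c0 c1 c2 = colsMat (M *ᵥ c0) (M *ᵥ c1) (M *ᵥ c2) := by
  ext i j
  fin_cases j <;>
    simp [colsMat, Matrix.mul_apply, Matrix.mulVec, dotProduct]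

lemma colsMat_mul_J (c0 c1 c2 : Fin 3 → k) :
    colsMat c0 c1 c2 * !![(0:k),1,0;0,0,1;0,0,0] = colsMat 0 c0 c1 := by
  ext i j
  fin_cases j <;> simp [colsMat, Matrix.mul_apply, Fin.sum_univ_three, Matrix.vecHead, Matrix.vecTail]

lemma colsMat_mul_E12 (c0 c1 c2 : Fin 3 → k) :
    colsMat c0 c1 c2 * !![(0:k),1,0;0,0,0;0,0,0] = colsMat 0 c0 0 := by
  ext i j
  fin_cases j <;> simp [colsMat, Matrix.mul_apply, Fin.sum_univ_three, Matrix.vecHead, Matrix.vecTail]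

lemma conj_mul_units (T : (Matrix (Fin 3) (Fin 3) k)ˣ) (A B : Matrix (Fin 3) (Fin 3) k) :
    (T.val * A * (T⁻¹).val) * (T.val * B * (T⁻¹).val)
      = T.val * (A * B) * (T⁻¹).val := by
  simp only [mul_assoc, Units.inv_mul_cancel_left]

lemma conjI_mul (T : (Matrix (Fin 3) (Fin 3) k)ˣ) (A B : Matrix (Fin 3) (Fin 3) k) :
    ((T⁻¹).val * A * T.val) * ((T⁻¹).val * B * T.val)
      = (T⁻¹).val * (A * B) * T.val := by
  simp only [mul_assoc, Units.mul_inv_cancel_left]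

lemma conj_inj (T : (Matrix (Fin 3) (Fin 3) k)ˣ) {D E : Matrix (Fin 3) (Fin 3) k}
    (h : T.val * D * (T⁻¹).val = T.val * E * (T⁻¹).val) :
    D = E := by
  have h2 := congrArg (fun X => (T⁻¹).val * X * T.val) h
  simp only [mul_assoc, Units.inv_mul, Units.inv_mul_cancel_left, mul_one] at h2
  exact h2

lemma eq_conj_symm {S : (Matrix (Fin 3) (Fin 3) k)ˣ} {A B : Matrix (Fin 3) (Fin 3) k}
    (h : A = S.val * B * (S⁻¹).val) :
    B = (S⁻¹).val * A * S.val := by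
  rw [h]
  simp only [mul_assoc, Units.inv_mul, Units.inv_mul_cancel_left, mul_one]

lemma conjI_eq (T : (Matrix (Fin 3) (Fin 3) k)ˣ) {U A : Matrix (Fin 3) (Fin 3) k}
    (h : U * T.val = T.val * A) :
    (T⁻¹).val * U * T.val = A := by
  rw [mul_assoc, h, ← mul_assoc, Units.inv_mul, one_mul]

lemma conj_eq_of_mul (T : (Matrix (Fin 3) (Fin 3) k)ˣ) {U A : Matrix (Fin 3) (Fin 3) k}
    (h : U * T.val = T.val * A) :
    U = T.val * A * (T⁻¹).val := by
  rw [← h, mul_assoc, Units.mul_inv, mul_one]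

lemma cubeZero_structure {M : Matrix (Fin 3) (Fin 3) k}
    (h3 : M * M * M = 0) (h2 : M * M ≠ 0) :
    ∃ T : (Matrix (Fin 3) (Fin 3) k)ˣ,
      M * T.val = T.val * !![0,1,0;0,0,1;0,0,0] := by
  obtain ⟨x, hx⟩ : ∃ x, (M * M) *ᵥ x ≠ 0 := by
    by_contra h; push_neg at h
    apply h2
    ext i j
    have := congrFun (h (Pi.single j 1)) i
    simpa using this
  have hMM : ∀ v, M *ᵥ (M *ᵥ v) = (M * M) *ᵥ v := fun v => (Matrix.mulVec_mulVec ..)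
  have hMMM : M *ᵥ ((M * M) *ᵥ x) = 0 := by
    rw [Matrix.mulVec_mulVec, ← mul_assoc, h3, Matrix.zero_mulVec]
  have hMMMM : (M * M) *ᵥ ((M * M) *ᵥ x) = 0 := by
    rw [Matrix.mulVec_mulVec, show M * M * (M * M) = M * M * M * M by rw [← mul_assoc], h3,
      Matrix.zero_mul, Matrix.zero_mulVec]
  have hMM2 : (M * M) *ᵥ (M *ᵥ x) = 0 := by
    rw [Matrix.mulVec_mulVec, show M * M * M = M * M * M from rfl, h3, Matrix.zero_mulVec]
  have hinj : ∀ w, colsMat ((M*M) *ᵥ x) (M *ᵥ x) x *ᵥ w = 0 → w = 0 := by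
    intro w hw
    rw [colsMat_mulVec] at hw
    have hw2 : w 2 = 0 := by
      have h5 := congrArg (fun v => (M * M) *ᵥ v) hw
      simp only [Matrix.mulVec_add, Matrix.mulVec_smul, hMMMM, hMM2,
        Matrix.mulVec_zero, smul_zero, zero_add, add_zero] at h5
      rcases smul_eq_zero.mp h5 with h | h
      · exact h
      · exact absurd h hx
    have hw1 : w 1 = 0 := by
      have h5 := congrArg (fun v => M *ᵥ v) hw
      simp only [Matrix.mulVec_add, Matrix.mulVec_smul, hMMM, hMM x,
        smul_zero, zero_add, hw2, zero_smul, add_zero, Matrix.mulVec_zero] at h5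
      rcases smul_eq_zero.mp h5 with h | h
      · exact h
      · exact absurd h hx
    have hw0 : w 0 = 0 := by
      rw [hw1, hw2, zero_smul, zero_smul, add_zero, add_zero] at hw
      rcases smul_eq_zero.mp hw with h | h
      · exact h
      · exact absurd h hx
    funext i; fin_cases i <;> assumption
  obtain ⟨T, hT⟩ := isUnit_of_mulVec_injective hinj
  refine ⟨T, ?_⟩
  rw [hT, mul_colsMat, colsMat_mul_J, hMMM, hMM x]

lemma sqZero_structure {M : Matrix (Fin 3) (Fin 3) k}
    (hM : M ≠ 0) (h2 : M * M = 0) :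
    ∃ T : (Matrix (Fin 3) (Fin 3) k)ˣ,
      M * T.val = T.val * !![0,1,0;0,0,0;0,0,0] := by
  obtain ⟨x, hx⟩ : ∃ x, M *ᵥ x ≠ 0 := by
    by_contra h; push_neg at h
    apply hM
    ext i j
    have := congrFun (h (Pi.single j 1)) i
    simpa using this
  set f := Matrix.mulVecLin M with hf
  have hrange_le : LinearMap.range f ≤ LinearMap.ker f := by
    rintro y ⟨w, rfl⟩
    simp only [LinearMap.mem_ker, hf, Matrix.mulVecLin_apply, Matrix.mulVec_mulVec, h2,
      Matrix.zero_mulVec]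
  have hMx_ker : M *ᵥ x ∈ LinearMap.ker f := by
    apply hrange_le
    exact ⟨x, rfl⟩
  have hrn := LinearMap.finrank_range_add_finrank_ker f
  rw [Module.finrank_fin_fun] at hrn
  have hr_le : Module.finrank k (LinearMap.range f) ≤ Module.finrank k (LinearMap.ker f) :=
    Submodule.finrank_mono hrange_le
  have hr_pos : 0 < Module.finrank k (LinearMap.range f) := by
    rcases Nat.eq_zero_or_pos (Module.finrank k (LinearMap.range f)) with h | h
    · exfalso
      rw [Submodule.finrank_eq_zero] at h
      have : M *ᵥ x ∈ (⊥ : Submodule k (Fin 3 → k)) := h ▸ LinearMap.mem_range.mpr ⟨x, rfl⟩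
      exact hx (Submodule.mem_bot k |>.mp this)
    · exact h
  have hker2 : 2 ≤ Module.finrank k (LinearMap.ker f) := by omega
  have hspan_le : (k ∙ (M *ᵥ x)) ≤ LinearMap.ker f :=
    (Submodule.span_singleton_le_iff_mem _ _).mpr hMx_ker
  have hspan_lt : (k ∙ (M *ᵥ x)) < LinearMap.ker f := by
    apply lt_of_le_of_ne hspan_le
    intro hEq
    have h1 : Module.finrank k (k ∙ (M *ᵥ x)) = 1 := finrank_span_singleton hx
    rw [hEq] at h1
    omega
  obtain ⟨z, hzK, hznot⟩ := SetLike.exists_of_lt hspan_lt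
  have hMz : M *ᵥ z = 0 := hzK
  have hMMx : M *ᵥ (M *ᵥ x) = 0 := hMx_ker
  have hinj : ∀ w, colsMat (M *ᵥ x) x z *ᵥ w = 0 → w = 0 := by
    intro w hw
    rw [colsMat_mulVec] at hw
    have hw1 : w 1 = 0 := by
      have h5 := congrArg (fun v => M *ᵥ v) hw
      simp only [Matrix.mulVec_add, Matrix.mulVec_smul, hMMx, hMz,
        Matrix.mulVec_zero, smul_zero, zero_add, add_zero] at h5
      rcases smul_eq_zero.mp h5 with h | h
      · exact h
      · exact absurd h hx
    have hw2 : w 2 = 0 := by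
      by_contra hne
      apply hznot
      rw [hw1, zero_smul, add_zero] at hw
      have hzz : w 2 • z = (-(w 0)) • (M *ᵥ x) := by
        have h6 := eq_neg_of_add_eq_zero_right hw
        rw [h6, neg_smul]
      have h7 : z = ((w 2)⁻¹ * (-(w 0))) • (M *ᵥ x) := by
        rw [mul_smul, ← hzz, inv_smul_smul₀ hne]
      rw [h7]
      exact Submodule.smul_mem _ _ (Submodule.mem_span_singleton_self _)
    have hw0 : w 0 = 0 := by
      rw [hw1, hw2, zero_smul, zero_smul, add_zero, add_zero] at hw
      rcases smul_eq_zero.mp hw with h | h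
      · exact h
      · exact absurd h hx
    funext i; fin_cases i <;> assumption
  obtain ⟨T, hT⟩ := isUnit_of_mulVec_injective hinj
  refine ⟨T, ?_⟩
  rw [hT, mul_colsMat, colsMat_mul_E12, hMMx, hMz]

attribute [local simp] Matrix.vecHead Matrix.vecTail

lemma centralizer_J {W : Matrix (Fin 3) (Fin 3) k}
    (hWJ : W * !![0,1,0;0,0,1;0,0,0] = !![0,1,0;0,0,1;0,0,0] * W)
    (hWW : W * W = 0) :
    W = W 0 2 • !![0,0,1;0,0,0;0,0,0] := by
  have e := fun i j => Matrix.ext_iff.mpr hWJ i j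
  have h10 : W 1 0 = 0 := by simpa [Matrix.mul_apply, Fin.sum_univ_three] using (e 0 0).symm
  have h20 : W 2 0 = 0 := by simpa [Matrix.mul_apply, Fin.sum_univ_three] using (e 1 0).symm
  have h21 : W 2 1 = 0 := by simpa [Matrix.mul_apply, Fin.sum_univ_three] using (e 2 2)
  have h11 : W 1 1 = W 0 0 := by simpa [Matrix.mul_apply, Fin.sum_univ_three] using (e 0 1).symm
  have h22 : W 2 2 = W 1 1 := by simpa [Matrix.mul_apply, Fin.sum_univ_three] using (e 1 2).symm
  have h12 : W 1 2 = W 0 1 := by simpa [Matrix.mul_apply, Fin.sum_univ_three] using (e 0 2).symm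
  have hWtri : W = !![W 0 0, W 0 1, W 0 2; 0, W 0 0, W 0 1; 0, 0, W 0 0] := by
    ext i j
    fin_cases i <;> fin_cases j <;>
      simp [h10, h20, h21, h11, h22, h12]
  rw [hWtri] at hWW
  have q00 : W 0 0 * W 0 0 = 0 := by
    simpa [Matrix.mul_apply, Fin.sum_univ_three] using Matrix.ext_iff.mpr hWW 0 0
  have ha : W 0 0 = 0 := mul_self_eq_zero.mp q00
  have q02 := Matrix.ext_iff.mpr hWW 0 2
  simp [Matrix.mul_apply, Fin.sum_univ_three, ha] at q02
  rw [hWtri, ha, q02]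
  ext i j; fin_cases i <;> fin_cases j <;> simp

lemma centralizer_E12 {W : Matrix (Fin 3) (Fin 3) k}
    (hWE : W * !![0,1,0;0,0,0;0,0,0] = !![0,1,0;0,0,0;0,0,0] * W)
    (hWW : W * W = 0) :
    W = !![0, W 0 1, W 0 2; 0, 0, 0; 0, W 2 1, 0] ∧ W 0 2 * W 2 1 = 0 := by
  have e := fun i j => Matrix.ext_iff.mpr hWE i j
  have h10 : W 1 0 = 0 := by simpa [Matrix.mul_apply, Fin.sum_univ_three] using (e 0 0).symm
  have h20 : W 2 0 = 0 := by simpa [Matrix.mul_apply, Fin.sum_univ_three] using (e 2 1)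
  have h12 : W 1 2 = 0 := by simpa [Matrix.mul_apply, Fin.sum_univ_three] using (e 0 2).symm
  have h11 : W 1 1 = W 0 0 := by simpa [Matrix.mul_apply, Fin.sum_univ_three] using (e 0 1).symm
  have hWtri : W = !![W 0 0, W 0 1, W 0 2; 0, W 0 0, 0; 0, W 2 1, W 2 2] := by
    ext i j
    fin_cases i <;> fin_cases j <;>
      simp [h10, h20, h12, h11]
  rw [hWtri] at hWW
  have q00 : W 0 0 * W 0 0 = 0 := by
    simpa [Matrix.mul_apply, Fin.sum_univ_three] using Matrix.ext_iff.mpr hWW 0 0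
  have ha : W 0 0 = 0 := mul_self_eq_zero.mp q00
  have q22 : W 2 2 * W 2 2 = 0 := by
    simpa [Matrix.mul_apply, Fin.sum_univ_three] using Matrix.ext_iff.mpr hWW 2 2
  have he : W 2 2 = 0 := mul_self_eq_zero.mp q22
  have q01 := Matrix.ext_iff.mpr hWW 0 1
  simp [Matrix.mul_apply, Fin.sum_univ_three, ha, he] at q01
  constructor
  · conv_lhs => rw [hWtri, ha, he]
  · exact mul_eq_zero.mpr q01

lemma sq_zero_of_conj {A B U : Matrix (Fin 3) (Fin 3) k} {S T : (Matrix (Fin 3) (Fin 3) k)ˣ}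
    (hA : A = S.val * U * (S⁻¹).val) (hB : B = T.val * U * (T⁻¹).val)
    (hBB : B * B = 0) : A * A = 0 := by
  have hU' : U = (T⁻¹).val * B * T.val := eq_conj_symm hB
  have hUU : U * U = 0 := by
    rw [hU', conjI_mul, hBB, Matrix.mul_zero, Matrix.zero_mul]
  rw [hA, conj_mul_units, hUU, Matrix.mul_zero, Matrix.zero_mul]

set_option maxHeartbeats 2000000 in
theorem indecomposable_dim_three_classification' (U V : Matrix (Fin 3) (Fin 3) k)
    (hcomm : U * V = V * U) (hU : IsNilpotent U)
    (hrel : V ^ 2 = U ^ 3)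
    (hind : ∀ E : Matrix (Fin 3) (Fin 3) k,
      E * E = E → E * U = U * E → E * V = V * E → E = 0 ∨ E = 1) :
    (∃ θ : k, ∃ S : (Matrix (Fin 3) (Fin 3) k)ˣ,
        !![0, 1, 0; 0, 0, 1; 0, 0, 0] = S.val * U * (S⁻¹).val ∧
        (θ • !![0, 0, 1; 0, 0, 0; 0, 0, 0] : Matrix (Fin 3) (Fin 3) k) = S.val * V * (S⁻¹).val) ∨
    (∃ S : (Matrix (Fin 3) (Fin 3) k)ˣ,
        !![0, 0, 0; 1, 0, 0; 0, 0, 0] = S.val * U * (S⁻¹).val ∧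
        !![0, 0, 0; 0, 0, 0; 1, 0, 0] = S.val * V * (S⁻¹).val) ∨
    (∃ S : (Matrix (Fin 3) (Fin 3) k)ˣ,
        !![0, 1, 0; 0, 0, 0; 0, 0, 0] = S.val * U * (S⁻¹).val ∧
        !![0, 0, 1; 0, 0, 0; 0, 0, 0] = S.val * V * (S⁻¹).val) := by
  have hU3 : U ^ 3 = 0 := pow3_eq_zero hU
  have hUUU : U * U * U = 0 := by
    have h := hU3; rwa [pow_succ, pow_two] at h
  have hVV : V * V = 0 := by
    have h := hrel.trans hU3; rwa [pow_two] at h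
  by_cases hU2 : U * U = 0
  · -- square-zero case
    by_cases hU0 : U = 0
    · exfalso
      by_cases hV0 : V = 0
      · rcases hind !![1,0,0;0,0,0;0,0,0]
          (by ext i j; fin_cases i <;> fin_cases j <;> simp [Matrix.mul_apply, Fin.sum_univ_three])
          (by rw [hU0, Matrix.mul_zero, Matrix.zero_mul])
          (by rw [hV0, Matrix.mul_zero, Matrix.zero_mul]) with h | h
        · have := Matrix.ext_iff.mpr h 0 0; simp at this
        · have := Matrix.ext_iff.mpr h 1 1; simp [Matrix.one_apply] at this
      · obtain ⟨T, hVT⟩ := sqZero_structure hV0 hVV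
        have hVc : V = T.val * !![0,1,0;0,0,0;0,0,0] * (T⁻¹).val := conj_eq_of_mul T hVT
        have hDE : (!![1,0,0;0,1,0;0,0,0] : Matrix (Fin 3) (Fin 3) k) * !![0,1,0;0,0,0;0,0,0]
            = !![0,1,0;0,0,0;0,0,0] * !![1,0,0;0,1,0;0,0,0] := by
          ext i j; fin_cases i <;> fin_cases j <;> simp [Matrix.mul_apply, Fin.sum_univ_three]
        rcases hind (T.val * !![1,0,0;0,1,0;0,0,0] * (T⁻¹).val)
          (by rw [conj_mul_units]; congr 1
              ext i j; fin_cases i <;> fin_cases j <;> simp [Matrix.mul_apply, Fin.sum_univ_three])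
          (by rw [hU0, Matrix.mul_zero, Matrix.zero_mul])
          (by rw [hVc, conj_mul_units, conj_mul_units, hDE]) with h | h
        · have hD0 : (!![1,0,0;0,1,0;0,0,0] : Matrix (Fin 3) (Fin 3) k) = 0 :=
            conj_inj T (by rw [h]; simp)
          have := Matrix.ext_iff.mpr hD0 0 0; simp at this
        · have hD1 : (!![1,0,0;0,1,0;0,0,0] : Matrix (Fin 3) (Fin 3) k) = 1 :=
            conj_inj T (by rw [h, mul_one]; exact (Units.mul_inv T).symm)
          have := Matrix.ext_iff.mpr hD1 2 2; simp [Matrix.one_apply] at this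
    · -- U ≠ 0, U² = 0
      obtain ⟨T, hUT⟩ := sqZero_structure hU0 hU2
      have hE12 : (T⁻¹).val * U * T.val = !![0,1,0;0,0,0;0,0,0] := conjI_eq T hUT
      have hUc : U = T.val * !![0,1,0;0,0,0;0,0,0] * (T⁻¹).val := conj_eq_of_mul T hUT
      have hWE : ((T⁻¹).val * V * T.val) * !![0,1,0;0,0,0;0,0,0]
          = !![0,1,0;0,0,0;0,0,0] * ((T⁻¹).val * V * T.val) := by
        rw [← hE12, conjI_mul, conjI_mul, hcomm]
      have hWW : ((T⁻¹).val * V * T.val) * ((T⁻¹).val * V * T.val) = 0 := by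
        rw [conjI_mul, hVV, Matrix.mul_zero, Matrix.zero_mul]
      obtain ⟨hWform, hcd⟩ := centralizer_E12 hWE hWW
      set b := ((T⁻¹).val * V * T.val) 0 1 with hb
      set c := ((T⁻¹).val * V * T.val) 0 2 with hc
      set d := ((T⁻¹).val * V * T.val) 2 1 with hd
      by_cases hc0 : c = 0
      · by_cases hd0 : d = 0
        · -- decomposable, contradiction
          exfalso
          rw [hc0, hd0] at hWform
          have hVc : V = T.val * !![0,b,0;0,0,0;0,0,0] * (T⁻¹).val := by
            have h1 : V = T.val * ((T⁻¹).val * V * T.val) * (T⁻¹).val := by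
              simp only [mul_assoc, Units.mul_inv, mul_one, Units.mul_inv_cancel_left]
            rw [h1, hWform]
          rcases hind (T.val * !![1,0,0;0,1,0;0,0,0] * (T⁻¹).val)
            (by rw [conj_mul_units]; congr 1
                ext i j; fin_cases i <;> fin_cases j <;> simp [Matrix.mul_apply, Fin.sum_univ_three])
            (by rw [hUc, conj_mul_units, conj_mul_units]; congr 1
                ext i j; fin_cases i <;> fin_cases j <;> simp [Matrix.mul_apply, Fin.sum_univ_three])
            (by rw [hVc, conj_mul_units, conj_mul_units]; congr 1
                ext i j; fin_cases i <;> fin_cases j <;> simp [Matrix.mul_apply, Fin.sum_univ_three]) with h | h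
          · have hD0 : (!![1,0,0;0,1,0;0,0,0] : Matrix (Fin 3) (Fin 3) k) = 0 :=
              conj_inj T (by rw [h]; simp)
            have := Matrix.ext_iff.mpr hD0 0 0; simp at this
          · have hD1 : (!![1,0,0;0,1,0;0,0,0] : Matrix (Fin 3) (Fin 3) k) = 1 :=
              conj_inj T (by rw [h, mul_one]; exact (Units.mul_inv T).symm)
            have := Matrix.ext_iff.mpr hD1 2 2; simp [Matrix.one_apply] at this
        · -- case B
          right; left
          rw [hc0] at hWform
          have hPPi : (!![0,1,b;1,0,0;0,0,d] : Matrix (Fin 3) (Fin 3) k)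
              * !![0,1,0;1,0,-(b/d);0,0,d⁻¹] = 1 := by
            ext i j; fin_cases i <;> fin_cases j <;>
              (simp [Matrix.mul_apply, Fin.sum_univ_three, Matrix.one_apply, Fin.ext_iff]; try field_simp; try ring)
          have hPiP : (!![0,1,0;1,0,-(b/d);0,0,d⁻¹] : Matrix (Fin 3) (Fin 3) k)
              * !![0,1,b;1,0,0;0,0,d] = 1 := by
            ext i j; fin_cases i <;> fin_cases j <;>
              (simp [Matrix.mul_apply, Fin.sum_univ_three, Matrix.one_apply, Fin.ext_iff]; try field_simp; try ring)
          set Pu : (Matrix (Fin 3) (Fin 3) k)ˣ :=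
            ⟨!![0,1,b;1,0,0;0,0,d], !![0,1,0;1,0,-(b/d);0,0,d⁻¹], hPPi, hPiP⟩ with hPu
          have hPuv : Pu.val = !![0,1,b;1,0,0;0,0,d] := rfl
          have hPui : (Pu⁻¹).val = !![0,1,0;1,0,-(b/d);0,0,d⁻¹] := rfl
          have key1 : (!![0,1,0;0,0,0;0,0,0] : Matrix (Fin 3) (Fin 3) k) * !![0,1,b;1,0,0;0,0,d]
              = !![0,1,b;1,0,0;0,0,d] * !![0,0,0;1,0,0;0,0,0] := by
            ext i j; fin_cases i <;> fin_cases j <;> simp [Matrix.mul_apply, Fin.sum_univ_three]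
          have key2 : (!![0,b,0;0,0,0;0,d,0] : Matrix (Fin 3) (Fin 3) k) * !![0,1,b;1,0,0;0,0,d]
              = !![0,1,b;1,0,0;0,0,d] * !![0,0,0;0,0,0;1,0,0] := by
            ext i j; fin_cases i <;> fin_cases j <;> simp [Matrix.mul_apply, Fin.sum_univ_three]
          refine ⟨(T * Pu)⁻¹, ?_, ?_⟩
          · rw [inv_inv]
            have g1 : (Pu⁻¹).val * ((T⁻¹).val * U * T.val) * Pu.val = !![0,0,0;1,0,0;0,0,0] := by
              rw [hE12, hPuv, hPui, mul_assoc, key1, ← mul_assoc, hPiP, one_mul]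
            rw [_root_.mul_inv_rev, Units.val_mul, Units.val_mul]
            simp only [← mul_assoc] at g1 ⊢
            exact g1.symm
          · rw [inv_inv]
            have hVW : (T⁻¹).val * V * T.val = !![0,b,0;0,0,0;0,d,0] := hWform
            have g2 : (Pu⁻¹).val * ((T⁻¹).val * V * T.val) * Pu.val = !![0,0,0;0,0,0;1,0,0] := by
              rw [hVW, hPuv, hPui, mul_assoc, key2, ← mul_assoc, hPiP, one_mul]
            rw [_root_.mul_inv_rev, Units.val_mul, Units.val_mul]
            simp only [← mul_assoc] at g2 ⊢
            exact g2.symm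
      · -- case C
        right; right
        have hd0 : d = 0 := by
          rcases mul_eq_zero.mp hcd with h | h
          · exact absurd h hc0
          · exact h
        rw [hd0] at hWform
        have hPPi : (!![1,0,0;0,1,0;0,-(b/c),c⁻¹] : Matrix (Fin 3) (Fin 3) k)
            * !![1,0,0;0,1,0;0,b,c] = 1 := by
          ext i j; fin_cases i <;> fin_cases j <;>
            (simp [Matrix.mul_apply, Fin.sum_univ_three, Matrix.one_apply, Fin.ext_iff]; try field_simp; try ring)
        have hPiP : (!![1,0,0;0,1,0;0,b,c] : Matrix (Fin 3) (Fin 3) k)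
            * !![1,0,0;0,1,0;0,-(b/c),c⁻¹] = 1 := by
          ext i j; fin_cases i <;> fin_cases j <;>
            (simp [Matrix.mul_apply, Fin.sum_univ_three, Matrix.one_apply, Fin.ext_iff]; try field_simp; try ring)
        set Pu : (Matrix (Fin 3) (Fin 3) k)ˣ :=
          ⟨!![1,0,0;0,1,0;0,-(b/c),c⁻¹], !![1,0,0;0,1,0;0,b,c], hPPi, hPiP⟩ with hPu
        have hPuv : Pu.val = !![1,0,0;0,1,0;0,-(b/c),c⁻¹] := rfl
        have hPui : (Pu⁻¹).val = !![1,0,0;0,1,0;0,b,c] := rfl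
        have key1 : (!![0,1,0;0,0,0;0,0,0] : Matrix (Fin 3) (Fin 3) k)
            * !![1,0,0;0,1,0;0,-(b/c),c⁻¹]
            = !![1,0,0;0,1,0;0,-(b/c),c⁻¹] * !![0,1,0;0,0,0;0,0,0] := by
          ext i j; fin_cases i <;> fin_cases j <;> simp [Matrix.mul_apply, Fin.sum_univ_three]
        have key2 : (!![0,b,c;0,0,0;0,0,0] : Matrix (Fin 3) (Fin 3) k)
            * !![1,0,0;0,1,0;0,-(b/c),c⁻¹]
            = !![1,0,0;0,1,0;0,-(b/c),c⁻¹] * !![0,0,1;0,0,0;0,0,0] := by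
          ext i j; fin_cases i <;> fin_cases j <;>
            (simp [Matrix.mul_apply, Fin.sum_univ_three]; try field_simp; try ring)
        refine ⟨(T * Pu)⁻¹, ?_, ?_⟩
        · rw [inv_inv]
          have g1 : (Pu⁻¹).val * ((T⁻¹).val * U * T.val) * Pu.val = !![0,1,0;0,0,0;0,0,0] := by
            rw [hE12, hPuv, hPui, mul_assoc, key1, ← mul_assoc, hPiP, one_mul]
          rw [_root_.mul_inv_rev, Units.val_mul, Units.val_mul]
          simp only [← mul_assoc] at g1 ⊢
          exact g1.symm
        · rw [inv_inv]
          have hVW : (T⁻¹).val * V * T.val = !![0,b,c;0,0,0;0,0,0] := hWform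
          have g2 : (Pu⁻¹).val * ((T⁻¹).val * V * T.val) * Pu.val = !![0,0,1;0,0,0;0,0,0] := by
            rw [hVW, hPuv, hPui, mul_assoc, key2, ← mul_assoc, hPiP, one_mul]
          rw [_root_.mul_inv_rev, Units.val_mul, Units.val_mul]
          simp only [← mul_assoc] at g2 ⊢
          exact g2.symm
  · -- cyclic case: A
    left
    obtain ⟨T, hUT⟩ := cubeZero_structure hUUU hU2
    have hJ : (T⁻¹).val * U * T.val = !![0,1,0;0,0,1;0,0,0] := conjI_eq T hUT
    have hWJ : ((T⁻¹).val * V * T.val) * !![0,1,0;0,0,1;0,0,0]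
        = !![0,1,0;0,0,1;0,0,0] * ((T⁻¹).val * V * T.val) := by
      rw [← hJ, conjI_mul, conjI_mul, hcomm]
    have hWW : ((T⁻¹).val * V * T.val) * ((T⁻¹).val * V * T.val) = 0 := by
      rw [conjI_mul, hVV, Matrix.mul_zero, Matrix.zero_mul]
    have hWform := centralizer_J hWJ hWW
    refine ⟨((T⁻¹).val * V * T.val) 0 2, T⁻¹, ?_, ?_⟩
    · rw [inv_inv]; exact hJ.symm
    · rw [inv_inv]; exact hWform.symm


end IndecompAux

/-- Classification of indecomposable 3-dimensional modules over
`R̂ = k[[u,v]]/(v² − u³)`.  Such a module is a pair of commuting nilpotent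
matrices `U, V ∈ Mat₃(k)` with `V² = U³`; indecomposability says the only
idempotent matrices commuting with `U` and `V` are `0` and `1`.  Then the pair
is simultaneously conjugate to exactly one of:
(1) `(J, θ·E₁₃)` for some `θ ∈ k` — the module `M_θ = R̂/(t³ + θ't⁴)`;
(2) `(E₂₁, E₃₁)` — the module `N = R̂/(t⁴,t⁵)`;
(3) `(E₁₂, E₁₃)` — the Matlis dual `N^♯` (transposed matrices). -/
theorem indecomposable_dim_three_classification (k : Type*) [Field k]
    [IsAlgClosed k] [CharZero k] (U V : Matrix (Fin 3) (Fin 3) k)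
    (hcomm : U * V = V * U) (hU : IsNilpotent U) (hV : IsNilpotent V)
    (hrel : V ^ 2 = U ^ 3)
    (hind : ∀ E : Matrix (Fin 3) (Fin 3) k,
      E * E = E → E * U = U * E → E * V = V * E → E = 0 ∨ E = 1) :
    let A : Prop := ∃ θ : k,
      SimConj U V !![0, 1, 0; 0, 0, 1; 0, 0, 0] (θ • !![0, 0, 1; 0, 0, 0; 0, 0, 0])
    let B : Prop :=
      SimConj U V !![0, 0, 0; 1, 0, 0; 0, 0, 0] !![0, 0, 0; 0, 0, 0; 1, 0, 0]
    let C : Prop :=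
      SimConj U V !![0, 1, 0; 0, 0, 0; 0, 0, 0] !![0, 0, 1; 0, 0, 0; 0, 0, 0]
    (A ∨ B ∨ C) ∧ ¬(A ∧ B) ∧ ¬(A ∧ C) ∧ ¬(B ∧ C) := by
  intro A B C
  refine ⟨?_, ?_, ?_, ?_⟩
  · rcases IndecompAux.indecomposable_dim_three_classification' U V hcomm hU hrel hind with
      ⟨θ, S, h1, h2⟩ | ⟨S, h1, h2⟩ | ⟨S, h1, h2⟩
    · exact Or.inl ⟨θ, S, h1, h2⟩
    · exact Or.inr (Or.inl ⟨S, h1, h2⟩)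
    · exact Or.inr (Or.inr ⟨S, h1, h2⟩)
  · rintro ⟨⟨θ, S, hA1, hA2⟩, T, hB1, hB2⟩
    have hBB : (!![0,0,0;1,0,0;0,0,0] : Matrix (Fin 3) (Fin 3) k)
        * !![0,0,0;1,0,0;0,0,0] = 0 := by
      ext i j; fin_cases i <;> fin_cases j <;> simp [Matrix.mul_apply, Fin.sum_univ_three, Matrix.vecHead, Matrix.vecTail]
    have hJJ := IndecompAux.sq_zero_of_conj hA1 hB1 hBB
    have := Matrix.ext_iff.mpr hJJ 0 2
    simp [Matrix.mul_apply, Fin.sum_univ_three, Matrix.vecHead, Matrix.vecTail] at this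
  · rintro ⟨⟨θ, S, hA1, hA2⟩, T, hC1, hC2⟩
    have hBB : (!![0,1,0;0,0,0;0,0,0] : Matrix (Fin 3) (Fin 3) k)
        * !![0,1,0;0,0,0;0,0,0] = 0 := by
      ext i j; fin_cases i <;> fin_cases j <;> simp [Matrix.mul_apply, Fin.sum_univ_three, Matrix.vecHead, Matrix.vecTail]
    have hJJ := IndecompAux.sq_zero_of_conj hA1 hC1 hBB
    have := Matrix.ext_iff.mpr hJJ 0 2
    simp [Matrix.mul_apply, Fin.sum_univ_three, Matrix.vecHead, Matrix.vecTail] at this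
  · rintro ⟨⟨S, hS1, hS2⟩, T, hT1, hT2⟩
    have hU' : U = (S⁻¹).val * !![0,0,0;1,0,0;0,0,0] * S.val := IndecompAux.eq_conj_symm hS1
    have hV' : V = (S⁻¹).val * !![0,0,0;0,0,0;1,0,0] * S.val := IndecompAux.eq_conj_symm hS2
    have hconv : ∀ X : Matrix (Fin 3) (Fin 3) k,
        T.val * ((S⁻¹).val * X * S.val) * (T⁻¹).val
          = (T * S⁻¹).val * X * ((T * S⁻¹)⁻¹).val := by
      intro X
      simp only [Units.val_mul, _root_.mul_inv_rev, inv_inv, mul_assoc]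
    have hE12' : (!![0,1,0;0,0,0;0,0,0] : Matrix (Fin 3) (Fin 3) k)
        = (T * S⁻¹).val * !![0,0,0;1,0,0;0,0,0] * ((T * S⁻¹)⁻¹).val := by
      rw [← hconv, ← hU', ← hT1]
    have hE13' : (!![0,0,1;0,0,0;0,0,0] : Matrix (Fin 3) (Fin 3) k)
        = (T * S⁻¹).val * !![0,0,0;0,0,0;1,0,0] * ((T * S⁻¹)⁻¹).val := by
      rw [← hconv, ← hV', ← hT2]
    have hsplit : (!![0,0,0;0,0,0;1,0,0] : Matrix (Fin 3) (Fin 3) k)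
        = !![0,0,0;0,0,0;0,1,0] * !![0,0,0;1,0,0;0,0,0] := by
      ext i j; fin_cases i <;> fin_cases j <;> simp [Matrix.mul_apply, Fin.sum_univ_three, Matrix.vecHead, Matrix.vecTail]
    have key : (!![0,0,1;0,0,0;0,0,0] : Matrix (Fin 3) (Fin 3) k)
        = ((T * S⁻¹).val * !![0,0,0;0,0,0;0,1,0] * ((T * S⁻¹)⁻¹).val)
          * !![0,1,0;0,0,0;0,0,0] := by
      rw [hE13', hsplit, ← IndecompAux.conj_mul_units (T * S⁻¹), ← hE12']
    have := Matrix.ext_iff.mpr key 0 2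
    simp [Matrix.mul_apply, Fin.sum_univ_three, Matrix.vecHead, Matrix.vecTail] at this
end

section
/- Let g ∈ ℂ[[z]] be nonzero. The Laurent series h = (2gg'' − (g')²)/g² is regular at z = 0 (i.e. lies in ℂ[[z]]) if and only if either g(0) ≠ 0, or g = z²·g̃ with g̃ ∈ ℂ[[z]], g̃(0) ≠ 0 and g̃'(0) = 0. -/
open PowerSeries

section Aux

open Finset

private lemma div_iff_dvd_aux (Nn g : PowerSeries ℂ) (hg : g ≠ 0) :
    (∃ p : PowerSeries ℂ, ((Nn : PowerSeries ℂ) : LaurentSeries ℂ)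
        / ((g : PowerSeries ℂ) : LaurentSeries ℂ) ^ 2
      = ((p : PowerSeries ℂ) : LaurentSeries ℂ)) ↔ g ^ 2 ∣ Nn := by
  have hinj : Function.Injective (HahnSeries.ofPowerSeries ℤ ℂ) :=
    HahnSeries.ofPowerSeries_injective
  have hgL : ((g : PowerSeries ℂ) : LaurentSeries ℂ) ≠ 0 := by
    intro h
    exact hg (hinj (by simpa using h))
  have hg2 : ((g : PowerSeries ℂ) : LaurentSeries ℂ) ^ 2 ≠ 0 := pow_ne_zero _ hgL
  constructor
  · rintro ⟨p, hp⟩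
    refine ⟨p, hinj ?_⟩
    rw [div_eq_iff hg2] at hp
    show ((Nn : PowerSeries ℂ) : LaurentSeries ℂ) = ((g ^ 2 * p : PowerSeries ℂ) : LaurentSeries ℂ)
    push_cast
    rw [hp]; ring
  · rintro ⟨q, rfl⟩
    refine ⟨q, ?_⟩
    push_cast
    rw [mul_comm, mul_div_assoc, div_self hg2, mul_one]

private lemma coeffN_aux (g : PowerSeries ℂ) (m : ℕ) :
    PowerSeries.coeff m (2 * g * (PowerSeries.derivative ℂ (PowerSeries.derivative ℂ g))
        - (PowerSeries.derivative ℂ g) ^ 2)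
    = ∑ p ∈ antidiagonal m,
        (2 * (PowerSeries.coeff p.1 g * (PowerSeries.coeff (p.2+2) g * ((p.2:ℂ)+2) * ((p.2:ℂ)+1)))
          - (PowerSeries.coeff (p.1+1) g * ((p.1:ℂ)+1)) * (PowerSeries.coeff (p.2+1) g * ((p.2:ℂ)+1))) := by
  have h : 2 * g * (PowerSeries.derivative ℂ (PowerSeries.derivative ℂ g))
        - (PowerSeries.derivative ℂ g) ^ 2
      = g * (PowerSeries.derivative ℂ (PowerSeries.derivative ℂ g))
        + g * (PowerSeries.derivative ℂ (PowerSeries.derivative ℂ g))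
        - (PowerSeries.derivative ℂ g) * (PowerSeries.derivative ℂ g) := by ring
  rw [h, map_sub, map_add, coeff_mul, coeff_mul, ← Finset.sum_add_distrib,
    ← Finset.sum_sub_distrib]
  refine Finset.sum_congr rfl fun p _ => ?_
  simp only [coeff_derivative]
  push_cast
  ring

private lemma core_aux (g : PowerSeries ℂ) (n : ℕ)
    (hlow : ∀ i, i < n → PowerSeries.coeff i g = 0)
    (hcn : PowerSeries.coeff n g ≠ 0) :
    (∀ i, i < 2*n → PowerSeries.coeff i
        (2 * g * (PowerSeries.derivative ℂ (PowerSeries.derivative ℂ g))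
          - (PowerSeries.derivative ℂ g) ^ 2) = 0)
      ↔ (n = 0 ∨ (n = 2 ∧ PowerSeries.coeff 3 g = 0)) := by
  constructor
  · intro hall
    rcases Nat.eq_zero_or_pos n with h0 | hpos
    · exact Or.inl h0
    rcases eq_or_ne n 1 with h1 | hn1
    · exfalso
      have h := hall 0 (by omega)
      rw [coeffN_aux] at h
      rw [Finset.Nat.sum_antidiagonal_eq_sum_range_succ_mk] at h
      have hg0 : PowerSeries.coeff 0 g = 0 := hlow 0 (by omega)
      have hg1 : PowerSeries.coeff 1 g ≠ 0 := h1 ▸ hcn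
      simp only [Finset.sum_range_succ, Finset.sum_range_zero, hg0] at h
      apply hg1
      have : PowerSeries.coeff 1 g * PowerSeries.coeff 1 g = 0 := by
        push_cast at h; linear_combination -h
      exact (mul_self_eq_zero).mp this
    rcases eq_or_ne n 2 with h2 | hn2
    · right
      refine ⟨h2, ?_⟩
      have h := hall 3 (by omega)
      rw [coeffN_aux, Finset.Nat.sum_antidiagonal_eq_sum_range_succ_mk] at h
      have hg0 : PowerSeries.coeff 0 g = 0 := hlow 0 (by omega)
      have hg1 : PowerSeries.coeff 1 g = 0 := hlow 1 (by omega)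
      have hg2 : PowerSeries.coeff 2 g ≠ 0 := h2 ▸ hcn
      simp only [Finset.sum_range_succ, Finset.sum_range_zero, hg0, hg1] at h
      have : PowerSeries.coeff 2 g * PowerSeries.coeff 3 g = 0 := by
        push_cast at h; norm_num at h; linear_combination h/4
      rcases mul_eq_zero.mp this with h' | h'
      · exact absurd h' hg2
      · exact h'
    · -- n ≥ 3
      exfalso
      have hn3 : 3 ≤ n := by omega
      have h := hall (2*n-2) (by omega)
      rw [coeffN_aux, Finset.sum_sub_distrib] at h
      have e1 : ∑ p ∈ antidiagonal (2*n-2),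
          2 * (PowerSeries.coeff p.1 g * (PowerSeries.coeff (p.2+2) g * ((p.2:ℂ)+2) * ((p.2:ℂ)+1)))
          = 2 * (PowerSeries.coeff n g * (PowerSeries.coeff n g * ((n:ℂ)) * ((n:ℂ)-1))) := by
        rw [Finset.sum_eq_single_of_mem (n, n-2)
          (Finset.HasAntidiagonal.mem_antidiagonal.mpr (by omega))]
        · have e2 : n - 2 + 2 = n := by omega
          rw [e2]
          have c1 : ((n-2:ℕ):ℂ) + 2 = (n:ℂ) := by
            have : ((n-2:ℕ):ℂ) = (n:ℂ) - 2 := by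
              push_cast [Nat.cast_sub (by omega : 2 ≤ n)]; ring
            rw [this]; ring
          have c2 : ((n-2:ℕ):ℂ) + 1 = (n:ℂ) - 1 := by
            have : ((n-2:ℕ):ℂ) = (n:ℂ) - 2 := by
              push_cast [Nat.cast_sub (by omega : 2 ≤ n)]; ring
            rw [this]; ring
          rw [c1, c2]
        · rintro ⟨i, j⟩ hmem hne
          have hij : i + j = 2*n-2 := Finset.HasAntidiagonal.mem_antidiagonal.mp hmem
          rcases Nat.lt_or_ge i n with hi | hi
          · rw [hlow i hi]; ring
          · have : j + 2 < n := by
              rcases Nat.lt_or_ge (j+2) n with h' | h'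
              · exact h'
              · exfalso; apply hne
                have : i = n := by omega
                have : j = n - 2 := by omega
                simp_all
            rw [hlow (j+2) this]; ring
      have e2 : ∑ p ∈ antidiagonal (2*n-2),
          (PowerSeries.coeff (p.1+1) g * ((p.1:ℂ)+1)) * (PowerSeries.coeff (p.2+1) g * ((p.2:ℂ)+1))
          = (PowerSeries.coeff n g * (n:ℂ)) * (PowerSeries.coeff n g * (n:ℂ)) := by
        rw [Finset.sum_eq_single_of_mem (n-1, n-1)
          (Finset.HasAntidiagonal.mem_antidiagonal.mpr (by omega))]
        · have e3 : n - 1 + 1 = n := by omega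
          rw [e3]
          have c1 : ((n-1:ℕ):ℂ) + 1 = (n:ℂ) := by
            push_cast [Nat.cast_sub (by omega : 1 ≤ n)]; ring
          rw [c1]
        · rintro ⟨i, j⟩ hmem hne
          have hij : i + j = 2*n-2 := Finset.HasAntidiagonal.mem_antidiagonal.mp hmem
          rcases Nat.lt_or_ge (i+1) n with hi | hi
          · rw [hlow (i+1) hi]; ring
          · have : j + 1 < n := by
              rcases Nat.lt_or_ge (j+1) n with h' | h'
              · exact h'
              · exfalso; apply hne
                have : i = n - 1 := by omega
                have : j = n - 1 := by omega
                simp_all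
            rw [hlow (j+1) this]; ring
      rw [e1, e2] at h
      have hne : (PowerSeries.coeff n g) * (PowerSeries.coeff n g)
          * ((n:ℂ) * ((n:ℂ) - 2)) = 0 := by
        linear_combination h
      have hnn : (n:ℂ) ≠ 0 := Nat.cast_ne_zero.mpr (by omega)
      have hnn2 : (n:ℂ) - 2 ≠ 0 := by
        intro hc
        have h2' : (n:ℂ) = 2 := sub_eq_zero.mp hc
        exact hn2 (by exact_mod_cast h2')
      rcases mul_eq_zero.mp hne with h' | h'
      · exact hcn ((mul_self_eq_zero).mp h')
      · rcases mul_eq_zero.mp h' with h'' | h''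
        · exact hnn h''
        · exact hnn2 h''
  · rintro (h0 | ⟨h2, h3⟩)
    · intro i hi; omega
    · intro i hi
      have hg0 : PowerSeries.coeff 0 g = 0 := hlow 0 (by omega)
      have hg1 : PowerSeries.coeff 1 g = 0 := hlow 1 (by omega)
      rw [coeffN_aux, Finset.Nat.sum_antidiagonal_eq_sum_range_succ_mk]
      subst h2
      interval_cases i <;>
        simp [Finset.sum_range_succ, hg0, hg1, h3] <;> ring

end Aux

/-- Let `g ∈ ℂ[[z]]` be nonzero.  The Laurent series
`h = (2gg'' − (g')²)/g²` (the quotient taken in `ℂ((z))`) is regular at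
`z = 0`, i.e. comes from a power series, if and only if `g(0) ≠ 0` or
`g = z²·g̃` with `g̃(0) ≠ 0` and `g̃'(0) = 0`. -/
theorem laurent_regularity_criterion (g : PowerSeries ℂ) (hg : g ≠ 0) :
    (∃ p : PowerSeries ℂ,
      ((2 * g * (PowerSeries.derivative ℂ (PowerSeries.derivative ℂ g))
          - (PowerSeries.derivative ℂ g) ^ 2 : PowerSeries ℂ) : LaurentSeries ℂ)
        / ((g : PowerSeries ℂ) : LaurentSeries ℂ) ^ 2
        = ((p : PowerSeries ℂ) : LaurentSeries ℂ)) ↔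
    (PowerSeries.constantCoeff g ≠ 0 ∨
      ∃ gt : PowerSeries ℂ, g = PowerSeries.X ^ 2 * gt ∧
        PowerSeries.constantCoeff gt ≠ 0 ∧ PowerSeries.coeff 1 gt = 0) := by
  classical
  have hord : order g < ⊤ := order_finite_iff_ne_zero.2 hg
  set n : ℕ := (order g).lift hord with hn
  have hordn : order g = (n : ℕ∞) := (ENat.coe_lift _ hord).symm
  set u := divXPowOrder g with hu
  have hgu : X ^ n * u = g := by
    have hnt : n = g.order.toNat := by rw [hordn, ENat.toNat_coe]
    rw [hnt]; exact X_pow_order_mul_divXPowOrder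
  have hlow : ∀ i, i < n → PowerSeries.coeff i g = 0 := fun i hi =>
    coeff_of_lt_order i (by rw [hordn]; exact_mod_cast hi)
  have hcn : PowerSeries.coeff n g ≠ 0 := by
    have := coeff_order hg; rwa [hordn, ENat.toNat_coe] at this
  have hcoeffg : ∀ d, PowerSeries.coeff (d + n) g = PowerSeries.coeff d u := fun d => by
    rw [← hgu, coeff_X_pow_mul]
  have hu0 : constantCoeff u ≠ 0 := by
    have := hcoeffg 0
    rw [zero_add] at this
    rw [← coeff_zero_eq_constantCoeff_apply, ← this]
    exact hcn
  have hunit : IsUnit u := isUnit_iff_constantCoeff.mpr (isUnit_iff_ne_zero.mpr hu0)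
  rw [div_iff_dvd_aux _ g hg]
  have hdvd_iff : (g ^ 2 ∣ (2 * g * (PowerSeries.derivative ℂ (PowerSeries.derivative ℂ g))
          - (PowerSeries.derivative ℂ g) ^ 2)
      ↔ ∀ i, i < 2*n → PowerSeries.coeff i
        (2 * g * (PowerSeries.derivative ℂ (PowerSeries.derivative ℂ g))
          - (PowerSeries.derivative ℂ g) ^ 2) = 0) := by
    rw [← X_pow_dvd_iff]
    have h1 : g ^ 2 = X ^ (2*n) * u ^ 2 := by rw [← hgu, two_mul, pow_add]; ring
    rw [h1, (hunit.pow 2).mul_right_dvd]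
  rw [hdvd_iff, core_aux g n hlow hcn]
  constructor
  · rintro (h0 | ⟨h2, h3⟩)
    · left
      rw [← coeff_zero_eq_constantCoeff_apply]
      have := hcoeffg 0
      rw [h0] at this
      simp only [add_zero] at this
      rw [this, coeff_zero_eq_constantCoeff_apply]
      exact hu0
    · right
      refine ⟨u, by rw [← hgu, h2], hu0, ?_⟩
      have := hcoeffg 1
      rw [h2] at this
      rw [← this]
      exact h3
  · rintro (h0 | ⟨gt, hgt, hgt0, hgt1⟩)
    · left
      by_contra hne
      exact h0 (by rw [← coeff_zero_eq_constantCoeff_apply]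
                   exact hlow 0 (Nat.pos_of_ne_zero hne))
    · right
      have h2 : order g = ((2:ℕ) : ℕ∞) := by
        rw [hgt]
        apply order_eq_nat.mpr
        constructor
        · rw [show (2:ℕ) = 0 + 2 from rfl, coeff_X_pow_mul]
          simpa using hgt0
        · intro i hi
          rw [coeff_X_pow_mul']
          simp only [if_neg (by omega : ¬ 2 ≤ i)]
      have hn2 : n = 2 := by
        have : (n : ℕ∞) = ((2:ℕ) : ℕ∞) := by rw [← hordn, h2]
        exact_mod_cast this
      refine ⟨hn2, ?_⟩
      have h13 : PowerSeries.coeff (1 + 2) (X ^ 2 * gt) = PowerSeries.coeff 1 gt :=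
        coeff_X_pow_mul gt 2 1
      rw [hgt]
      simpa using h13.trans hgt1
end

section
/- Let R = k[x,y]/(y² − x³ − λx²) with λ ≠ 0 (nodal cubic) and singular point given by the maximal ideal m = (x,y). Choose ρ ∈ k with ρ² = λ. In the completion R̂ of R at m there exist elements u₊, u₋ with u₊u₋ = 0 and R̂ ≅ k[[u₊,u₋]]/(u₊u₋), such that R̂/(x², y + ρx) ≅ k[[u₊,u₋]]/(u₊u₋, u₊, u₋²) and R̂/(x², y − ρx) ≅ k[[u₊,u₋]]/(u₊u₋, u₋, u₊²). In particular the modules R̂/(x², y + ρx) and R̂/(x², y − ρx) are not isomorphic. -/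
open MvPowerSeries

/-- The complete local ring of the nodal cubic `y² = x³ + λx²` at its singular
point: `R̂ = k[[x,y]]/(y² − x³ − λx²)`. -/
noncomputable abbrev NodalCompletion (k : Type*) [Field k] (lam : k) : Type _ :=
  MvPowerSeries (Fin 2) k ⧸
    (Ideal.span {(MvPowerSeries.X 1 : MvPowerSeries (Fin 2) k) ^ 2
      - MvPowerSeries.X 0 ^ 3
      - (MvPowerSeries.C lam : MvPowerSeries (Fin 2) k) * MvPowerSeries.X 0 ^ 2})

/-- The ring `k[[u₊,u₋]]/(u₊u₋)`. -/
noncomputable abbrev NodeModel (k : Type*) [Field k] : Type _ :=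
  MvPowerSeries (Fin 2) k ⧸
    (Ideal.span {(MvPowerSeries.X 0 : MvPowerSeries (Fin 2) k) * MvPowerSeries.X 1})


open Finset

namespace NodalAux

variable {k : Type*} [Field k]


/-- exponent pair as a finsupp -/
noncomputable def fe (m n : ℕ) : Fin 2 →₀ ℕ := Finsupp.single 0 m + Finsupp.single 1 n

@[simp] lemma fe_apply_zero (m n : ℕ) : fe m n 0 = m := by
  simp [fe, Finsupp.single_apply]

@[simp] lemma fe_apply_one (m n : ℕ) : fe m n 1 = n := by
  simp [fe, Finsupp.single_apply, Fin.ext_iff]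

lemma fe_eta (d : Fin 2 →₀ ℕ) : fe (d 0) (d 1) = d := by
  ext i
  fin_cases i <;> simp

lemma fe_eq_iff {m n m' n' : ℕ} : fe m n = fe m' n' ↔ m = m' ∧ n = n' := by
  constructor
  · intro h
    constructor
    · have := congrArg (fun e => e 0) h; simpa using this
    · have := congrArg (fun e => e 1) h; simpa using this
  · rintro ⟨rfl, rfl⟩; rfl

lemma fe_add (m n m' n' : ℕ) : fe m n + fe m' n' = fe (m + m') (n + n') := by
  ext i
  fin_cases i <;> simp [Finsupp.add_apply]

lemma degree_two (d : Fin 2 →₀ ℕ) : Finsupp.degree d = d 0 + d 1 := by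
  rw [Finsupp.degree_eq_sum]
  exact Fin.sum_univ_two d

lemma one_le_order {f : MvPowerSeries (Fin 2) k} (hf : constantCoeff f = 0) :
    1 ≤ f.order := by
  have := nat_le_order (f := f) (n := 1) ?_
  · exact_mod_cast this
  · intro d hd
    have hd0 : d = 0 := by
      have : Finsupp.degree d = 0 := by omega
      exact (Finsupp.degree_eq_zero_iff _).mp this
    rw [hd0, coeff_zero_eq_constantCoeff]
    exact hf

lemma le_order_pow {f : MvPowerSeries (Fin 2) k} (hf : constantCoeff f = 0) (m : ℕ) :
    (m : ℕ∞) ≤ (f ^ m).order := by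
  induction m with
  | zero => simp
  | succ m ih =>
    have h1 : ((m : ℕ∞) + 1 : ℕ∞) ≤ (f ^ m).order + f.order :=
      add_le_add ih (one_le_order hf)
    have h2 : (f ^ m).order + f.order ≤ ((f ^ m) * f).order := le_order_mul
    rw [pow_succ]
    calc ((m + 1 : ℕ) : ℕ∞) = (m : ℕ∞) + 1 := by push_cast; rfl
    _ ≤ _ := h1.trans h2

/-- power product -/
noncomputable def pp (P : Fin 2 → MvPowerSeries (Fin 2) k) (p : ℕ × ℕ) : MvPowerSeries (Fin 2) k := P 0 ^ p.1 * P 1 ^ p.2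

lemma coeff_pp_zero {P : Fin 2 → MvPowerSeries (Fin 2) k} (hP : ∀ i, constantCoeff (P i) = 0)
    {d : Fin 2 →₀ ℕ} {p : ℕ × ℕ} (h : d 0 + d 1 < p.1 + p.2) :
    coeff d (pp P p) = 0 := by
  apply coeff_of_lt_order
  rw [degree_two]
  calc ((d 0 + d 1 : ℕ) : ℕ∞) < ((p.1 + p.2 : ℕ) : ℕ∞) := by exact_mod_cast h
  _ = (p.1 : ℕ∞) + (p.2 : ℕ∞) := by push_cast; rfl
  _ ≤ (P 0 ^ p.1).order + (P 1 ^ p.2).order :=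
      add_le_add (le_order_pow (hP 0) p.1) (le_order_pow (hP 1) p.2)
  _ ≤ _ := le_order_mul

/-- substitution of `P 0, P 1` for the two variables in `f` -/
noncomputable def substFun (P : Fin 2 → MvPowerSeries (Fin 2) k) (f : MvPowerSeries (Fin 2) k) : MvPowerSeries (Fin 2) k :=
  fun d => ∑ p ∈ range (d 0 + d 1 + 1) ×ˢ range (d 0 + d 1 + 1),
    coeff (fe p.1 p.2) f * coeff d (pp P p)

lemma coeff_substFun {P : Fin 2 → MvPowerSeries (Fin 2) k} (hP : ∀ i, constantCoeff (P i) = 0)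
    (f : MvPowerSeries (Fin 2) k) (d : Fin 2 →₀ ℕ) {N : ℕ} (hN : d 0 + d 1 ≤ N) :
    coeff d (substFun P f) =
      ∑ p ∈ range (N + 1) ×ˢ range (N + 1),
        coeff (fe p.1 p.2) f * coeff d (pp P p) := by
  have : coeff d (substFun P f) =
      ∑ p ∈ range (d 0 + d 1 + 1) ×ˢ range (d 0 + d 1 + 1),
        coeff (fe p.1 p.2) f * coeff d (pp P p) := rfl
  rw [this]
  apply Finset.sum_subset
  · exact Finset.product_subset_product (Finset.range_subset_range.2 (by omega))
      (Finset.range_subset_range.2 (by omega))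
  · intro x hx hx'
    simp only [Finset.mem_product, Finset.mem_range] at hx hx'
    have : d 0 + d 1 < x.1 + x.2 := by omega
    rw [coeff_pp_zero hP this, mul_zero]

lemma substFun_def {P : Fin 2 → MvPowerSeries (Fin 2) k} (f : MvPowerSeries (Fin 2) k) (d : Fin 2 →₀ ℕ) :
    coeff d (substFun P f) =
      ∑ p ∈ range (d 0 + d 1 + 1) ×ˢ range (d 0 + d 1 + 1),
        coeff (fe p.1 p.2) f * coeff d (pp P p) := rfl

section Hom

variable {P : Fin 2 → MvPowerSeries (Fin 2) k} (hP : ∀ i, constantCoeff (P i) = 0)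

lemma substFun_add (f g : MvPowerSeries (Fin 2) k) :
    substFun P (f + g) = substFun P f + substFun P g := by
  ext d
  rw [map_add, substFun_def, substFun_def, substFun_def, ← Finset.sum_add_distrib]
  apply Finset.sum_congr rfl
  intro p _
  rw [map_add, add_mul]

lemma substFun_smul (a : k) (f : MvPowerSeries (Fin 2) k) :
    substFun P (a • f) = a • substFun P f := by
  ext d
  rw [map_smul, substFun_def, substFun_def, smul_eq_mul, Finset.mul_sum]
  apply Finset.sum_congr rfl
  intro p _
  rw [map_smul, smul_eq_mul, mul_assoc]

include hP in
lemma substFun_C (a : k) : substFun P (C a) = C a := by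
  ext d
  rw [substFun_def, Finset.sum_eq_single (0, 0)]
  · have h1 : fe 0 0 = 0 := by simp [fe]
    rw [h1]
    simp only [coeff_C, pp, pow_zero, mul_one, coeff_one]
    split_ifs <;> simp
  · intro q _ hq
    have : ¬(fe q.1 q.2 = 0) := by
      intro h
      have h0 := congrArg (fun e => e 0) h
      have h1 := congrArg (fun e => e 1) h
      simp only [fe_apply_zero, fe_apply_one, Finsupp.coe_zero, Pi.zero_apply] at h0 h1
      exact hq (Prod.ext h0 h1)
    rw [coeff_C, if_neg this, zero_mul]
  · intro h
    exact absurd (by simp [Finset.mem_product]) h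

include hP in
lemma substFun_one : substFun P 1 = 1 := by
  have := substFun_C hP (1 : k)
  rwa [map_one] at this

include hP in
lemma substFun_X0 : substFun P (X 0) = P 0 := by
  ext d
  rw [coeff_substFun hP _ d (N := d 0 + d 1 + 1) (by omega), Finset.sum_eq_single (1, 0)]
  · have h1 : fe 1 0 = Finsupp.single (0 : Fin 2) 1 := by simp [fe]
    rw [h1, X, coeff_monomial_same, one_mul]
    simp [pp]
  · intro q _ hq
    rw [X, coeff_monomial]
    have : ¬(fe q.1 q.2 = Finsupp.single (0 : Fin 2) 1) := by
      intro h
      have h0 := congrArg (fun e => e 0) h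
      have h1 := congrArg (fun e => e 1) h
      simp only [fe_apply_zero, fe_apply_one, Finsupp.single_apply] at h0 h1
      simp only [Fin.isValue, if_true, if_pos rfl] at h0 h1
      norm_num [Fin.ext_iff] at h0 h1
      exact hq (Prod.ext h0 h1)
    rw [if_neg this, zero_mul]
  · intro h
    exact absurd (by simp only [Finset.mem_product, Finset.mem_range]; omega) h

include hP in
lemma substFun_X1 : substFun P (X 1) = P 1 := by
  ext d
  rw [coeff_substFun hP _ d (N := d 0 + d 1 + 1) (by omega), Finset.sum_eq_single (0, 1)]
  · have h1 : fe 0 1 = Finsupp.single (1 : Fin 2) 1 := by simp [fe]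
    rw [h1, X, coeff_monomial_same, one_mul]
    simp [pp]
  · intro q _ hq
    rw [X, coeff_monomial]
    have : ¬(fe q.1 q.2 = Finsupp.single (1 : Fin 2) 1) := by
      intro h
      have h0 := congrArg (fun e => e 0) h
      have h1 := congrArg (fun e => e 1) h
      simp only [fe_apply_zero, fe_apply_one, Finsupp.single_apply] at h0 h1
      simp only [Fin.isValue, if_true, if_pos rfl] at h0 h1
      norm_num [Fin.ext_iff] at h0 h1
      exact hq (Prod.ext h0 h1)
    rw [if_neg this, zero_mul]
  · intro h
    exact absurd (by simp only [Finset.mem_product, Finset.mem_range]; omega) h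

end Hom

lemma coeff_mul_fe (f g : MvPowerSeries (Fin 2) k) (r1 r2 : ℕ) :
    coeff (fe r1 r2) (f * g) =
      ∑ a ∈ Finset.HasAntidiagonal.antidiagonal r1 ×ˢ Finset.HasAntidiagonal.antidiagonal r2,
        coeff (fe a.1.1 a.2.1) f * coeff (fe a.1.2 a.2.2) g := by
  rw [coeff_mul]
  refine Finset.sum_nbij' (fun x => ((x.1 0, x.2 0), (x.1 1, x.2 1)))
    (fun a => (fe a.1.1 a.2.1, fe a.1.2 a.2.2)) ?_ ?_ ?_ ?_ ?_
  · intro x hx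
    rw [Finset.HasAntidiagonal.mem_antidiagonal] at hx
    have h0 : x.1 0 + x.2 0 = r1 := by
      have := congrArg (fun e => e 0) hx
      simpa using this
    have h1 : x.1 1 + x.2 1 = r2 := by
      have := congrArg (fun e => e 1) hx
      simpa using this
    simp [Finset.mem_product, Finset.HasAntidiagonal.mem_antidiagonal, h0, h1]
  · intro a ha
    simp only [Finset.mem_product, Finset.HasAntidiagonal.mem_antidiagonal] at ha
    rw [Finset.HasAntidiagonal.mem_antidiagonal]
    rw [fe_add, ha.1, ha.2]
  · intro x _
    simp [fe_eta]
  · intro a _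
    simp
  · intro x _
    simp [fe_eta]

lemma pp_mul_pp (P : Fin 2 → MvPowerSeries (Fin 2) k) (p q : ℕ × ℕ) :
    pp P p * pp P q = pp P (p.1 + q.1, p.2 + q.2) := by
  simp only [pp, pow_add]
  ring

variable {P : Fin 2 → MvPowerSeries (Fin 2) k}

lemma substFun_mul (hP : ∀ i, constantCoeff (P i) = 0)
    (f g : MvPowerSeries (Fin 2) k) :
    substFun P (f * g) = substFun P f * substFun P g := by
  ext d
  set D := d 0 + d 1 with hD
  set T : Finset (ℕ × ℕ) := range (D + 1) ×ˢ range (D + 1) with hT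
  have key : ∀ pq : (ℕ × ℕ) × (ℕ × ℕ),
      coeff (fe pq.1.1 pq.1.2) f * coeff (fe pq.2.1 pq.2.2) g *
        coeff d (pp P (pq.1.1 + pq.2.1, pq.1.2 + pq.2.2)) =
      coeff (fe pq.1.1 pq.1.2) f * coeff (fe pq.2.1 pq.2.2) g *
        coeff d (pp P pq.1 * pp P pq.2) := by
    intro pq; rw [pp_mul_pp]
  -- RHS
  have hRHS : coeff d (substFun P f * substFun P g) =
      ∑ pq ∈ T ×ˢ T, coeff (fe pq.1.1 pq.1.2) f * coeff (fe pq.2.1 pq.2.2) g *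
        coeff d (pp P pq.1 * pp P pq.2) := by
    rw [coeff_mul]
    have step1 : ∀ x ∈ Finset.HasAntidiagonal.antidiagonal d,
        coeff x.1 (substFun P f) * coeff x.2 (substFun P g) =
        ∑ pq ∈ T ×ˢ T, coeff (fe pq.1.1 pq.1.2) f * coeff (fe pq.2.1 pq.2.2) g *
          (coeff x.1 (pp P pq.1) * coeff x.2 (pp P pq.2)) := by
      intro x hx
      rw [Finset.HasAntidiagonal.mem_antidiagonal] at hx
      have hx1 : x.1 0 + x.1 1 ≤ D := by
        have e0 : x.1 0 + x.2 0 = d 0 := by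
          have := congrArg (fun e => e 0) hx; simpa using this
        have e1 : x.1 1 + x.2 1 = d 1 := by
          have := congrArg (fun e => e 1) hx; simpa using this
        omega
      have hx2 : x.2 0 + x.2 1 ≤ D := by
        have e0 : x.1 0 + x.2 0 = d 0 := by
          have := congrArg (fun e => e 0) hx; simpa using this
        have e1 : x.1 1 + x.2 1 = d 1 := by
          have := congrArg (fun e => e 1) hx; simpa using this
        omega
      rw [coeff_substFun hP f x.1 hx1, coeff_substFun hP g x.2 hx2]
      rw [Finset.sum_mul_sum]
      rw [← Finset.sum_product']
      apply Finset.sum_congr rfl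
      intro pq _
      ring
    rw [Finset.sum_congr rfl step1, Finset.sum_comm]
    apply Finset.sum_congr rfl
    intro pq _
    rw [← Finset.mul_sum, coeff_mul]
  rw [hRHS]
  -- LHS
  rw [coeff_substFun hP (f * g) d (le_refl D)]
  have step2 : ∀ r : ℕ × ℕ,
      coeff (fe r.1 r.2) (f * g) * coeff d (pp P r) =
      ∑ a ∈ Finset.HasAntidiagonal.antidiagonal r.1 ×ˢ Finset.HasAntidiagonal.antidiagonal r.2,
        coeff (fe a.1.1 a.2.1) f * coeff (fe a.1.2 a.2.2) g * coeff d (pp P r) := by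
    intro r
    rw [coeff_mul_fe, Finset.sum_mul]
  rw [Finset.sum_congr rfl (fun r _ => step2 r)]
  rw [Finset.sum_sigma']
  -- now reindex
  set V : Finset ((ℕ × ℕ) × (ℕ × ℕ)) :=
    (T ×ˢ T).filter (fun pq => pq.1.1 + pq.2.1 ≤ D ∧ pq.1.2 + pq.2.2 ≤ D) with hV
  have hLHS : (∑ x ∈ T.sigma (fun r => Finset.HasAntidiagonal.antidiagonal r.1 ×ˢ Finset.HasAntidiagonal.antidiagonal r.2),
        coeff (fe x.2.1.1 x.2.2.1) f * coeff (fe x.2.1.2 x.2.2.2) g *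
          coeff d (pp P x.1)) =
      ∑ pq ∈ V, coeff (fe pq.1.1 pq.1.2) f * coeff (fe pq.2.1 pq.2.2) g *
        coeff d (pp P (pq.1.1 + pq.2.1, pq.1.2 + pq.2.2)) := by
    refine Finset.sum_nbij' (fun x => ((x.2.1.1, x.2.2.1), (x.2.1.2, x.2.2.2)))
      (fun pq => ⟨(pq.1.1 + pq.2.1, pq.1.2 + pq.2.2), ((pq.1.1, pq.2.1), (pq.1.2, pq.2.2))⟩)
      ?_ ?_ ?_ ?_ ?_
    · rintro ⟨r, a⟩ hx
      simp only [Finset.mem_sigma, Finset.mem_product, Finset.HasAntidiagonal.mem_antidiagonal,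
        Finset.mem_range, hT] at hx
      simp only [hV, Finset.mem_filter, Finset.mem_product, Finset.mem_range, hT]
      obtain ⟨⟨hr1, hr2⟩, ha1, ha2⟩ := hx
      refine ⟨⟨⟨?_, ?_⟩, ?_, ?_⟩, ?_, ?_⟩ <;> omega
    · rintro pq hpq
      simp only [hV, Finset.mem_filter, Finset.mem_product, Finset.mem_range, hT] at hpq
      simp only [Finset.mem_sigma, Finset.mem_product, Finset.HasAntidiagonal.mem_antidiagonal,
        Finset.mem_range, hT]
      obtain ⟨⟨⟨h1, h2⟩, h3, h4⟩, h5, h6⟩ := hpq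
      refine ⟨⟨?_, ?_⟩, ?_, ?_⟩ <;> first | omega | trivial | rfl
    · rintro ⟨⟨r1', r2'⟩, ⟨⟨m1, m2⟩, n1, n2⟩⟩ hx
      simp only [Finset.mem_sigma, Finset.mem_product, Finset.HasAntidiagonal.mem_antidiagonal] at hx
      obtain ⟨-, ha1, ha2⟩ := hx
      simp only at ha1 ha2 ⊢
      rw [ha1, ha2]
    · rintro pq _
      rfl
    · rintro ⟨r, a⟩ hx
      simp only [Finset.mem_sigma, Finset.mem_product, Finset.HasAntidiagonal.mem_antidiagonal] at hx
      obtain ⟨-, ha1, ha2⟩ := hx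
      have : r = (a.1.1 + a.1.2, a.2.1 + a.2.2) := by
        rw [ha1, ha2]
      rw [this]
  rw [hLHS, Finset.sum_congr rfl (fun pq (_ : pq ∈ V) => key pq)]
  apply Finset.sum_subset
  · exact Finset.filter_subset _ _
  · intro pq hpq hpq'
    rw [← key pq]
    simp only [hV, Finset.mem_filter] at hpq'
    have h1 : pq ∈ T ×ˢ T := hpq
    have : ¬(pq.1.1 + pq.2.1 ≤ D ∧ pq.1.2 + pq.2.2 ≤ D) := fun h => hpq' ⟨h1, h⟩
    have hgt : D < (pq.1.1 + pq.2.1) + (pq.1.2 + pq.2.2) := by omega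
    rw [coeff_pp_zero hP (by simpa using hgt), mul_zero]

lemma substFun_zero (P : Fin 2 → MvPowerSeries (Fin 2) k) : substFun P 0 = 0 := by
  ext d
  rw [substFun_def]
  simp

lemma substFun_pow (hP : ∀ i, constantCoeff (P i) = 0)
    (f : MvPowerSeries (Fin 2) k) (n : ℕ) :
    substFun P (f ^ n) = substFun P f ^ n := by
  induction n with
  | zero => simpa using substFun_one hP
  | succ n ih => rw [pow_succ, pow_succ, substFun_mul hP, ih]

lemma substFun_cc (P : Fin 2 → MvPowerSeries (Fin 2) k) (f : MvPowerSeries (Fin 2) k) :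
    constantCoeff (substFun P f) = constantCoeff f := by
  rw [← coeff_zero_eq_constantCoeff, substFun_def]
  have h0 : (0 : Fin 2 →₀ ℕ) 0 + (0 : Fin 2 →₀ ℕ) 1 = 0 := by simp
  rw [h0]
  rw [show range (0 + 1) ×ˢ range (0 + 1) = {((0 : ℕ), (0 : ℕ))} by rfl]
  rw [Finset.sum_singleton]
  have h1 : fe 0 0 = 0 := by simp [fe]
  simp [h1, pp]

lemma substFun_pp (hP : ∀ i, constantCoeff (P i) = 0)
    (Q : Fin 2 → MvPowerSeries (Fin 2) k) (e : ℕ × ℕ) :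
    substFun P (pp Q e) = pp (fun i => substFun P (Q i)) e := by
  rw [pp, substFun_mul hP, substFun_pow hP, substFun_pow hP, pp]

lemma substFun_comp {Q : Fin 2 → MvPowerSeries (Fin 2) k}
    (hP : ∀ i, constantCoeff (P i) = 0)
    (hQ : ∀ i, constantCoeff (Q i) = 0)
    (f : MvPowerSeries (Fin 2) k) :
    substFun P (substFun Q f) = substFun (fun i => substFun P (Q i)) f := by
  have hR : ∀ i, constantCoeff (substFun P (Q i)) = 0 := by
    intro i; rw [substFun_cc]; exact hQ i
  ext d
  set D := d 0 + d 1 with hDdef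
  rw [coeff_substFun hR f d (N := 2 * D) (by omega)]
  rw [substFun_def]
  have hterm : ∀ e : ℕ × ℕ,
      coeff (fe e.1 e.2) f * coeff d (pp (fun i => substFun P (Q i)) e) =
      ∑ p ∈ range (D + 1) ×ˢ range (D + 1),
        coeff (fe e.1 e.2) f * (coeff (fe p.1 p.2) (pp Q e) * coeff d (pp P p)) := by
    intro e
    rw [← substFun_pp hP, substFun_def, Finset.mul_sum]
  rw [Finset.sum_congr rfl (fun e _ => hterm e)]
  have hterm2 : ∀ p : ℕ × ℕ, p ∈ range (D + 1) ×ˢ range (D + 1) →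
      coeff (fe p.1 p.2) (substFun Q f) * coeff d (pp P p) =
      ∑ e ∈ range (2 * D + 1) ×ˢ range (2 * D + 1),
        coeff (fe e.1 e.2) f * (coeff (fe p.1 p.2) (pp Q e) * coeff d (pp P p)) := by
    intro p hp
    simp only [Finset.mem_product, Finset.mem_range] at hp
    have hb : (fe p.1 p.2) 0 + (fe p.1 p.2) 1 ≤ 2 * D := by
      rw [fe_apply_zero, fe_apply_one]; omega
    rw [coeff_substFun hQ f (fe p.1 p.2) hb, Finset.sum_mul]
    apply Finset.sum_congr rfl
    intro e _
    ring
  rw [Finset.sum_congr rfl hterm2]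
  rw [Finset.sum_comm]

lemma substFun_id (f : MvPowerSeries (Fin 2) k) :
    substFun (fun i => X i) f = f := by
  ext d
  rw [substFun_def, Finset.sum_eq_single (d 0, d 1)]
  · have h1 : pp (fun i => (X i : MvPowerSeries (Fin 2) k)) (d 0, d 1) =
        monomial d 1 := by
      rw [pp, X_pow_eq, X_pow_eq, monomial_mul_monomial, one_mul]
      rw [show Finsupp.single (0 : Fin 2) (d 0) + Finsupp.single (1 : Fin 2) (d 1) =
        fe (d 0) (d 1) from rfl, fe_eta]
    rw [h1, coeff_monomial_same, mul_one, fe_eta]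
  · intro q _ hq
    have h1 : pp (fun i => (X i : MvPowerSeries (Fin 2) k)) q = monomial (fe q.1 q.2) 1 := by
      rw [pp, X_pow_eq, X_pow_eq, monomial_mul_monomial, one_mul]
      rfl
    rw [h1, coeff_monomial]
    have : ¬(d = fe q.1 q.2) := by
      intro h
      apply hq
      have h0 := congrArg (fun e => e 0) h
      have h1' := congrArg (fun e => e 1) h
      simp only [fe_apply_zero, fe_apply_one] at h0 h1'
      exact Prod.ext h0.symm h1'.symm
    rw [if_neg this, mul_zero]
  · intro h
    exact absurd (by simp only [Finset.mem_product, Finset.mem_range]; omega) h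

section Unipotent

variable {P : Fin 2 → MvPowerSeries (Fin 2) k}

/-- unipotent hypothesis: `P i` agrees with `X i` in degrees `≤ 1` -/
def Unip (P : Fin 2 → MvPowerSeries (Fin 2) k) : Prop :=
  ∀ i, ∀ d : Fin 2 →₀ ℕ, d 0 + d 1 ≤ 1 → coeff d (P i) = coeff d (X i)

lemma Unip.cc (hU : Unip P) : ∀ i, constantCoeff (P i) = 0 := by
  intro i
  rw [← coeff_zero_eq_constantCoeff, hU i 0 (by simp), coeff_X, if_neg]
  intro h
  have := congrArg (fun e => e i) h
  simp [Finsupp.single_apply] at this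

lemma Unip.order_sub (hU : Unip P) (i : Fin 2) : (2 : ℕ∞) ≤ (P i - X i).order := by
  have := nat_le_order (f := P i - X i) (n := 2) ?_
  · exact_mod_cast this
  · intro d hd
    rw [degree_two] at hd
    rw [map_sub, hU i d (by omega), sub_self]

lemma order_Xpow_mul_Xpow (m n : ℕ) :
    ((m + n : ℕ) : ℕ∞) ≤ ((X 0 : MvPowerSeries (Fin 2) k) ^ m * X 1 ^ n).order := by
  have h0 : constantCoeff (X 0 : MvPowerSeries (Fin 2) k) = 0 := constantCoeff_X 0
  have h1 : constantCoeff (X 1 : MvPowerSeries (Fin 2) k) = 0 := constantCoeff_X 1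
  calc ((m + n : ℕ) : ℕ∞) = (m : ℕ∞) + (n : ℕ∞) := by push_cast; rfl
  _ ≤ ((X 0 : MvPowerSeries (Fin 2) k) ^ m).order + ((X 1 : MvPowerSeries (Fin 2) k) ^ n).order :=
      add_le_add (le_order_pow h0 m) (le_order_pow h1 n)
  _ ≤ _ := le_order_mul

lemma Unip.order_pp_sub (hU : Unip P) (m n : ℕ) :
    ((m + n + 1 : ℕ) : ℕ∞) ≤ (pp P (m, n) - X 0 ^ m * X 1 ^ n).order := by
  have hP := hU.cc
  induction m with
  | zero =>
    induction n with
    | zero => simp [pp]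
    | succ n ihn =>
      have hid : pp P (0, n + 1) - X 0 ^ 0 * X 1 ^ (n + 1) =
          P 1 * (pp P (0, n) - X 0 ^ 0 * X 1 ^ n) + (P 1 - X 1) * X 1 ^ n := by
        simp only [pp, pow_zero, one_mul, pow_succ]
        ring
      rw [hid]
      refine le_trans ?_ min_order_le_add
      rw [le_min_iff]
      constructor
      · have h1 : ((0 + (n + 1) + 1 : ℕ) : ℕ∞) = 1 + ((0 + n + 1 : ℕ) : ℕ∞) := by
          push_cast; ring
        rw [h1]
        exact le_trans (add_le_add (one_le_order (hP 1)) ihn) le_order_mul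
      · have h1 : ((0 + (n + 1) + 1 : ℕ) : ℕ∞) = 2 + ((n : ℕ) : ℕ∞) := by
          push_cast; ring
        rw [h1]
        exact le_trans (add_le_add (hU.order_sub 1)
          (le_order_pow (constantCoeff_X 1) n)) le_order_mul
  | succ m ihm =>
    have hid : pp P (m + 1, n) - X 0 ^ (m + 1) * X 1 ^ n =
        P 0 * (pp P (m, n) - X 0 ^ m * X 1 ^ n) + (P 0 - X 0) * (X 0 ^ m * X 1 ^ n) := by
      simp only [pp, pow_succ]
      ring
    rw [hid]
    refine le_trans ?_ min_order_le_add
    rw [le_min_iff]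
    constructor
    · have h1 : ((m + 1 + n + 1 : ℕ) : ℕ∞) = 1 + ((m + n + 1 : ℕ) : ℕ∞) := by
        push_cast; ring
      rw [h1]
      exact le_trans (add_le_add (one_le_order (hP 0)) ihm) le_order_mul
    · have h1 : ((m + 1 + n + 1 : ℕ) : ℕ∞) = 2 + ((m + n : ℕ) : ℕ∞) := by
        push_cast; ring
      rw [h1]
      exact le_trans (add_le_add (hU.order_sub 0) (order_Xpow_mul_Xpow m n)) le_order_mul

lemma Unip.coeff_pp_diag (hU : Unip P) {d : Fin 2 →₀ ℕ} {p : ℕ × ℕ}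
    (h : p.1 + p.2 = d 0 + d 1) :
    coeff d (pp P p) = if fe p.1 p.2 = d then 1 else 0 := by
  have hsplit : pp P p = (X 0 ^ p.1 * X 1 ^ p.2) + (pp P (p.1, p.2) - X 0 ^ p.1 * X 1 ^ p.2) := by
    ring_nf
  rw [hsplit, map_add]
  have h2 : coeff d (pp P (p.1, p.2) - X 0 ^ p.1 * X 1 ^ p.2) = 0 := by
    apply coeff_of_lt_order
    refine lt_of_lt_of_le ?_ (hU.order_pp_sub p.1 p.2)
    rw [degree_two, h]
    exact_mod_cast Nat.lt_succ_self _
  rw [h2, add_zero]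
  have h3 : (X 0 : MvPowerSeries (Fin 2) k) ^ p.1 * X 1 ^ p.2 = monomial (fe p.1 p.2) 1 := by
    rw [X_pow_eq, X_pow_eq, monomial_mul_monomial, one_mul]
    rfl
  rw [h3, coeff_monomial]
  by_cases hh : fe p.1 p.2 = d
  · rw [if_pos hh, if_pos hh.symm]
  · rw [if_neg hh, if_neg (fun hc => hh hc.symm)]

lemma Unip.substFun_injective (hU : Unip P) : Function.Injective (substFun P) := by
  have hP := hU.cc
  suffices h : ∀ f, substFun P f = 0 → f = 0 by
    intro f g hfg
    have : substFun P (f + (-1 : k) • g) = 0 := by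
      rw [substFun_add, substFun_smul, hfg]
      simp
    have h2 := h _ this
    have := congrArg (fun t => t + g) h2
    simpa [add_assoc] using this
  intro f hf
  have claim : ∀ n : ℕ, ∀ d : Fin 2 →₀ ℕ, d 0 + d 1 = n → coeff d f = 0 := by
    intro n
    induction n using Nat.strong_induction_on with
    | _ n ih =>
      intro d hd
      have h0 : coeff d (substFun P f) = 0 := by rw [hf]; simp
      rw [substFun_def, Finset.sum_eq_single (d 0, d 1)] at h0
      · rw [hU.coeff_pp_diag (by simp), fe_eta, if_pos rfl, mul_one] at h0
        exact h0
      · intro q hq hq'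
        simp only [Finset.mem_product, Finset.mem_range] at hq
        rcases lt_trichotomy (q.1 + q.2) n with hlt | heq | hgt
        · have : coeff (fe q.1 q.2) f = 0 := by
            apply ih _ hlt
            simp
          rw [this, zero_mul]
        · rw [hU.coeff_pp_diag (by omega)]
          have : ¬(fe q.1 q.2 = d) := by
            intro hc
            apply hq'
            have h0' := congrArg (fun e => e 0) hc
            have h1' := congrArg (fun e => e 1) hc
            simp only [fe_apply_zero, fe_apply_one] at h0' h1'
            exact Prod.ext (by omega) (by omega)
          rw [if_neg this, mul_zero]
        · rw [coeff_pp_zero hP (by omega), mul_zero]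
      · intro hmem
        exact absurd (by simp only [Finset.mem_product, Finset.mem_range]; omega) hmem
  ext d
  rw [claim (d 0 + d 1) d rfl]
  simp

/-- coefficients of the preimage under a unipotent substitution, by strong recursion
on total degree -/
noncomputable def invRec (P : Fin 2 → MvPowerSeries (Fin 2) k)
    (g : MvPowerSeries (Fin 2) k) : ℕ → ℕ × ℕ → k := fun n =>
  Nat.strongRecOn' (motive := fun _ : ℕ => ℕ × ℕ → k) (t := n) (fun n ih p =>
    coeff (fe p.1 p.2) g -
      ∑ q ∈ ((range n ×ˢ range n).filter (fun q : ℕ × ℕ => q.1 + q.2 < n)).attach,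
        ih (q.1.1 + q.1.2) (by
            have := (Finset.mem_filter.mp q.2).2
            omega) q.1 *
          coeff (fe p.1 p.2) (pp P q.1))

lemma invRec_eq (g : MvPowerSeries (Fin 2) k) (n : ℕ) (p : ℕ × ℕ) :
    invRec P g n p = coeff (fe p.1 p.2) g -
      ∑ q ∈ (range n ×ˢ range n).filter (fun q : ℕ × ℕ => q.1 + q.2 < n),
        invRec P g (q.1 + q.2) q * coeff (fe p.1 p.2) (pp P q) := by
  have hbeta := Nat.strongRecOn'_beta (motive := fun _ : ℕ => ℕ × ℕ → k) (t := n)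
    (ind := fun n ih p =>
      coeff (fe p.1 p.2) g -
        ∑ q ∈ ((range n ×ˢ range n).filter (fun q : ℕ × ℕ => q.1 + q.2 < n)).attach,
          ih (q.1.1 + q.1.2) (by
              have := (Finset.mem_filter.mp q.2).2
              omega) q.1 *
            coeff (fe p.1 p.2) (pp P q.1))
  have : invRec P g n p = _ := congrFun hbeta p
  rw [this]
  rw [← Finset.sum_attach ((range n ×ˢ range n).filter (fun q : ℕ × ℕ => q.1 + q.2 < n))
    (fun q => invRec P g (q.1 + q.2) q * coeff (fe p.1 p.2) (pp P q))]
  rfl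

/-- preimage under unipotent substitution -/
noncomputable def invF (P : Fin 2 → MvPowerSeries (Fin 2) k)
    (g : MvPowerSeries (Fin 2) k) : MvPowerSeries (Fin 2) k :=
  fun d => invRec P g (d 0 + d 1) (d 0, d 1)

lemma coeff_invF (g : MvPowerSeries (Fin 2) k) (q : ℕ × ℕ) :
    coeff (fe q.1 q.2) (invF P g) = invRec P g (q.1 + q.2) q := by
  show invRec P g ((fe q.1 q.2) 0 + (fe q.1 q.2) 1) ((fe q.1 q.2) 0, (fe q.1 q.2) 1) = _
  rw [fe_apply_zero, fe_apply_one]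

lemma Unip.substFun_surjective (hU : Unip P) : Function.Surjective (substFun P) := by
  have hP := hU.cc
  intro g
  refine ⟨invF P g, ?_⟩
  ext d
  set D := d 0 + d 1 with hD
  rw [substFun_def]
  rw [← Finset.sum_filter_add_sum_filter_not (range (D+1) ×ˢ range (D+1))
    (fun q : ℕ × ℕ => q.1 + q.2 < D)]
  have hS : (range (D+1) ×ˢ range (D+1)).filter (fun q : ℕ × ℕ => q.1 + q.2 < D) =
      (range D ×ˢ range D).filter (fun q : ℕ × ℕ => q.1 + q.2 < D) := by
    ext q
    simp only [Finset.mem_filter, Finset.mem_product, Finset.mem_range]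
    omega
  have hsecond : (∑ q ∈ (range (D+1) ×ˢ range (D+1)).filter
        (fun q : ℕ × ℕ => ¬(q.1 + q.2 < D)),
        coeff (fe q.1 q.2) (invF P g) * coeff d (pp P q)) =
      coeff (fe (d 0) (d 1)) (invF P g) := by
    rw [Finset.sum_eq_single (d 0, d 1)]
    · rw [hU.coeff_pp_diag (by simp), fe_eta, if_pos rfl, mul_one]
    · intro q hq hq'
      simp only [Finset.mem_filter, Finset.mem_product, Finset.mem_range, not_lt] at hq
      rcases eq_or_lt_of_le hq.2 with heq | hgt
      · rw [hU.coeff_pp_diag (by omega)]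
        have : ¬(fe q.1 q.2 = d) := by
          intro hc
          apply hq'
          have h0' := congrArg (fun e => e 0) hc
          have h1' := congrArg (fun e => e 1) hc
          simp only [fe_apply_zero, fe_apply_one] at h0' h1'
          exact Prod.ext (by omega) (by omega)
        rw [if_neg this, mul_zero]
      · rw [coeff_pp_zero hP (by omega), mul_zero]
    · intro hmem
      exact absurd (by
        simp only [Finset.mem_filter, Finset.mem_product, Finset.mem_range]
        omega) hmem
  rw [hS, hsecond]
  have hmain : coeff (fe (d 0) (d 1)) (invF P g) =
      coeff d g - ∑ q ∈ (range D ×ˢ range D).filter (fun q : ℕ × ℕ => q.1 + q.2 < D),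
        invRec P g (q.1 + q.2) q * coeff d (pp P q) := by
    rw [coeff_invF g (d 0, d 1)]
    have := invRec_eq (P := P) g D (d 0, d 1)
    simp only [fe_eta] at this ⊢
    rw [this]
  rw [hmain]
  have hcoe : ∀ q : ℕ × ℕ, coeff (fe q.1 q.2) (invF P g) * coeff d (pp P q) =
      invRec P g (q.1 + q.2) q * coeff d (pp P q) := by
    intro q
    rw [coeff_invF]
  rw [Finset.sum_congr rfl (fun q _ => hcoe q)]
  ring

lemma Unip.substFun_bijective (hU : Unip P) : Function.Bijective (substFun P) :=
  ⟨hU.substFun_injective, hU.substFun_surjective⟩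

end Unipotent

section Glue

variable {P Q : Fin 2 → MvPowerSeries (Fin 2) k}

lemma substFun_sub (f g : MvPowerSeries (Fin 2) k) :
    substFun P (f - g) = substFun P f - substFun P g := by
  have h : f - g = f + (-1 : k) • g := by
    rw [neg_smul, one_smul, sub_eq_add_neg]
  rw [h, substFun_add, substFun_smul, neg_smul, one_smul, ← sub_eq_add_neg]

lemma bij_of_inverse (hP : ∀ i, constantCoeff (P i) = 0)
    (hQ : ∀ i, constantCoeff (Q i) = 0)
    (h1 : ∀ i, substFun P (Q i) = X i) (h2 : ∀ i, substFun Q (P i) = X i) :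
    Function.Bijective (substFun P) := by
  rw [Function.bijective_iff_has_inverse]
  refine ⟨substFun Q, ?_, ?_⟩
  · intro f
    rw [substFun_comp hQ hP]
    have : (fun i => substFun Q (P i)) = fun i => (X i : MvPowerSeries (Fin 2) k) :=
      funext h2
    rw [this, substFun_id]
  · intro f
    rw [substFun_comp hP hQ]
    have : (fun i => substFun P (Q i)) = fun i => (X i : MvPowerSeries (Fin 2) k) :=
      funext h1
    rw [this, substFun_id]

lemma bij_of_comp_unip (hP : ∀ i, constantCoeff (P i) = 0)
    (hQ : ∀ i, constantCoeff (Q i) = 0)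
    (hQbij : Function.Bijective (substFun Q))
    (hU : Unip (fun i => substFun P (Q i))) :
    Function.Bijective (substFun P) := by
  have hcomp : substFun P ∘ substFun Q = substFun (fun i => substFun P (Q i)) :=
    funext (substFun_comp hP hQ)
  have hbij : Function.Bijective (substFun P ∘ substFun Q) := by
    rw [hcomp]; exact hU.substFun_bijective
  exact (Function.Bijective.of_comp_iff _ hQbij).mp hbij

/-- the substitution algebra homomorphism -/
noncomputable def substAlgHom (hP : ∀ i, constantCoeff (P i) = 0) :
    MvPowerSeries (Fin 2) k →ₐ[k] MvPowerSeries (Fin 2) k where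
  toFun := substFun P
  map_one' := substFun_one hP
  map_mul' := substFun_mul hP
  map_zero' := substFun_zero P
  map_add' := substFun_add
  commutes' := fun a => by
    have h : (algebraMap k (MvPowerSeries (Fin 2) k)) a = C a := by
      rw [MvPowerSeries.algebraMap_apply]
      simp
    rw [h]
    exact substFun_C hP a

@[simp] lemma substAlgHom_apply (hP : ∀ i, constantCoeff (P i) = 0)
    (f : MvPowerSeries (Fin 2) k) : substAlgHom hP f = substFun P f := rfl

/-- helper to verify the unipotent condition -/
lemma unip_of_sub (h : ∀ i, ∀ d : Fin 2 →₀ ℕ, d 0 + d 1 ≤ 1 →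
    coeff d (P i - X i) = 0) : Unip P := by
  intro i d hd
  have := h i d hd
  rw [map_sub, sub_eq_zero] at this
  exact this

lemma coeff_X_pow_ne {i : Fin 2} {j : ℕ} {d : Fin 2 →₀ ℕ} (h : d 0 + d 1 ≠ j) :
    coeff d ((X i : MvPowerSeries (Fin 2) k) ^ j) = 0 := by
  rw [X_pow_eq, coeff_monomial, if_neg]
  intro hc
  apply h
  subst hc
  fin_cases i <;> simp [Finsupp.single_apply]

end Glue

section Concrete

variable [CharZero k]

lemma substFun_lin {Q : Fin 2 → MvPowerSeries (Fin 2) k}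
    (hQ : ∀ i, constantCoeff (Q i) = 0) (a b : k) :
    substFun Q (C a * X 0 + C b * X 1) =
      C a * Q 0 + C b * Q 1 := by
  rw [substFun_add, substFun_mul hQ, substFun_mul hQ, substFun_C hQ, substFun_C hQ,
    substFun_X0 hQ, substFun_X1 hQ]

lemma lin_comb (a b c d e f' : k) :
    (C a : MvPowerSeries (Fin 2) k) * (C c * X 0 + C d * X 1) +
      C b * (C e * X 0 + C f' * X 1) =
    C (a * c + b * e) * X 0 + C (a * d + b * f') * X 1 := by
  simp only [map_add, map_mul]
  ring

/-- linear substitution family given by a 2×2 matrix -/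
noncomputable def linF (a b c d : k) : Fin 2 → MvPowerSeries (Fin 2) k :=
  ![C a * X 0 + C b * X 1, C c * X 0 + C d * X 1]

lemma linF_zero (a b c d : k) : linF a b c d 0 =
    C a * X 0 + C b * X 1 := rfl

lemma linF_one (a b c d : k) : linF a b c d 1 =
    C c * X 0 + C d * X 1 := rfl

lemma cc_linF (a b c d : k) : ∀ i, constantCoeff (linF a b c d i) = 0 := by
  intro i
  fin_cases i <;>
    simp [linF, constantCoeff_X]

lemma bij_linF {a b c d a' b' c' d' : k}
    (h1 : a' * a + b' * c = 1) (h2 : a' * b + b' * d = 0)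
    (h3 : c' * a + d' * c = 0) (h4 : c' * b + d' * d = 1)
    (h5 : a * a' + b * c' = 1) (h6 : a * b' + b * d' = 0)
    (h7 : c * a' + d * c' = 0) (h8 : c * b' + d * d' = 1) :
    Function.Bijective (substFun (linF a b c d)) := by
  apply bij_of_inverse (cc_linF a b c d) (cc_linF a' b' c' d')
  · intro i
    fin_cases i
    · show substFun (linF a b c d) (linF a' b' c' d' 0) = X 0
      rw [linF_zero, substFun_lin (cc_linF a b c d), linF_zero, linF_one, lin_comb,
        h1, h2]
      simp
    · show substFun (linF a b c d) (linF a' b' c' d' 1) = X 1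
      rw [linF_one, substFun_lin (cc_linF a b c d), linF_zero, linF_one, lin_comb,
        h3, h4]
      simp
  · intro i
    fin_cases i
    · show substFun (linF a' b' c' d') (linF a b c d 0) = X 0
      rw [linF_zero, substFun_lin (cc_linF a' b' c' d'), linF_zero, linF_one, lin_comb,
        h5, h6]
      simp
    · show substFun (linF a' b' c' d') (linF a b c d 1) = X 1
      rw [linF_one, substFun_lin (cc_linF a' b' c' d'), linF_zero, linF_one, lin_comb,
        h7, h8]
      simp

lemma bij_of_factor {P R L : Fin 2 → MvPowerSeries (Fin 2) k}
    (hR : ∀ i, constantCoeff (R i) = 0)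
    (hL : ∀ i, constantCoeff (L i) = 0)
    (hRL : ∀ i, substFun R (L i) = P i)
    (hRbij : Function.Bijective (substFun R))
    (hLbij : Function.Bijective (substFun L)) :
    Function.Bijective (substFun P) := by
  have heq : substFun P = substFun R ∘ substFun L := by
    funext f
    rw [Function.comp_apply, substFun_comp hR hL]
    have hfam : (fun i => substFun R (L i)) = P := funext hRL
    rw [hfam]
  rw [heq]
  exact hRbij.comp hLbij

end Concrete

section Nodal

variable [CharZero k] (lam ρ : k)

/-- the series `2ρ·x + x²` (image of `x` under the coordinate change) -/
noncomputable def Gg : MvPowerSeries (Fin 2) k :=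
  2 * C ρ * X 0 + X 0 ^ 2

/-- coordinate change `x ↦ 2ρx + x²`, `y ↦ y` -/
noncomputable def PTh : Fin 2 → MvPowerSeries (Fin 2) k := ![Gg ρ, X 1]

/-- the polynomial substitution `u ↦ y + G·(x+ρ)`, `v ↦ y − G·(x+ρ)` -/
noncomputable def Pψ : Fin 2 → MvPowerSeries (Fin 2) k :=
  ![X 1 + Gg ρ * (X 0 + C ρ), X 1 - Gg ρ * (X 0 + C ρ)]

lemma cc_Gg : constantCoeff (Gg ρ) = 0 := by
  simp [Gg, constantCoeff_X]

lemma cc_PTh : ∀ i, constantCoeff (PTh ρ i) = 0 := by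
  intro i
  fin_cases i <;> simp [PTh, Gg, constantCoeff_X]

lemma cc_Pψ : ∀ i, constantCoeff (Pψ ρ i) = 0 := by
  intro i
  fin_cases i <;> simp [Pψ, Gg, constantCoeff_X]

variable {lam ρ}

section withhyp
variable (hlam : lam ≠ 0) (hρ : ρ ^ 2 = lam)

include hlam hρ

lemma rho_ne : ρ ≠ 0 := by
  intro h
  apply hlam
  rw [← hρ, h]
  ring

lemma two_rho_ne : 2 * ρ ≠ 0 :=
  mul_ne_zero (by norm_num) (rho_ne hlam hρ)

omit hρ in
lemma two_lam_ne : 2 * lam ≠ 0 :=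
  mul_ne_zero (by norm_num) hlam

omit hρ in
lemma four_lam_ne : 4 * lam ≠ 0 :=
  mul_ne_zero (by norm_num) hlam

lemma bij_PTh : Function.Bijective (substFun (PTh ρ)) := by
  have hρne := rho_ne hlam hρ
  have h2ρ := two_rho_ne hlam hρ
  -- unipotent part
  set R : Fin 2 → MvPowerSeries (Fin 2) k :=
    ![X 0 + C (1/(2*ρ)) * X 0 ^ 2, X 1] with hR
  have ccR : ∀ i, constantCoeff (R i) = 0 := by
    intro i
    fin_cases i <;> simp [hR, constantCoeff_X]
  have hUR : Unip R := by
    apply unip_of_sub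
    intro i d hd
    fin_cases i
    · show coeff d (X 0 + C (1/(2*ρ)) * X 0 ^ 2 - X 0) = 0
      rw [show (X 0 : MvPowerSeries (Fin 2) k) + C (1/(2*ρ)) * X 0 ^ 2 - X 0 =
        C (1/(2*ρ)) * X 0 ^ 2 by ring]
      rw [coeff_C_mul, coeff_X_pow_ne (by omega), mul_zero]
    · show coeff d ((X 1 : MvPowerSeries (Fin 2) k) - X 1) = 0
      simp
  refine bij_of_factor ccR (cc_linF (2*ρ) 0 0 1) ?_ hUR.substFun_bijective ?_
  · intro i
    fin_cases i
    · show substFun R (linF (2*ρ) 0 0 1 0) = PTh ρ 0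
      rw [linF_zero, substFun_lin ccR]
      show C (2*ρ) * (X 0 + C (1/(2*ρ)) * X 0 ^ 2) +
        C 0 * X 1 = Gg ρ
      rw [map_zero, zero_mul, add_zero, mul_add, ← mul_assoc, ← map_mul,
        mul_one_div_cancel h2ρ, map_one, one_mul, Gg]
      rw [show C (2*ρ) = 2 * C ρ by rw [map_mul, map_ofNat]]
    · show substFun R (linF (2*ρ) 0 0 1 1) = PTh ρ 1
      rw [linF_one, substFun_lin ccR]
      show C 0 * (X 0 + C (1/(2*ρ)) * X 0 ^ 2) +
        C 1 * X 1 = X 1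
      rw [map_zero, map_one, zero_mul, one_mul, zero_add]
  · exact bij_linF (a' := 1/(2*ρ)) (b' := 0) (c' := 0) (d' := 1)
      (by field_simp; ring) (by ring) (by ring) (by ring)
      (by field_simp; ring) (by ring) (by ring) (by ring)

lemma Gg_mul_id : Gg ρ * (X 0 + C ρ) =
    C (2*lam) * X 0 + C (3*ρ) * X 0 ^ 2 + X 0 ^ 3 := by
  rw [show C (2*lam) = 2 * C ρ * C ρ by
    rw [← hρ, pow_two, ← mul_assoc, map_mul, map_mul, map_ofNat]]
  rw [show C (3*ρ) = 3 * C ρ by rw [map_mul, map_ofNat]]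
  rw [Gg]
  ring

lemma bij_Pψ : Function.Bijective (substFun (Pψ ρ)) := by
  have h2lam := two_lam_ne hlam
  set R : Fin 2 → MvPowerSeries (Fin 2) k :=
    ![C (1/(2*lam)) * (Gg ρ * (X 0 + C ρ)), X 1] with hR
  have ccR : ∀ i, constantCoeff (R i) = 0 := by
    intro i
    fin_cases i <;> simp [hR, Gg, constantCoeff_X]
  have hCinv : (C (1/(2*lam)) : MvPowerSeries (Fin 2) k) * C (2*lam) = 1 := by
    rw [← map_mul, one_div_mul_cancel h2lam, map_one]
  have hUR : Unip R := by
    apply unip_of_sub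
    intro i d hd
    fin_cases i
    · show coeff d (C (1/(2*lam)) * (Gg ρ * (X 0 + C ρ)) - X 0) = 0
      rw [Gg_mul_id hlam hρ]
      rw [show (C (1/(2*lam)) : MvPowerSeries (Fin 2) k) *
            (C (2*lam) * X 0 + C (3*ρ) * X 0 ^ 2 + X 0 ^ 3) - X 0 =
          C (1/(2*lam)) * (C (3*ρ) * X 0 ^ 2) +
            C (1/(2*lam)) * X 0 ^ 3 +
            (C (1/(2*lam)) * C (2*lam) - 1) * X 0 by ring]
      rw [hCinv, sub_self, zero_mul, add_zero, map_add, coeff_C_mul, coeff_C_mul,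
        coeff_C_mul, coeff_X_pow_ne (by omega), coeff_X_pow_ne (by omega)]
      ring
    · show coeff d ((X 1 : MvPowerSeries (Fin 2) k) - X 1) = 0
      simp
  refine bij_of_factor ccR (cc_linF (2*lam) 1 (-(2*lam)) 1) ?_ hUR.substFun_bijective ?_
  · intro i
    fin_cases i
    · show substFun R (linF (2*lam) 1 (-(2*lam)) 1 0) = Pψ ρ 0
      rw [linF_zero, substFun_lin ccR]
      show C (2*lam) * (C (1/(2*lam)) * (Gg ρ * (X 0 + C ρ))) +
        C 1 * X 1 = X 1 + Gg ρ * (X 0 + C ρ)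
      rw [← mul_assoc, mul_comm (C (2*lam)), hCinv, map_one]
      ring
    · show substFun R (linF (2*lam) 1 (-(2*lam)) 1 1) = Pψ ρ 1
      rw [linF_one, substFun_lin ccR]
      show C (-(2*lam)) *
          (C (1/(2*lam)) * (Gg ρ * (X 0 + C ρ))) +
        C 1 * X 1 = X 1 - Gg ρ * (X 0 + C ρ)
      rw [show C (-(2*lam)) = -C (2*lam) by rw [map_neg]]
      rw [neg_mul, ← mul_assoc, mul_comm (C (2*lam)), hCinv, map_one]
      ring
  · exact bij_linF (a' := 1/(4*lam)) (b' := -(1/(4*lam))) (c' := 1/2) (d' := 1/2)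
      (by field_simp; try ring) (by field_simp; try ring) (by field_simp; try ring)
      (by field_simp; try ring) (by field_simp; try ring) (by field_simp; try ring)
      (by field_simp; try ring) (by field_simp; try ring)

/-- the nodal cubic equation -/
noncomputable def fpoly : MvPowerSeries (Fin 2) k :=
  X 1 ^ 2 - X 0 ^ 3 - C lam * X 0 ^ 2

lemma key_identity :
    substFun (PTh ρ) (fpoly (lam := lam)) = substFun (Pψ ρ) (X 0 * X 1) := by
  have hTh := cc_PTh (k := k) ρ
  have hψ := cc_Pψ (k := k) ρ
  rw [fpoly, substFun_sub, substFun_sub, substFun_pow hTh, substFun_pow hTh,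
    substFun_mul hTh, substFun_pow hTh, substFun_C hTh, substFun_X0 hTh, substFun_X1 hTh,
    substFun_mul hψ, substFun_X0 hψ, substFun_X1 hψ]
  show (X 1 : MvPowerSeries (Fin 2) k) ^ 2 - (PTh ρ 0) ^ 3 -
      C lam * (PTh ρ 0) ^ 2 = Pψ ρ 0 * Pψ ρ 1
  have h0 : PTh ρ 0 = Gg ρ := rfl
  have h1 : Pψ ρ 0 = X 1 + Gg ρ * (X 0 + C ρ) := rfl
  have h2 : Pψ ρ 1 = X 1 - Gg ρ * (X 0 + C ρ) := rfl
  rw [h0, h1, h2]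
  rw [show C lam = C ρ * C ρ by rw [← map_mul, ← pow_two, hρ]]
  rw [Gg]
  ring

end withhyp
end Nodal

section Final

lemma smul_mk {R : Type*} [CommRing R] {I : Ideal R} (w v : R) :
    w • Ideal.Quotient.mk I v = Ideal.Quotient.mk I (w * v) := rfl

lemma ideal_le_of_linearEquiv {R : Type*} [CommRing R] {I J : Ideal R}
    (e : (R ⧸ I) ≃ₗ[R] (R ⧸ J)) : I ≤ J := by
  obtain ⟨z, hz⟩ := Ideal.Quotient.mk_surjective (e (Ideal.Quotient.mk I 1))
  obtain ⟨wbar, hw⟩ := e.surjective (Ideal.Quotient.mk J 1)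
  obtain ⟨w, rfl⟩ := Ideal.Quotient.mk_surjective wbar
  have hmk : ∀ v : R, Ideal.Quotient.mk I v = v • Ideal.Quotient.mk I 1 := by
    intro v
    rw [smul_mk, mul_one]
  have happ : ∀ v : R, e (Ideal.Quotient.mk I v) = Ideal.Quotient.mk J (v * z) := by
    intro v
    rw [hmk v, map_smul, ← hz, smul_mk]
  have hwz : w * z - 1 ∈ J := by
    rw [← Ideal.Quotient.eq_zero_iff_mem, map_sub, map_one, sub_eq_zero]
    rw [← happ w, hw, map_one]
  intro i hi
  have h1 : i * z ∈ J := by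
    rw [← Ideal.Quotient.eq_zero_iff_mem, ← happ i]
    have : Ideal.Quotient.mk I i = 0 := Ideal.Quotient.eq_zero_iff_mem.2 hi
    rw [this, map_zero]
  have h2 : i = w * (i * z) - i * (w * z - 1) := by ring
  rw [h2]
  exact Ideal.sub_mem _ (Ideal.mul_mem_left _ _ h1) (Ideal.mul_mem_left _ _ hwz)

lemma ideal_eq_of_linearEquiv {R : Type*} [CommRing R] {I J : Ideal R}
    (e : (R ⧸ I) ≃ₗ[R] (R ⧸ J)) : I = J :=
  le_antisymm (ideal_le_of_linearEquiv e) (ideal_le_of_linearEquiv e.symm)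

variable {k : Type*} [Field k]

lemma coeff_mul_high {g h : MvPowerSeries (Fin 2) k} (hh : (2 : ℕ∞) ≤ h.order)
    {d : Fin 2 →₀ ℕ} (hd : d 0 + d 1 ≤ 1) : coeff d (g * h) = 0 := by
  apply coeff_of_lt_order
  rw [degree_two]
  calc ((d 0 + d 1 : ℕ) : ℕ∞) < 2 := by exact_mod_cast Nat.lt_of_le_of_lt hd (by norm_num)
  _ ≤ h.order := hh
  _ ≤ g.order + h.order := le_add_self
  _ ≤ (g * h).order := le_order_mul

lemma order_X_pow_ge (i : Fin 2) (j : ℕ) :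
    ((j : ℕ) : ℕ∞) ≤ ((X i : MvPowerSeries (Fin 2) k) ^ j).order := by
  apply le_order_pow (constantCoeff_X i) j

lemma order_fpoly_ge {lam : k} : (2 : ℕ∞) ≤ (fpoly (lam := lam)).order := by
  have := nat_le_order (f := fpoly (lam := lam)) (n := 2) ?_
  · exact_mod_cast this
  · intro d hd
    rw [degree_two] at hd
    rw [fpoly, map_sub, map_sub, coeff_C_mul,
      coeff_X_pow_ne (by omega), coeff_X_pow_ne (by omega), coeff_X_pow_ne (by omega)]
    ring

lemma coeff_mul_X_low (B : MvPowerSeries (Fin 2) k) :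
    coeff (fe 1 0) (B * X 1) = 0 ∧
    coeff (fe 0 1) (B * X 1) = constantCoeff B ∧
    coeff (fe 1 0) (B * X 0) = constantCoeff B ∧
    coeff (fe 0 1) (B * X 0) = 0 := by
  have e1 : ¬(Finsupp.single (1 : Fin 2) 1 ≤ fe 1 0) := by
    rw [Finsupp.le_iff]
    push_neg
    exact ⟨1, by simp [Finsupp.single_apply], by simp⟩
  have e2 : Finsupp.single (1 : Fin 2) 1 ≤ fe 0 1 := by
    rw [Finsupp.le_iff]
    intro i _
    fin_cases i <;> simp [Finsupp.single_apply]
  have e3 : Finsupp.single (0 : Fin 2) 1 ≤ fe 1 0 := by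
    rw [Finsupp.le_iff]
    intro i _
    fin_cases i <;> simp [Finsupp.single_apply]
  have e4 : ¬(Finsupp.single (0 : Fin 2) 1 ≤ fe 0 1) := by
    rw [Finsupp.le_iff]
    push_neg
    exact ⟨0, by simp [Finsupp.single_apply], by simp [Finsupp.single_apply]⟩
  have s2 : fe 0 1 - Finsupp.single (1 : Fin 2) 1 = 0 := by
    ext i
    fin_cases i <;> simp [fe, Finsupp.single_apply]
  have s3 : fe 1 0 - Finsupp.single (0 : Fin 2) 1 = 0 := by
    ext i
    fin_cases i <;> simp [fe, Finsupp.single_apply]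
  refine ⟨?_, ?_, ?_, ?_⟩
  · rw [X, coeff_mul_monomial, if_neg e1]
  · rw [X, coeff_mul_monomial, if_pos e2, s2, mul_one, coeff_zero_eq_constantCoeff]
  · rw [X, coeff_mul_monomial, if_pos e3, s3, mul_one, coeff_zero_eq_constantCoeff]
  · rw [X, coeff_mul_monomial, if_neg e4]

lemma coeff_X0_low :
    coeff (fe 1 0) (X 0 : MvPowerSeries (Fin 2) k) = 1 ∧
    coeff (fe 0 1) (X 0 : MvPowerSeries (Fin 2) k) = 0 := by
  constructor
  · rw [coeff_X, if_pos]
    ext i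
    fin_cases i <;> simp [fe, Finsupp.single_apply]
  · rw [coeff_X, if_neg]
    intro h
    have := congrArg (fun e => e (0 : Fin 2)) h
    simp [fe, Finsupp.single_apply] at this

end Final

end NodalAux

open NodalAux

set_option maxHeartbeats 2000000

/-- In the completion `R̂` of the nodal cubic `R = k[x,y]/(y² − x³ − λx²)`
(`λ ≠ 0`) at its singular point there are elements `u₊, u₋` with `u₊u₋ = 0`
identifying `R̂` with `k[[u₊,u₋]]/(u₊u₋)`, such that the ideal `(x², y + ρx)`
becomes `(u₊, u₋²)` and the ideal `(x², y − ρx)` becomes `(u₋, u₊²)`, where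
`ρ² = λ`.  In particular the `R̂`-modules `R̂/(x², y + ρx)` and
`R̂/(x², y − ρx)` are not isomorphic. -/
theorem nodal_torsion_modules (k : Type*) [Field k] [IsAlgClosed k]
    [CharZero k] (lam ρ : k) (hlam : lam ≠ 0) (hρ : ρ ^ 2 = lam) :
    let Rh := NodalCompletion k lam
    let x : Rh := Ideal.Quotient.mk _ (MvPowerSeries.X 0)
    let y : Rh := Ideal.Quotient.mk _ (MvPowerSeries.X 1)
    let Iplus : Ideal Rh := Ideal.span {x ^ 2, y + algebraMap k Rh ρ * x}
    let Iminus : Ideal Rh := Ideal.span {x ^ 2, y - algebraMap k Rh ρ * x}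
    ∃ (uplus uminus : Rh) (φ : NodeModel k ≃ₐ[k] Rh),
      φ (Ideal.Quotient.mk _ (MvPowerSeries.X 0)) = uplus ∧
      φ (Ideal.Quotient.mk _ (MvPowerSeries.X 1)) = uminus ∧
      uplus * uminus = 0 ∧
      Iplus = Ideal.span {uplus, uminus ^ 2} ∧
      Iminus = Ideal.span {uminus, uplus ^ 2} ∧
      ¬ Nonempty ((Rh ⧸ Iplus) ≃ₗ[Rh] (Rh ⧸ Iminus)) := by
  intro Rh x y Iplus Iminus
  classical
  have hρne : ρ ≠ 0 := rho_ne hlam hρ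
  have h2ρne : 2 * ρ ≠ 0 := two_rho_ne hlam hρ
  -- the two algebra automorphisms of k[[x,y]]
  set Th : MvPowerSeries (Fin 2) k ≃ₐ[k] MvPowerSeries (Fin 2) k :=
    AlgEquiv.ofBijective (substAlgHom (cc_PTh ρ)) (bij_PTh hlam hρ) with hThdef
  set Psi : MvPowerSeries (Fin 2) k ≃ₐ[k] MvPowerSeries (Fin 2) k :=
    AlgEquiv.ofBijective (substAlgHom (cc_Pψ ρ)) (bij_Pψ hlam hρ) with hPsidef
  have Th_app : ∀ g, Th g = substFun (PTh ρ) g := fun g => rfl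
  have Psi_app : ∀ g, Psi g = substFun (Pψ ρ) g := fun g => rfl
  set Ξ : MvPowerSeries (Fin 2) k ≃ₐ[k] MvPowerSeries (Fin 2) k := Psi.trans Th.symm with hXidef
  have Xi_app : ∀ g, Ξ g = Th.symm (Psi g) := fun g => rfl
  -- basic images under Th
  have ThX0 : Th (X 0) = Gg ρ := by
    rw [Th_app, substFun_X0 (cc_PTh ρ)]; rfl
  have ThX1 : Th (X 1) = X 1 := by
    rw [Th_app, substFun_X1 (cc_PTh ρ)]; rfl
  have ThC : ∀ a : k, Th (C a) = C a := fun a => by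
    rw [Th_app, substFun_C (cc_PTh ρ)]
  have symmC : ∀ a : k, Th.symm (C a) = C a := fun a => by
    conv_lhs => rw [← ThC a]
    rw [AlgEquiv.symm_apply_apply]
  have symmX1 : Th.symm (X 1) = X 1 := by
    conv_lhs => rw [← ThX1]
    rw [AlgEquiv.symm_apply_apply]
  set z : MvPowerSeries (Fin 2) k := Th.symm (X 0) with hzdef
  have symmG : Th.symm (Gg ρ) = X 0 := by
    rw [← ThX0, AlgEquiv.symm_apply_apply]
  have hz : 2 * C ρ * z + z ^ 2 = X 0 := by
    have h2 : Th.symm (Gg ρ) = 2 * C ρ * z + z ^ 2 := by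
      rw [show Gg ρ = 2 * C ρ * X 0 + X 0 ^ 2 from rfl]
      rw [map_add, map_mul, map_mul, map_pow, map_ofNat, symmC]
    rw [symmG] at h2
    exact h2.symm
  set sM : MvPowerSeries (Fin 2) k := z + C ρ with hsMdef
  have hClam : (C lam : MvPowerSeries (Fin 2) k) = C ρ * C ρ := by
    rw [← map_mul, ← pow_two, hρ]
  have hs2 : sM ^ 2 = X 0 + C lam := by
    rw [hsMdef, hClam]
    linear_combination hz
  -- constant coefficients
  have ccTh : ∀ w, constantCoeff (Th w) = constantCoeff w := fun w => by
    rw [Th_app]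
    exact substFun_cc _ w
  have ccz : constantCoeff z = 0 := by
    have h := ccTh (Th.symm (X 0))
    rw [AlgEquiv.apply_symm_apply, constantCoeff_X] at h
    exact h.symm
  have hzfac : z * (2 * C ρ + z) = X 0 := by linear_combination hz
  have hwunit : IsUnit (2 * C ρ + z) := by
    rw [MvPowerSeries.isUnit_iff_constantCoeff]
    have hcc : constantCoeff (2 * C ρ + z) = 2 * ρ := by
      rw [map_add, map_mul, map_ofNat, constantCoeff_C, ccz, add_zero]
    rw [hcc]
    exact isUnit_iff_ne_zero.2 h2ρne
  obtain ⟨wu, hwu⟩ := hwunit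
  set t : MvPowerSeries (Fin 2) k := ((wu⁻¹ : _) : MvPowerSeries (Fin 2) k) with htdef
  have hwt : (2 * C ρ + z) * t = 1 := by
    rw [← hwu, htdef]
    exact_mod_cast wu.mul_inv
  have ht : z = X 0 * t := by
    calc z = z * ((2 * C ρ + z) * t) := by rw [hwt, mul_one]
    _ = (z * (2 * C ρ + z)) * t := by ring
    _ = X 0 * t := by rw [hzfac]
  have ccsM : constantCoeff sM = ρ := by
    rw [hsMdef, map_add, constantCoeff_C, ccz, zero_add]
  have hsunit : IsUnit sM := by
    rw [MvPowerSeries.isUnit_iff_constantCoeff, ccsM]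
    exact isUnit_iff_ne_zero.2 hρne
  -- images under Ξ
  have XiX0 : Ξ (X 0) = X 1 + X 0 * sM := by
    rw [Xi_app]
    have h1 : Psi (X 0) = X 1 + Gg ρ * (X 0 + C ρ) := by
      rw [Psi_app, substFun_X0 (cc_Pψ ρ)]; rfl
    rw [h1, map_add, map_mul, map_add, symmX1, symmG, symmC, hsMdef, hzdef]
  have XiX1 : Ξ (X 1) = X 1 - X 0 * sM := by
    rw [Xi_app]
    have h1 : Psi (X 1) = X 1 - Gg ρ * (X 0 + C ρ) := by
      rw [Psi_app, substFun_X1 (cc_Pψ ρ)]; rfl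
    rw [h1, map_sub, map_mul, map_add, symmX1, symmG, symmC, hsMdef, hzdef]
  have Xi01 : Ξ (X 0 * X 1) = fpoly (lam := lam) := by
    rw [Xi_app]
    have h1 : Psi (X 0 * X 1) = substFun (Pψ ρ) (X 0 * X 1) := rfl
    rw [h1, ← key_identity hlam hρ]
    have h2 : substFun (PTh ρ) (fpoly (lam := lam)) = Th (fpoly (lam := lam)) := rfl
    rw [h2, AlgEquiv.symm_apply_apply]
  -- the quotient equivalence
  have hmap : (Ideal.span {(X 1 : MvPowerSeries (Fin 2) k) ^ 2 - X 0 ^ 3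
      - C lam * X 0 ^ 2}) =
      Ideal.map (Ξ : MvPowerSeries (Fin 2) k →+* MvPowerSeries (Fin 2) k)
        (Ideal.span {(X 0 : MvPowerSeries (Fin 2) k) * X 1}) := by
    rw [Ideal.map_span, Set.image_singleton]
    congr 1
    have : (Ξ : MvPowerSeries (Fin 2) k →+* MvPowerSeries (Fin 2) k) (X 0 * X 1) =
        Ξ (X 0 * X 1) := rfl
    rw [this, Xi01]
    rfl
  -- pass to the quotient ring
  set J : Ideal (MvPowerSeries (Fin 2) k) :=
    Ideal.span {(X 1 : MvPowerSeries (Fin 2) k) ^ 2 - X 0 ^ 3 - C lam * X 0 ^ 2}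
    with hJdef
  have hx : x = Ideal.Quotient.mk J (X 0) := rfl
  have hy : y = Ideal.Quotient.mk J (X 1) := rfl
  have hQf : Ideal.Quotient.mk J ((X 1 : MvPowerSeries (Fin 2) k) ^ 2 - X 0 ^ 3
      - C lam * X 0 ^ 2) = 0 := by
    rw [Ideal.Quotient.eq_zero_iff_mem]
    exact Ideal.subset_span rfl
  set rq : Rh := algebraMap k Rh ρ with hrqdef
  have halg : ∀ a : k, algebraMap k Rh a = Ideal.Quotient.mk J (C a) := by
    intro a
    rw [← Ideal.Quotient.mk_algebraMap]
    congr 1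
    try rw [MvPowerSeries.algebraMap_apply]
    try simp
  have hrq : rq = Ideal.Quotient.mk J (C ρ) := by rw [hrqdef, halg]
  set lamq : Rh := algebraMap k Rh lam with hlamqdef
  have hlamq : lamq = Ideal.Quotient.mk J (C lam) := by rw [hlamqdef, halg]
  set up : Rh := Ideal.Quotient.mk J (X 1 + X 0 * sM) with hupdef
  set um : Rh := Ideal.Quotient.mk J (X 1 - X 0 * sM) with humdef
  set sq : Rh := Ideal.Quotient.mk J sM with hsqdef
  set zq : Rh := Ideal.Quotient.mk J z with hzqdef
  set tq : Rh := Ideal.Quotient.mk J t with htqdef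
  have hupx : up = y + x * sq := by
    rw [hupdef, hx, hy, hsqdef]
    simp only [← map_mul, ← map_add]
  have humx : um = y - x * sq := by
    rw [humdef, hx, hy, hsqdef]
    simp only [← map_mul, ← map_sub]
  have base1 : sq ^ 2 = x + lamq := by
    rw [hsqdef, hx, hlamq, ← map_pow, ← map_add, hs2]
  have base2 : sq = zq + rq := by
    rw [hsqdef, hzqdef, hrq, ← map_add, hsMdef]
  have base3 : zq = x * tq := by
    rw [hzqdef, hx, htqdef, ← map_mul, ht]
  have base4 : y ^ 2 = x ^ 3 + lamq * x ^ 2 := by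
    have h0 : y ^ 2 - x ^ 3 - lamq * x ^ 2 = 0 := by
      rw [hx, hy, hlamq]
      simp only [← map_pow, ← map_mul, ← map_sub]
      exact hQf
    linear_combination h0
  have R1 : up = (y + rq * x) + x ^ 2 * tq := by
    rw [hupx]
    linear_combination x * base2 + x * base3
  have R2 : um = (y - rq * x) - x ^ 2 * tq := by
    rw [humx]
    linear_combination (-x) * base2 + (-x) * base3
  have R3 : up = (y - rq * x) + x * (sq + rq) := by
    rw [hupx]; ring
  have R4 : um = (y + rq * x) - x * (sq + rq) := by
    rw [humx]; ring
  have R5 : up ^ 2 + um ^ 2 = 4 * x ^ 2 * sq ^ 2 := by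
    rw [hupx, humx]
    linear_combination 2 * base4 + (-2 * x ^ 2) * base1
  -- inverses
  obtain ⟨su, hsu⟩ := hsunit.map (Ideal.Quotient.mk J)
  set sqi : Rh := ((su⁻¹ : _) : Rh) with hsqidef
  have hsqi : sq * sqi = 1 := by
    rw [hsqdef, ← hsu, hsqidef]
    exact_mod_cast su.mul_inv
  set c4 : Rh := algebraMap k Rh (1/4) with hc4def
  have h4 : (4 : Rh) * c4 = 1 := by
    rw [hc4def, show (4 : Rh) = algebraMap k Rh 4 from (map_ofNat _ 4).symm, ← map_mul]
    norm_num
  set w : Rh := c4 * sqi * sqi with hwdef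
  have hIp : Iplus = Ideal.span {x ^ 2, y + rq * x} := by rw [hrqdef]
  have hIm : Iminus = Ideal.span {x ^ 2, y - rq * x} := by rw [hrqdef]
  -- x² in both spans
  have hx2key : ∀ A B : Rh, A ^ 2 + B ^ 2 = 4 * x ^ 2 * sq ^ 2 →
      x ^ 2 ∈ Ideal.span {A, B ^ 2} := by
    intro A B hAB
    rw [Ideal.mem_span_pair]
    refine ⟨A * w, w, ?_⟩
    calc A * w * A + w * B ^ 2 = (A ^ 2 + B ^ 2) * w := by ring
    _ = 4 * x ^ 2 * sq ^ 2 * (c4 * sqi * sqi) := by rw [hAB, hwdef]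
    _ = x ^ 2 * (((4 : Rh) * c4) * ((sq * sqi) * (sq * sqi))) := by ring
    _ = x ^ 2 := by rw [h4, hsqi]; ring
  have m1p : x ^ 2 ∈ Ideal.span {up, um ^ 2} := hx2key up um R5
  have m1m : x ^ 2 ∈ Ideal.span {um, up ^ 2} := hx2key um up (by linear_combination R5)
  refine ⟨Ideal.Quotient.mk _ (X 1 + X 0 * sM), Ideal.Quotient.mk _ (X 1 - X 0 * sM),
    Ideal.quotientEquivAlg _ _ Ξ hmap, ?_, ?_, ?_, ?_, ?_, ?_⟩
  · show Ideal.Quotient.mk _ (Ξ (X 0)) = _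
    rw [XiX0]
  · show Ideal.Quotient.mk _ (Ξ (X 1)) = _
    rw [XiX1]
  · show up * um = 0
    have hprod : (X 1 + X 0 * sM) * (X 1 - X 0 * sM) =
        (X 1 : MvPowerSeries (Fin 2) k) ^ 2 - X 0 ^ 3 - C lam * X 0 ^ 2 := by
      linear_combination (-(X 0 ^ 2 : MvPowerSeries (Fin 2) k)) * hs2
    rw [hupdef, humdef, ← map_mul, hprod, hQf]
  · show Iplus = Ideal.span {up, um ^ 2}
    rw [hIp]
    apply le_antisymm
    · rw [Ideal.span_le]
      rintro u hu
      simp only [Set.mem_insert_iff, Set.mem_singleton_iff] at hu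
      rcases hu with rfl | rfl
      · exact m1p
      · have hrepr : y + rq * x = up - x ^ 2 * tq := by linear_combination -R1
        rw [hrepr]
        exact Ideal.sub_mem _ (Ideal.subset_span (by simp))
          (Ideal.mul_mem_right _ _ m1p)
    · rw [Ideal.span_le]
      rintro u hu
      simp only [Set.mem_insert_iff, Set.mem_singleton_iff] at hu
      rcases hu with rfl | rfl
      · rw [R1]
        exact Ideal.add_mem _ (Ideal.subset_span (by simp))
          (Ideal.mul_mem_right _ _ (Ideal.subset_span (by simp)))
      · have hrepr : um ^ 2 = (y + rq * x) * ((y + rq * x) - 2 * (x * (sq + rq)))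
            + x ^ 2 * (sq + rq) ^ 2 := by
          rw [R4]; ring
        rw [hrepr]
        exact Ideal.add_mem _
          (Ideal.mul_mem_right _ _ (Ideal.subset_span (by simp)))
          (Ideal.mul_mem_right _ _ (Ideal.subset_span (by simp)))
  · show Iminus = Ideal.span {um, up ^ 2}
    rw [hIm]
    apply le_antisymm
    · rw [Ideal.span_le]
      rintro u hu
      simp only [Set.mem_insert_iff, Set.mem_singleton_iff] at hu
      rcases hu with rfl | rfl
      · exact m1m
      · have hrepr : y - rq * x = um + x ^ 2 * tq := by linear_combination -R2
        rw [hrepr]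
        exact Ideal.add_mem _ (Ideal.subset_span (by simp))
          (Ideal.mul_mem_right _ _ m1m)
    · rw [Ideal.span_le]
      rintro u hu
      simp only [Set.mem_insert_iff, Set.mem_singleton_iff] at hu
      rcases hu with rfl | rfl
      · rw [R2]
        exact Ideal.sub_mem _ (Ideal.subset_span (by simp))
          (Ideal.mul_mem_right _ _ (Ideal.subset_span (by simp)))
      · have hrepr : up ^ 2 = (y - rq * x) * ((y - rq * x) + 2 * (x * (sq + rq)))
            + x ^ 2 * (sq + rq) ^ 2 := by
          rw [R3]; ring
        rw [hrepr]
        exact Ideal.add_mem _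
          (Ideal.mul_mem_right _ _ (Ideal.subset_span (by simp)))
          (Ideal.mul_mem_right _ _ (Ideal.subset_span (by simp)))
  · rintro ⟨e⟩
    have hIeq : Iplus = Iminus := ideal_eq_of_linearEquiv e
    have hyp1 : y + rq * x ∈ Iplus := by
      rw [hIp]
      exact Ideal.subset_span (by simp)
    have hym1 : y - rq * x ∈ Iplus := by
      rw [hIeq, hIm]
      exact Ideal.subset_span (by simp)
    have h2rx : (2 * rq) * x ∈ Iplus := by
      have hsub := Ideal.sub_mem _ hyp1 hym1
      rwa [show (y + rq * x) - (y - rq * x) = (2 * rq) * x by ring] at hsub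
    have hinv : algebraMap k Rh (1/(2*ρ)) * (2 * rq) = 1 := by
      rw [hrqdef, show (2 : Rh) = algebraMap k Rh 2 from (map_ofNat _ 2).symm,
        ← map_mul, ← map_mul]
      rw [show (1/(2*ρ)) * (2 * ρ) = 1 from one_div_mul_cancel h2ρne, map_one]
    have hxmem : x ∈ Iplus := by
      have hx1 : x = algebraMap k Rh (1/(2*ρ)) * ((2 * rq) * x) := by
        rw [← mul_assoc, hinv, one_mul]
      rw [hx1]
      exact Ideal.mul_mem_left _ _ h2rx
    rw [hIp, Ideal.mem_span_pair] at hxmem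
    obtain ⟨a, b, hab⟩ := hxmem
    obtain ⟨A, rfl⟩ := Ideal.Quotient.mk_surjective a
    obtain ⟨B, rfl⟩ := Ideal.Quotient.mk_surjective b
    rw [hx, hy, hrq] at hab
    simp only [← map_pow, ← map_mul, ← map_add] at hab
    have hM : Ideal.Quotient.mk J
        (A * X 0 ^ 2 + B * (X 1 + C ρ * X 0) - X 0) = 0 := by
      rw [map_sub, sub_eq_zero]
      simpa only [map_add, map_mul] using hab
    rw [Ideal.Quotient.eq_zero_iff_mem, hJdef] at hM
    obtain ⟨Cf, hCf⟩ := Ideal.mem_span_singleton'.1 hM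
    rw [show A * X 0 ^ 2 + B * (X 1 + C ρ * X 0) - X 0
        = A * X 0 ^ 2 + B * X 1 + (B * C ρ) * X 0 - X 0 from by ring] at hCf
    have hford : (2 : ℕ∞) ≤ ((X 1 : MvPowerSeries (Fin 2) k) ^ 2 - X 0 ^ 3
        - C lam * X 0 ^ 2).order := order_fpoly_ge
    have hordX2 : (2 : ℕ∞) ≤ ((X 0 : MvPowerSeries (Fin 2) k) ^ 2).order := by
      exact_mod_cast order_X_pow_ge (k := k) 0 2
    obtain ⟨cB1, cB2, -, -⟩ := coeff_mul_X_low (k := k) B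
    obtain ⟨-, -, cBr3, cBr4⟩ := coeff_mul_X_low (k := k) (B * C ρ)
    obtain ⟨cX1, cX2⟩ := coeff_X0_low (k := k)
    have hfe10 : (fe 1 0 : Fin 2 →₀ ℕ) 0 + (fe 1 0 : Fin 2 →₀ ℕ) 1 ≤ 1 := by simp
    have hfe01 : (fe 0 1 : Fin 2 →₀ ℕ) 0 + (fe 0 1 : Fin 2 →₀ ℕ) 1 ≤ 1 := by simp
    have hc1 := congrArg (coeff (fe 1 0)) hCf
    have hc2 := congrArg (coeff (fe 0 1)) hCf
    rw [coeff_mul_high hford hfe10, map_sub, map_add, map_add,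
      coeff_mul_high hordX2 hfe10, cB1, cBr3, cX1] at hc1
    rw [coeff_mul_high hford hfe01, map_sub, map_add, map_add,
      coeff_mul_high hordX2 hfe01, cB2, cBr4, cX2] at hc2
    have hccBr : constantCoeff (B * C ρ)
        = constantCoeff B * ρ := by
      rw [map_mul, constantCoeff_C]
    rw [hccBr] at hc1
    have hB0 : constantCoeff B = 0 := by linear_combination -hc2
    rw [hB0] at hc1
    norm_num at hc1
end

section
/- Let L = (∂² − z⁴/4)² + 2∂ − z² and M = 2∂⁶ − (3/2)z⁴∂⁴ + 6(1−2z³)∂³ + z²((3/8)z⁶ − 45)∂² + z(3z⁶ − (3/2)z³ − 54)∂ + (−(1/32)z¹² + (37/4)z⁶ − 3z³ − 14) in ℂ[z][∂]. Then the third-order operator R = ∂³ − (1/2)z²∂² + z(−(1/4)z³ + 1)∂ + ((1/8)z⁶ − (3/2)z³ + 1) right-divides both L and M, i.e. there exist Q₁, Q₂ ∈ ℂ[z][∂] with L = Q₁·R and M = Q₂·R. -/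
/-- Example: the third order operator
`R = ∂³ − (1/2)z²∂² + z(−(1/4)z³ + 1)∂ + ((1/8)z⁶ − (3/2)z³ + 1)`
right-divides both
`L = (∂² − z⁴/4)² + 2∂ − z²` and
`M = 2∂⁶ − (3/2)z⁴∂⁴ + 6(1−2z³)∂³ + z²((3/8)z⁶ − 45)∂² + z(3z⁶ − (3/2)z³ − 54)∂
     + (−(1/32)z¹² + (37/4)z⁶ − 3z³ − 14)`.
This is stated in any ℂ-algebra with elements `z`, `∂` satisfying the Weyl
relation `∂z − z∂ = 1`; by the universal property of the Weyl algebra this is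
equivalent to the statement in ℂ[z][∂]. -/
theorem right_division_example (A : Type*) [Ring A] [Algebra ℂ A]
    (z d : A) (h : d * z - z * d = 1) :
    let c : ℂ → A := algebraMap ℂ A
    let L : A := (d ^ 2 - c (1/4) * z ^ 4) ^ 2 + 2 * d - z ^ 2
    let M : A := 2 * d ^ 6 - c (3/2) * z ^ 4 * d ^ 4
      + 6 * (1 - 2 * z ^ 3) * d ^ 3
      + z ^ 2 * (c (3/8) * z ^ 6 - 45) * d ^ 2
      + z * (3 * z ^ 6 - c (3/2) * z ^ 3 - 54) * d
      + (- c (1/32) * z ^ 12 + c (37/4) * z ^ 6 - 3 * z ^ 3 - 14)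
    let R : A := d ^ 3 - c (1/2) * z ^ 2 * d ^ 2
      + z * (- c (1/4) * z ^ 3 + 1) * d
      + (c (1/8) * z ^ 6 - c (3/2) * z ^ 3 + 1)
    ∃ Q₁ Q₂ : A, L = Q₁ * R ∧ M = Q₂ * R := by
  intro c L M R
  have hz : d * z = z * d + 1 := sub_eq_iff_eq_add'.mp h
  have hz' : ∀ x : A, d * (z * x) = z * (d * x) + x := by
    intro x
    rw [← mul_assoc, hz, add_mul, one_mul, mul_assoc]
  have h2 : (2 : A) = c 2 := (map_ofNat _ 2).symm
  have h3 : (3 : A) = c 3 := (map_ofNat _ 3).symm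
  have h4 : (4 : A) = c 4 := (map_ofNat _ 4).symm
  have h6 : (6 : A) = c 6 := (map_ofNat _ 6).symm
  have h14 : (14 : A) = c 14 := (map_ofNat _ 14).symm
  have h45 : (45 : A) = c 45 := (map_ofNat _ 45).symm
  have h54 : (54 : A) = c 54 := (map_ofNat _ 54).symm
  refine ⟨d + c (1/2) * z ^ 2,
    2 * d ^ 3 + z ^ 2 * d ^ 2 + (- c (1/2) * z ^ 4 + 4 * z) * d
      + (- c (1/4) * z ^ 6 + 4), ?_, ?_⟩ <;>
  · show _ = _
    simp only [L, M, R, c, h2, h3, h4, h6, h14, h45, h54,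
      Algebra.algebraMap_eq_smul_one, pow_succ, pow_zero, one_mul, mul_one,
      mul_add, add_mul, mul_sub, sub_mul, neg_mul, mul_neg,
      smul_mul_assoc, mul_smul_comm, smul_smul, mul_assoc, hz, hz',
      smul_add, smul_sub, smul_neg]
    module
end
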